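/- arXiv:2605.16868 — 3 statements merged into one kernel-verified Lean document; each statement's English description precedes it below -/
import Mathlib

section
/- Let T > 0, X ∈ D_T(L1), and let F be a reflection kernel with bounded parameters (γ, k). Let Y ∈ D_T^↑(L1) be feasible, i.e., Z_u(t) := X_u(t) + Y_u(t) − ∫₀¹ F(u,v) Y_v(t) dv ≥ 0 for all u ∈ [0,1] and t ∈ [0,T]. Then Y is the unique fixed point of π_{X,F} in D_T^↑(L1) if and only if the following complementarity property holds: for every u ∈ [0,1], the Lebesgue–Stieltjes measure on [0,T] induced by the nondecreasing right-continuous function t ↦ Y_u(t), with the convention Y_u(0−) = 0 (so the measure has an atom of mass Y_u(0) at 0), assigns measure zero to the set {t ∈ [0,T] : Z_u(t) > 0}. -/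
open MeasureTheory Set Filter
open scoped ENNReal NNReal

noncomputable section

/-- Operator norm of a kernel: `‖F‖_op = sup_{v ∈ [0,1]} ∫₀¹ |F(u,v)| du`. -/
def kernelOpNorm (F : ℝ → ℝ → ℝ) : ℝ≥0∞ :=
  ⨆ v ∈ Icc (0:ℝ) 1, ∫⁻ u in Icc (0:ℝ) 1, ENNReal.ofReal |F u v|

/-- Composition of kernels. -/
def kernelComp (F G : ℝ → ℝ → ℝ) : ℝ → ℝ → ℝ :=
  fun u v => ∫ w in Icc (0:ℝ) 1, F u w * G w v

/-- `kernelIter F (n-1)` is the `n`-fold composition `F^(n)`; so `kernelIter F 0 = F^(1) = F`. -/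
def kernelIter (F : ℝ → ℝ → ℝ) : ℕ → ℝ → ℝ → ℝ
  | 0 => F
  | n + 1 => kernelComp F (kernelIter F n)

/-- Spatial action of a kernel on `f : [0,1] × [0,T] → ℝ`. -/
def kernelApply (F f : ℝ → ℝ → ℝ) : ℝ → ℝ → ℝ :=
  fun u t => ∫ v in Icc (0:ℝ) 1, F u v * f v t

/-- `sup_{0 ≤ t ≤ T} |f_u(t)|`, valued in `ℝ≥0∞`. -/
def pathSup (T : ℝ) (f : ℝ → ℝ → ℝ) (u : ℝ) : ℝ≥0∞ :=
  ⨆ t ∈ Icc (0:ℝ) T, ENNReal.ofReal |f u t|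

/-- `‖f‖_{T,1} = ∫₀¹ sup_{0 ≤ t ≤ T} |f_u(t)| du`, valued in `ℝ≥0∞`. -/
def TNorm (T : ℝ) (f : ℝ → ℝ → ℝ) : ℝ≥0∞ :=
  ∫⁻ u in Icc (0:ℝ) 1, pathSup T f u

/-- `f ∈ D_T(L1)`. -/
structure MemDT (T : ℝ) (f : ℝ → ℝ → ℝ) : Prop where
  rightCont : ∀ u ∈ Icc (0:ℝ) 1, ∀ t ∈ Ico (0:ℝ) T, ContinuousWithinAt (f u) (Ici t) t
  leftLim : ∀ u ∈ Icc (0:ℝ) 1, ∀ t ∈ Ioc (0:ℝ) T,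
    ∃ L : ℝ, Tendsto (f u) (nhdsWithin t (Iio t)) (nhds L)
  meas : ∀ t ∈ Icc (0:ℝ) T, Measurable fun u => f u t
  finite : TNorm T f ≠ ⊤

/-- `f ∈ D_T^↑(L1)`. -/
structure MemDTup (T : ℝ) (f : ℝ → ℝ → ℝ) : Prop where
  memDT : MemDT T f
  nonneg_zero : ∀ u ∈ Icc (0:ℝ) 1, 0 ≤ f u 0
  mono : ∀ u ∈ Icc (0:ℝ) 1, MonotoneOn (f u) (Icc (0:ℝ) T)

/-- `F` is a reflection kernel with bounded parameters `(γ, k)`. -/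
structure IsReflKernel (F : ℝ → ℝ → ℝ) (γ : ℝ) (k : ℕ) : Prop where
  meas : Measurable (Function.uncurry F)
  nonneg : ∀ u ∈ Icc (0:ℝ) 1, ∀ v ∈ Icc (0:ℝ) 1, 0 ≤ F u v
  opNorm_le_one : kernelOpNorm F ≤ 1
  gamma_mem : γ ∈ Set.Ioo (0:ℝ) 1
  k_pos : 1 ≤ k
  iter_le : kernelOpNorm (kernelIter F (k - 1)) ≤ ENNReal.ofReal γ

/-- The map `π_{X,F}`: `π_{X,F}(W)_u(t) = sup_{0 ≤ s ≤ t} max(−X_u(s) + (F W)_u(s), 0)`. -/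
def piMap (X F W : ℝ → ℝ → ℝ) : ℝ → ℝ → ℝ :=
  fun u t => ⨆ s : Icc (0:ℝ) t, max (-(X u s.1) + kernelApply F W u s.1) 0

end

noncomputable section

/-- Extension of `g : [0,T] → ℝ` to `ℝ`, equal to `0` on `(-∞,0)` and constant `g T` on `[T,∞)`
(so the induced Stieltjes measure has an atom of mass `g 0` at `0`). -/
def lsExtend (T : ℝ) (g : ℝ → ℝ) : ℝ → ℝ :=
  fun t => if t < 0 then 0 else g (min t T)

/-- Complementarity: for every `u ∈ [0,1]`, the Lebesgue–Stieltjes measure induced by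
`t ↦ Y_u(t)` assigns measure zero to `{t ∈ [0,T] : Z_u(t) > 0}`. -/
def Complementary (T : ℝ) (Y Z : ℝ → ℝ → ℝ) : Prop :=
  ∀ u ∈ Icc (0:ℝ) 1, ∀ S : StieltjesFunction ℝ,
    (∀ t : ℝ, S t = lsExtend T (Y u) t) →
    S.measure {t : ℝ | t ∈ Icc (0:ℝ) T ∧ 0 < Z u t} = 0

/-- `(Y, Z)` solves the infinite-dimensional Skorokhod problem for `(X, F)`. -/
def SolvesSkorokhod (T : ℝ) (X F Y Z : ℝ → ℝ → ℝ) : Prop :=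
  MemDTup T Y ∧ MemDT T Z ∧
  (∀ u ∈ Icc (0:ℝ) 1, ∀ t ∈ Icc (0:ℝ) T,
    Z u t = X u t + Y u t - kernelApply F Y u t) ∧
  (∀ u ∈ Icc (0:ℝ) 1, ∀ t ∈ Icc (0:ℝ) T, 0 ≤ Z u t) ∧
  (∀ u ∈ Icc (0:ℝ) 1, Y u 0 = 0) ∧
  Complementary T Y Z

end

open Function

section SecAB

lemma ofReal_abs_iSup_sub_iSup {ι : Type*} [Nonempty ι] (a b : ι → ℝ) :
    ENNReal.ofReal |(⨆ i, a i) - ⨆ i, b i| ≤ ⨆ i, ENNReal.ofReal |a i - b i| := by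
  by_cases hR : (⨆ i, ENNReal.ofReal |a i - b i|) = ⊤
  · simp [hR]
  set R := ⨆ i, ENNReal.ofReal |a i - b i| with hRdef
  have hbound : ∀ i, |a i - b i| ≤ R.toReal := by
    intro i
    have h1 : ENNReal.ofReal |a i - b i| ≤ R := le_iSup (fun i => ENNReal.ofReal |a i - b i|) i
    have h2 := ENNReal.toReal_mono hR h1
    rwa [ENNReal.toReal_ofReal (abs_nonneg _)] at h2
  by_cases ha : BddAbove (Set.range a) <;> by_cases hb : BddAbove (Set.range b)
  · have h1 : (⨆ i, a i) - (⨆ i, b i) ≤ R.toReal := by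
      rw [sub_le_iff_le_add]
      refine ciSup_le fun i => ?_
      have := (abs_le.1 (hbound i)).2
      have hbi : b i ≤ ⨆ j, b j := le_ciSup hb i
      linarith
    have h2 : (⨆ i, b i) - (⨆ i, a i) ≤ R.toReal := by
      rw [sub_le_iff_le_add]
      refine ciSup_le fun i => ?_
      have := (abs_le.1 (hbound i)).1
      have hai : a i ≤ ⨆ j, a j := le_ciSup ha i
      linarith
    have h3 : |(⨆ i, a i) - ⨆ i, b i| ≤ R.toReal := abs_sub_le_iff.2 ⟨h1, h2⟩
    calc ENNReal.ofReal |(⨆ i, a i) - ⨆ i, b i| ≤ ENNReal.ofReal R.toReal :=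
          ENNReal.ofReal_le_ofReal h3
      _ ≤ R := ENNReal.ofReal_toReal_le
  · exfalso; apply hb
    obtain ⟨M, hM⟩ := ha
    refine ⟨M + R.toReal, ?_⟩
    rintro x ⟨i, rfl⟩
    have h1 : a i ≤ M := hM ⟨i, rfl⟩
    have := (abs_le.1 (hbound i)).1
    linarith
  · exfalso; apply ha
    obtain ⟨M, hM⟩ := hb
    refine ⟨M + R.toReal, ?_⟩
    rintro x ⟨i, rfl⟩
    have h1 : b i ≤ M := hM ⟨i, rfl⟩
    have := (abs_le.1 (hbound i)).2
    linarith
  · simp [Real.iSup_of_not_bddAbove ha, Real.iSup_of_not_bddAbove hb]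

lemma ofReal_abs_integral_sub_le {α : Type*} [MeasurableSpace α] (μ : Measure α) (f g : α → ℝ)
    (hf : AEStronglyMeasurable f μ) (hg : AEStronglyMeasurable g μ) :
    ENNReal.ofReal |∫ x, f x ∂μ - ∫ x, g x ∂μ| ≤ ∫⁻ x, ENNReal.ofReal |f x - g x| ∂μ := by
  have key : ∀ h : α → ℝ, ENNReal.ofReal |∫ x, h x ∂μ| ≤ ∫⁻ x, ENNReal.ofReal |h x| ∂μ := by
    intro h
    calc ENNReal.ofReal |∫ x, h x ∂μ| = ‖∫ x, h x ∂μ‖ₑ := (Real.enorm_eq_ofReal_abs _).symm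
      _ ≤ ∫⁻ x, ‖h x‖ₑ ∂μ := enorm_integral_le_lintegral_enorm h
      _ = ∫⁻ x, ENNReal.ofReal |h x| ∂μ := by simp [Real.enorm_eq_ofReal_abs]
  have top_case : ∀ (f g : α → ℝ), AEStronglyMeasurable f μ → AEStronglyMeasurable g μ →
      Integrable f μ → ¬ Integrable g μ →
      ∫⁻ x, ENNReal.ofReal |f x - g x| ∂μ = ⊤ := by
    intro f g hf hg hfi hgi
    by_contra hfin
    have hsub : Integrable (fun x => f x - g x) μ := by
      refine ⟨hf.sub hg, ?_⟩
      rw [hasFiniteIntegral_iff_norm]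
      simpa [abs_nonneg, ENNReal.ofReal] using
        (lt_top_iff_ne_top.2 hfin : (∫⁻ x, ENNReal.ofReal |f x - g x| ∂μ) < ⊤)
    have : Integrable (fun x => f x - (f x - g x)) μ := hfi.sub hsub
    simp only [sub_sub_cancel] at this
    exact hgi this
  by_cases hfi : Integrable f μ <;> by_cases hgi : Integrable g μ
  · rw [← integral_sub hfi hgi]; exact key _
  · rw [top_case f g hf hg hfi hgi]; exact le_top
  · have := top_case g f hg hf hgi hfi
    rw [show (∫⁻ x, ENNReal.ofReal |f x - g x| ∂μ) = ∫⁻ x, ENNReal.ofReal |g x - f x| ∂μ by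
      simp [abs_sub_comm]]
    rw [this]; exact le_top
  · rw [integral_undef hfi, integral_undef hgi]; simp

end SecAB

section OneD

variable {T : ℝ} {y z : ℝ → ℝ} {S : StieltjesFunction ℝ}

lemma aux_lsExtend_eq (hS : ∀ t, S t = lsExtend T y t) {t : ℝ} (ht : t ∈ Icc 0 T) :
    S t = y t := by
  rw [hS, lsExtend, if_neg (not_lt.2 ht.1), min_eq_left ht.2]

lemma aux_S_nonneg (hT : 0 < T) (hmono : MonotoneOn y (Icc 0 T))
    (hynn : ∀ t ∈ Icc (0:ℝ) T, 0 ≤ y t)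
    (hS : ∀ t, S t = lsExtend T y t) (t : ℝ) : 0 ≤ S t := by
  rw [hS, lsExtend]
  split
  · exact le_refl 0
  · next h =>
    push_neg at h
    exact hynn _ ⟨le_min h hT.le, min_le_right _ _⟩

lemma aux_leftLim_nonneg (hT : 0 < T) (hmono : MonotoneOn y (Icc 0 T))
    (hynn : ∀ t ∈ Icc (0:ℝ) T, 0 ≤ y t)
    (hS : ∀ t, S t = lsExtend T y t) (t : ℝ) : 0 ≤ leftLim S t :=
  (aux_S_nonneg hT hmono hynn hS (t - 1)).trans (S.mono.le_leftLim (by linarith))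

lemma aux_leftLim_zero (hS : ∀ t, S t = lsExtend T y t) : leftLim S 0 = 0 := by
  rw [S.mono.leftLim_eq_sSup]
  have himg : (⇑S) '' Iio 0 = {0} := by
    ext x
    constructor
    · rintro ⟨t, ht, rfl⟩
      simp only [mem_singleton_iff]
      rw [hS, lsExtend, if_pos (mem_Iio.1 ht)]
    · rintro rfl
      exact ⟨-1, by norm_num, by rw [hS, lsExtend, if_pos (by norm_num)]⟩
  rw [himg, csSup_singleton]

lemma aux_measure_Icc (hS : ∀ t, S t = lsExtend T y t) {t : ℝ} (ht : t ∈ Icc 0 T) :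
    S.measure (Icc 0 t) = ENNReal.ofReal (y t) := by
  rw [S.measure_Icc, aux_leftLim_zero hS, aux_lsExtend_eq hS ht, sub_zero]

/-- Forward 1-D lemma: the fixed-point identity implies complementarity. -/
lemma oneD_forward (hT : 0 < T)
    (hmono : MonotoneOn y (Icc 0 T))
    (hznn : ∀ t ∈ Icc (0:ℝ) T, 0 ≤ z t)
    (hfp : ∀ t ∈ Icc (0:ℝ) T, y t = ⨆ s : Icc (0:ℝ) t, max (y s.1 - z s.1) 0)
    (hliminf : ∀ t ∈ Ico (0:ℝ) T, 0 < z t →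
      ∃ δ > 0, ∀ s ∈ Ioo t (t + δ), s ≤ T → z t / 2 < z s)
    (hS : ∀ t, S t = lsExtend T y t) :
    S.measure {t | t ∈ Icc (0:ℝ) T ∧ 0 < z t} = 0 := by
  classical
  -- nonnegativity of y
  have ynn : ∀ t ∈ Icc (0:ℝ) T, 0 ≤ y t := by
    intro t ht
    rw [hfp t ht]
    exact Real.iSup_nonneg fun s => le_max_right _ _
  have hterm_le : ∀ t ∈ Icc (0:ℝ) T, ∀ s : Icc (0:ℝ) t, max (y s.1 - z s.1) 0 ≤ y t := by
    intro t ht s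
    have hs1 : s.1 ∈ Icc (0:ℝ) T := ⟨s.2.1, s.2.2.trans ht.2⟩
    refine max_le ?_ (ynn t ht)
    calc y s.1 - z s.1 ≤ y s.1 := sub_le_self _ (hznn _ hs1)
      _ ≤ y t := hmono hs1 ht s.2.2
  -- key1
  have key1 : ∀ t ∈ Icc (0:ℝ) T, 0 < z t → y t ≤ leftLim S t := by
    intro t ht hzt
    rcases (ynn t ht).eq_or_lt with h0 | hpos
    · rw [← h0]; exact aux_leftLim_nonneg hT hmono ynn hS t
    · have hterm : max (y t - z t) 0 < y t := max_lt (by linarith) hpos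
      have hsup : y t ≤ max (leftLim S t) (max (y t - z t) 0) := by
        conv_lhs => rw [hfp t ht]
        haveI : Nonempty (Icc (0:ℝ) t) := ⟨⟨0, le_refl 0, ht.1⟩⟩
        apply ciSup_le
        intro s
        rcases s.2.2.lt_or_eq with hlt | heq
        · have hs1 : s.1 ∈ Icc (0:ℝ) T := ⟨s.2.1, s.2.2.trans ht.2⟩
          have h1 : max (y s.1 - z s.1) 0 ≤ y s.1 :=
            max_le (sub_le_self _ (hznn _ hs1)) (ynn _ hs1)
          have h2 : y s.1 ≤ leftLim S t := by
            rw [← aux_lsExtend_eq hS hs1]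
            exact S.mono.le_leftLim hlt
          exact (h1.trans h2).trans (le_max_left _ _)
        · rw [heq]
          exact le_max_right _ _
      rcases le_max_iff.1 hsup with h | h
      · exact h
      · linarith
  -- atoms
  have key2 : ∀ t ∈ Icc (0:ℝ) T, 0 < z t → S.measure {t} = 0 := by
    intro t ht hzt
    rw [S.measure_singleton]
    refine ENNReal.ofReal_eq_zero.2 ?_
    have := key1 t ht hzt
    rw [aux_lsExtend_eq hS ht]
    linarith
  -- intervals
  have key3 : ∀ t ∈ Icc (0:ℝ) T, t < T → 0 < z t →
      ∃ t', t < t' ∧ S.measure (Ico t t') = 0 := by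
    intro t ht htT hzt
    obtain ⟨δ, hδ, hbound⟩ := hliminf t ⟨ht.1, htT⟩ hzt
    set t' := min (t + δ) T with ht'def
    have htt' : t < t' := lt_min (by linarith) htT
    have ht'T : t' ≤ T := min_le_right _ _
    have const : ∀ r ∈ Ico t t', y r = y t := by
      intro r hr
      have hrT : r ∈ Icc (0:ℝ) T := ⟨ht.1.trans hr.1, hr.2.le.trans ht'T⟩
      refine le_antisymm ?_ (hmono ht hrT hr.1)
      by_contra hcon
      push_neg at hcon
      set ε := z t / 2 with hεdef
      have hεpos : 0 < ε := half_pos hzt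
      have hsup : y r ≤ max (y t) (max (y r - ε) 0) := by
        conv_lhs => rw [hfp r hrT]
        haveI : Nonempty (Icc (0:ℝ) r) := ⟨⟨0, le_refl 0, hrT.1⟩⟩
        apply ciSup_le
        intro s
        rcases le_or_gt s.1 t with hst | hst
        · have hs1 : s.1 ∈ Icc (0:ℝ) T := ⟨s.2.1, s.2.2.trans hrT.2⟩
          have h1 : max (y s.1 - z s.1) 0 ≤ y s.1 :=
            max_le (sub_le_self _ (hznn _ hs1)) (ynn _ hs1)
          exact (h1.trans (hmono hs1 ht hst)).trans (le_max_left _ _)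
        · have hs1 : s.1 ∈ Icc (0:ℝ) T := ⟨s.2.1, s.2.2.trans hrT.2⟩
          have hzs : ε < z s.1 := by
            refine hbound s.1 ⟨hst, lt_of_le_of_lt s.2.2 (hr.2.trans_le (min_le_left _ _))⟩
              hs1.2
          have hys : y s.1 ≤ y r := hmono hs1 hrT s.2.2
          have : max (y s.1 - z s.1) 0 ≤ max (y r - ε) 0 :=
            max_le_max (by linarith) le_rfl
          exact this.trans (le_max_right _ _)
      rcases le_max_iff.1 hsup with h | h
      · exact absurd h (not_le.2 hcon)
      rcases le_max_iff.1 h with h2 | h2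
      · linarith
      · have := ynn t ht; linarith
    refine ⟨t', htt', ?_⟩
    rw [S.measure_Ico]
    refine ENNReal.ofReal_eq_zero.2 ?_
    have h1 : leftLim S t' ≤ y t := by
      rw [S.mono.leftLim_eq_sSup]
      refine csSup_le ⟨S t, mem_image_of_mem _ htt'⟩ ?_
      rintro b ⟨x, hx, rfl⟩
      rcases lt_or_ge x 0 with hx0 | hx0
      · rw [hS x, lsExtend, if_pos hx0]; exact ynn t ht
      rcases le_or_gt x t with hxt | hxt
      · rw [aux_lsExtend_eq hS ⟨hx0, hxt.trans ht.2⟩]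
        exact hmono ⟨hx0, hxt.trans ht.2⟩ ht hxt
      · rw [aux_lsExtend_eq hS ⟨hx0, (le_of_lt hx).trans ht'T⟩,
          const x ⟨hxt.le, hx⟩]
    have h2 : y t ≤ leftLim S t := key1 t ht hzt
    linarith
  -- covering argument
  set E := {t | t ∈ Icc (0:ℝ) T ∧ 0 < z t} with hE
  set E' := E ∩ Iio T with hE'
  have hchoice : ∀ t : ℝ, t ∈ E' → ∃ t', t < t' ∧ S.measure (Ico t t') = 0 :=
    fun t ht => key3 t ht.1.1 ht.2 ht.1.2
  set g : ℝ → ℝ := fun t => if h : t ∈ E' then Classical.choose (hchoice t h) else t + 1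
    with hg
  have hgt : ∀ t ∈ E', t < g t ∧ S.measure (Ico t (g t)) = 0 := by
    intro t ht
    simp only [hg, dif_pos ht]
    exact Classical.choose_spec (hchoice t ht)
  set U := ⋃ t : ↥E', Ioo t.1 (g t.1) with hUdef
  obtain ⟨tc, htc_count, htc_eq⟩ :=
    TopologicalSpace.isOpen_iUnion_countable (fun t : ↥E' => Ioo t.1 (g t.1))
      (fun _ => isOpen_Ioo)
  have hUnull : S.measure U = 0 := by
    rw [hUdef, ← htc_eq]
    refine (measure_biUnion_null_iff htc_count).2 ?_
    intro t _
    exact measure_mono_null Ioo_subset_Ico_self (hgt t.1 t.2).2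
  set L := E' \ U with hLdef
  have hLs : ∀ t : ↥L, ∃ q : ℚ, t.1 < (q:ℝ) ∧ (q:ℝ) < g t.1 :=
    fun t => exists_rat_btwn (hgt t.1 t.2.1).1
  choose q hq1 hq2 using hLs
  have hLcount : L.Countable := by
    rw [← Set.countable_coe_iff]
    refine Countable.of_equiv _ (Equiv.ofInjective q ?_).symm
    intro t₁ t₂ heq
    by_contra hne
    have hne' : t₁.1 ≠ t₂.1 := fun h => hne (Subtype.ext h)
    rcases hne'.lt_or_gt with hlt | hlt
    · have hnotin : t₂.1 ∉ Ioo t₁.1 (g t₁.1) := by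
        intro hmem
        exact t₂.2.2 (Set.mem_iUnion.2 ⟨⟨t₁.1, t₁.2.1⟩, hmem⟩)
      have : g t₁.1 ≤ t₂.1 := by
        by_contra hcon
        push_neg at hcon
        exact hnotin ⟨hlt, hcon⟩
      have : (q t₁ : ℝ) < q t₂ := (hq2 t₁).trans_le (this.trans (hq1 t₂).le)
      rw [heq] at this
      exact lt_irrefl _ this
    · have hnotin : t₁.1 ∉ Ioo t₂.1 (g t₂.1) := by
        intro hmem
        exact t₁.2.2 (Set.mem_iUnion.2 ⟨⟨t₂.1, t₂.2.1⟩, hmem⟩)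
      have : g t₂.1 ≤ t₁.1 := by
        by_contra hcon
        push_neg at hcon
        exact hnotin ⟨hlt, hcon⟩
      have : (q t₂ : ℝ) < q t₁ := (hq2 t₂).trans_le (this.trans (hq1 t₁).le)
      rw [heq] at this
      exact lt_irrefl _ this
  have hLnull : S.measure L = 0 := by
    have : L = ⋃ t ∈ L, {t} := (Set.biUnion_of_singleton L).symm
    rw [this]
    refine (measure_biUnion_null_iff hLcount).2 ?_
    intro t ht
    exact key2 t ht.1.1.1 ht.1.1.2
  have hTnull : S.measure (E ∩ {T}) = 0 := by
    by_cases hzT : 0 < z T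
    · exact measure_mono_null inter_subset_right (key2 T ⟨hT.le, le_refl T⟩ hzT)
    · have : E ∩ {T} = ∅ := by
        ext x
        simp only [mem_inter_iff, mem_singleton_iff, mem_empty_iff_false, iff_false]
        rintro ⟨hxE, rfl⟩
        exact hzT hxE.2
      rw [this, measure_empty]
  have hsub : E ⊆ L ∪ U ∪ (E ∩ {T}) := by
    intro t ht
    by_cases htT : t < T
    · by_cases htU : t ∈ U
      · exact Or.inl (Or.inr htU)
      · exact Or.inl (Or.inl ⟨⟨ht, htT⟩, htU⟩)
    · right
      refine ⟨ht, ?_⟩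
      exact le_antisymm ht.1.2 (not_lt.1 htT)
  exact measure_mono_null hsub
    (measure_union_null (measure_union_null hLnull hUnull) hTnull)

/-- Backward 1-D lemma: complementarity implies the fixed-point identity. -/
lemma oneD_backward (hT : 0 < T)
    (hmono : MonotoneOn y (Icc 0 T)) (h0 : 0 ≤ y 0)
    (hznn : ∀ t ∈ Icc (0:ℝ) T, 0 ≤ z t)
    (hS : ∀ t, S t = lsExtend T y t)
    (hnull : S.measure {t | t ∈ Icc (0:ℝ) T ∧ 0 < z t} = 0) :
    ∀ t ∈ Icc (0:ℝ) T, y t = ⨆ s : Icc (0:ℝ) t, max (y s.1 - z s.1) 0 := by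
  intro t ht
  have ynn : ∀ s ∈ Icc (0:ℝ) T, 0 ≤ y s := fun s hs =>
    h0.trans (hmono ⟨le_refl 0, hT.le⟩ hs hs.1)
  haveI : Nonempty (Icc (0:ℝ) t) := ⟨⟨0, le_refl 0, ht.1⟩⟩
  have hBdd : BddAbove (Set.range fun s : Icc (0:ℝ) t => max (y s.1 - z s.1) 0) := by
    refine ⟨y t, ?_⟩
    rintro x ⟨s, rfl⟩
    have hs1 : s.1 ∈ Icc (0:ℝ) T := ⟨s.2.1, s.2.2.trans ht.2⟩
    refine max_le ?_ (ynn t ht)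
    calc y s.1 - z s.1 ≤ y s.1 := sub_le_self _ (hznn _ hs1)
      _ ≤ y t := hmono hs1 ht s.2.2
  set a := ⨆ s : Icc (0:ℝ) t, max (y s.1 - z s.1) 0 with ha
  have hle : a ≤ y t := by
    refine ciSup_le fun s => ?_
    have hs1 : s.1 ∈ Icc (0:ℝ) T := ⟨s.2.1, s.2.2.trans ht.2⟩
    refine max_le ?_ (ynn t ht)
    calc y s.1 - z s.1 ≤ y s.1 := sub_le_self _ (hznn _ hs1)
      _ ≤ y t := hmono hs1 ht s.2.2
  have hann : 0 ≤ a :=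
    (le_max_right _ 0).trans (le_ciSup hBdd (⟨0, le_refl 0, ht.1⟩ : Icc (0:ℝ) t))
  refine le_antisymm ?_ hle
  -- measure computation
  have hyt : ENNReal.ofReal (y t) = S.measure (Icc 0 t) := (aux_measure_Icc hS ht).symm
  set C := {s | s ∈ Icc (0:ℝ) t ∧ z s = 0} with hC
  have hcover : Icc (0:ℝ) t ⊆ C ∪ {s | s ∈ Icc (0:ℝ) T ∧ 0 < z s} := by
    intro s hs
    have hs1 : s ∈ Icc (0:ℝ) T := ⟨hs.1, hs.2.trans ht.2⟩
    rcases (hznn s hs1).eq_or_lt with h | h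
    · exact Or.inl ⟨hs, h.symm⟩
    · exact Or.inr ⟨hs1, h⟩
  have hmeasC : S.measure (Icc 0 t) ≤ S.measure C + 0 := by
    calc S.measure (Icc 0 t) ≤ S.measure (C ∪ {s | s ∈ Icc (0:ℝ) T ∧ 0 < z s}) :=
          measure_mono hcover
      _ ≤ S.measure C + S.measure {s | s ∈ Icc (0:ℝ) T ∧ 0 < z s} := measure_union_le _ _
      _ = S.measure C + 0 := by rw [hnull]
  rw [add_zero] at hmeasC
  rcases eq_empty_or_nonempty C with hCe | hCne
  · rw [hCe, measure_empty] at hmeasC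
    have : ENNReal.ofReal (y t) = 0 := le_antisymm (hyt ▸ hmeasC) zero_le
    have hy0 : y t ≤ 0 := ENNReal.ofReal_eq_zero.1 this
    linarith [hann]
  · set s' := sSup C with hs'
    have hCbdd : BddAbove C := ⟨t, fun c hc => hc.1.2⟩
    have hs'mem : s' ∈ Icc (0:ℝ) t := by
      refine ⟨?_, csSup_le hCne fun c hc => hc.1.2⟩
      obtain ⟨c, hc⟩ := hCne
      exact hc.1.1.trans (le_csSup hCbdd hc)
    by_cases hs'C : s' ∈ C
    · -- attained case
      have hsub2 : C ⊆ Icc 0 s' := fun c hc => ⟨hc.1.1, le_csSup hCbdd hc⟩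
      have : ENNReal.ofReal (y t) ≤ ENNReal.ofReal (y s') := by
        rw [hyt]
        calc S.measure (Icc 0 t) ≤ S.measure (Icc 0 s') :=
              hmeasC.trans (measure_mono hsub2)
          _ = ENNReal.ofReal (y s') :=
              aux_measure_Icc hS ⟨hs'mem.1, hs'mem.2.trans ht.2⟩
      have hyy : y t ≤ y s' := by
        rwa [ENNReal.ofReal_le_ofReal_iff
          (ynn s' ⟨hs'mem.1, hs'mem.2.trans ht.2⟩)] at this
      have : y s' = max (y s' - z s') 0 := by
        rw [hs'C.2, sub_zero, max_eq_left (ynn s' ⟨hs'mem.1, hs'mem.2.trans ht.2⟩)]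
      calc y t ≤ y s' := hyy
        _ = max (y s' - z s') 0 := this
        _ ≤ a := le_ciSup hBdd (⟨s', hs'mem⟩ : Icc (0:ℝ) t)
    · -- not attained
      have hsub2 : C ⊆ Ico 0 s' := by
        intro c hc
        refine ⟨hc.1.1, ?_⟩
        rcases (le_csSup hCbdd hc).lt_or_eq with h | h
        · exact h
        · exfalso; apply hs'C; rw [hs']; exact h ▸ hc
      have hll_nn : 0 ≤ leftLim S s' := aux_leftLim_nonneg hT hmono ynn hS s'
      have hmeas2 : ENNReal.ofReal (y t) ≤ ENNReal.ofReal (leftLim S s') := by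
        rw [hyt]
        calc S.measure (Icc 0 t) ≤ S.measure (Ico 0 s') :=
              hmeasC.trans (measure_mono hsub2)
          _ = ENNReal.ofReal (leftLim S s' - leftLim S 0) := S.measure_Ico 0 s'
          _ = ENNReal.ofReal (leftLim S s') := by rw [aux_leftLim_zero hS, sub_zero]
      have hyll : y t ≤ leftLim S s' := by
        rwa [ENNReal.ofReal_le_ofReal_iff hll_nn] at hmeas2
      have hlla : leftLim S s' ≤ a := by
        by_contra hcon
        push_neg at hcon
        rw [S.mono.leftLim_eq_sSup] at hcon
        obtain ⟨b, ⟨x, hx, rfl⟩, hab⟩ :=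
          exists_lt_of_lt_csSup (⟨S (s' - 1), mem_image_of_mem _ (by simp)⟩) hcon
        obtain ⟨c, hcC, hxc⟩ := exists_lt_of_lt_csSup hCne (hx : x < s')
        have hScf : S x ≤ S c := S.mono hxc.le
        have hSc : S c = y c := aux_lsExtend_eq hS ⟨hcC.1.1, hcC.1.2.trans ht.2⟩
        have hterm : y c = max (y c - z c) 0 := by
          rw [hcC.2, sub_zero, max_eq_left (ynn c ⟨hcC.1.1, hcC.1.2.trans ht.2⟩)]
        have : y c ≤ a := hterm ▸ le_ciSup hBdd (⟨c, hcC.1⟩ : Icc (0:ℝ) t)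
        rw [hSc] at hScf
        linarith
      linarith
end OneD

section SecF

lemma aux_F_slice_meas {F : ℝ → ℝ → ℝ} (hF : Measurable (Function.uncurry F)) (u : ℝ) :
    Measurable (F u) := hF.comp (measurable_const.prodMk measurable_id)

lemma aux_rightLiminf_Z (T : ℝ) (hT : 0 < T) (X F Y Z : ℝ → ℝ → ℝ)
    (hX : MemDT T X) (hFmeas : Measurable (Function.uncurry F))
    (hFnn : ∀ u ∈ Icc (0:ℝ) 1, ∀ v ∈ Icc (0:ℝ) 1, 0 ≤ F u v)
    (hY : MemDTup T Y)
    (hZdef : ∀ u ∈ Icc (0:ℝ) 1, ∀ t ∈ Icc (0:ℝ) T,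
      Z u t = X u t + Y u t - kernelApply F Y u t)
    {u : ℝ} (hu : u ∈ Icc (0:ℝ) 1) {t : ℝ} (ht : t ∈ Ico (0:ℝ) T) (hzt : 0 < Z u t) :
    ∃ δ > 0, ∀ s ∈ Ioo t (t + δ), s ≤ T → Z u t / 2 < Z u s := by
  set μ := volume.restrict (Icc (0:ℝ) 1) with hμ
  set f : ℝ → ℝ → ℝ := fun s v => F u v * Y v s with hf
  have hmeas : ∀ s ∈ Icc (0:ℝ) T, Measurable (f s) := fun s hs =>
    (aux_F_slice_meas hFmeas u).mul (hY.memDT.meas s hs)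
  have hYnn : ∀ s ∈ Icc (0:ℝ) T, ∀ v ∈ Icc (0:ℝ) 1, 0 ≤ Y v s := fun s hs v hv =>
    (hY.nonneg_zero v hv).trans (hY.mono v hv ⟨le_refl 0, hT.le⟩ hs hs.1)
  have hfnn : ∀ s ∈ Icc (0:ℝ) T, ∀ v ∈ Icc (0:ℝ) 1, 0 ≤ f s v := fun s hs v hv =>
    mul_nonneg (hFnn u hu v hv) (hYnn s hs v hv)
  have hfmono : ∀ s ∈ Icc (0:ℝ) T, ∀ s' ∈ Icc (0:ℝ) T, s ≤ s' → ∀ v ∈ Icc (0:ℝ) 1,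
      f s v ≤ f s' v := fun s hs s' hs' hss' v hv =>
    mul_le_mul_of_nonneg_left (hY.mono v hv hs hs' hss') (hFnn u hu v hv)
  have hXc : ContinuousWithinAt (X u) (Ici t) t := hX.rightCont u hu t ht
  have hYc : ContinuousWithinAt (Y u) (Ici t) t := hY.memDT.rightCont u hu t ht
  have htIcc : t ∈ Icc (0:ℝ) T := ⟨ht.1, ht.2.le⟩
  have hker : ∀ s, kernelApply F Y u s = ∫ v, f s v ∂μ := fun s => rfl
  by_cases hP : ∃ s ∈ Ioc t T, Integrable (f s) μ
  · obtain ⟨s₀, hs₀, hint⟩ := hP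
    have hs₀Icc : s₀ ∈ Icc (0:ℝ) T := ⟨ht.1.trans hs₀.1.le, hs₀.2⟩
    have hev : ∀ᶠ s in nhdsWithin t (Ici t), s ∈ Icc (0:ℝ) T ∧ s ≤ s₀ := by
      filter_upwards [nhdsWithin_le_nhds (Iic_mem_nhds hs₀.1), self_mem_nhdsWithin]
        with s h1 h2
      exact ⟨⟨ht.1.trans h2, (h1 : s ≤ s₀).trans hs₀.2⟩, h1⟩
    have hA : Tendsto (fun s => ∫ v, f s v ∂μ) (nhdsWithin t (Ici t))
        (nhds (∫ v, f t v ∂μ)) := by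
      refine tendsto_integral_filter_of_dominated_convergence (fun v => f s₀ v) ?_ ?_ hint ?_
      · filter_upwards [hev] with s hs
        exact (hmeas s hs.1).aestronglyMeasurable
      · filter_upwards [hev] with s hs
        filter_upwards [ae_restrict_mem measurableSet_Icc] with v hv
        rw [Real.norm_eq_abs, abs_of_nonneg (hfnn s hs.1 v hv)]
        exact hfmono s hs.1 s₀ hs₀Icc hs.2 v hv
      · filter_upwards [ae_restrict_mem measurableSet_Icc] with v hv
        exact tendsto_const_nhds.mul (hY.memDT.rightCont v hv t ht)
    have hZev : (fun s => X u s + Y u s - ∫ v, f s v ∂μ)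
        =ᶠ[nhdsWithin t (Ici t)] fun s => Z u s := by
      filter_upwards [hev] with s hs
      rw [hZdef u hu s hs.1, hker]
    have hZt : Tendsto (fun s => Z u s) (nhdsWithin t (Ici t)) (nhds (Z u t)) := by
      have heq : Z u t = X u t + Y u t - ∫ v, f t v ∂μ := by rw [hZdef u hu t htIcc, hker]
      rw [heq]
      exact ((hXc.add hYc).sub hA).congr' hZev
    have hev2 : ∀ᶠ s in nhdsWithin t (Ici t), Z u t / 2 < Z u s :=
      hZt.eventually (eventually_gt_nhds (by linarith))
    rw [Filter.Eventually, Metric.mem_nhdsWithin_iff] at hev2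
    obtain ⟨ε, hε, hsub⟩ := hev2
    refine ⟨ε, hε, fun s hs _ => ?_⟩
    refine hsub ⟨Metric.mem_ball.2 ?_, hs.1.le⟩
    rw [Real.dist_eq, abs_of_pos (by linarith [hs.1])]
    linarith [hs.2]
  · push_neg at hP
    have hA0 : ∀ s ∈ Ioc t T, kernelApply F Y u s = 0 := fun s hs =>
      (hker s).trans (integral_undef (hP s hs))
    have hAt_nn : 0 ≤ kernelApply F Y u t := by
      rw [hker]
      by_cases hit : Integrable (f t) μ
      · refine integral_nonneg_of_ae ?_
        filter_upwards [ae_restrict_mem measurableSet_Icc] with v hv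
        exact hfnn t htIcc v hv
      · rw [integral_undef hit]
    have hlim : Tendsto (fun s => X u s + Y u s) (nhdsWithin t (Ici t))
        (nhds (X u t + Y u t)) := hXc.add hYc
    have hZle : Z u t ≤ X u t + Y u t := by
      have := hZdef u hu t htIcc
      linarith
    have hev2 : ∀ᶠ s in nhdsWithin t (Ici t), Z u t / 2 < X u s + Y u s :=
      hlim.eventually (eventually_gt_nhds (by linarith))
    rw [Filter.Eventually, Metric.mem_nhdsWithin_iff] at hev2
    obtain ⟨ε, hε, hsub⟩ := hev2
    refine ⟨min ε (T - t), lt_min hε (by linarith [ht.2]), fun s hs hsT => ?_⟩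
    have h1 : Z u t / 2 < X u s + Y u s := by
      refine hsub ⟨Metric.mem_ball.2 ?_, hs.1.le⟩
      rw [Real.dist_eq, abs_of_pos (by linarith [hs.1])]
      have := hs.2
      have := min_le_left ε (T - t)
      linarith
    have h2 : Z u s = X u s + Y u s := by
      rw [hZdef u hu s ⟨ht.1.trans hs.1.le, hsT⟩, hA0 s ⟨hs.1, hsT⟩, sub_zero]
    linarith
end SecF

noncomputable section SecG

/-- `ℝ≥0∞`-valued iterates of the kernel. -/
def auxKit (F : ℝ → ℝ → ℝ) : ℕ → ℝ → ℝ → ℝ≥0∞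
  | 0 => fun u v => ENNReal.ofReal (F u v)
  | n + 1 => fun u v => ∫⁻ w in Icc (0:ℝ) 1, ENNReal.ofReal (F u w) * auxKit F n w v

lemma aux_Kit_meas {F : ℝ → ℝ → ℝ} (hF : Measurable (Function.uncurry F)) :
    ∀ n, Measurable (Function.uncurry (auxKit F n)) := by
  intro n
  induction n with
  | zero => exact hF.ennreal_ofReal
  | succ n ih =>
    have h1 : Measurable (fun p : (ℝ × ℝ) × ℝ =>
        ENNReal.ofReal (F p.1.1 p.2) * auxKit F n p.2 p.1.2) := by
      refine Measurable.mul ?_ ?_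
      · exact (hF.comp ((measurable_fst.comp measurable_fst).prodMk measurable_snd)).ennreal_ofReal
      · exact ih.comp (measurable_snd.prodMk (measurable_snd.comp measurable_fst))
    exact h1.lintegral_prod_right'

lemma aux_kernelIter_meas {F : ℝ → ℝ → ℝ} (hF : Measurable (Function.uncurry F)) :
    ∀ n, Measurable (Function.uncurry (kernelIter F n)) := by
  intro n
  induction n with
  | zero => exact hF
  | succ n ih =>
    have h1 : StronglyMeasurable (fun p : (ℝ × ℝ) × ℝ =>
        F p.1.1 p.2 * kernelIter F n p.2 p.1.2) := by
      refine Measurable.stronglyMeasurable (Measurable.mul ?_ ?_)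
      · exact hF.comp ((measurable_fst.comp measurable_fst).prodMk measurable_snd)
      · exact ih.comp (measurable_snd.prodMk (measurable_snd.comp measurable_fst))
    exact h1.integral_prod_right'.measurable

lemma aux_kernelIter_nonneg {F : ℝ → ℝ → ℝ}
    (hFnn : ∀ u ∈ Icc (0:ℝ) 1, ∀ v ∈ Icc (0:ℝ) 1, 0 ≤ F u v) :
    ∀ n, ∀ u ∈ Icc (0:ℝ) 1, ∀ v ∈ Icc (0:ℝ) 1, 0 ≤ kernelIter F n u v := by
  intro n
  induction n with
  | zero => exact hFnn
  | succ n ih =>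
    intro u hu v hv
    refine integral_nonneg_of_ae ?_
    filter_upwards [ae_restrict_mem measurableSet_Icc] with w hw
    exact mul_nonneg (hFnn u hu w hw) (ih w hw v hv)

/-- The main uniqueness lemma: two fixed points of `piMap` in `D_T^↑(L1)` coincide on
`[0,1] × [0,T]`. -/
lemma aux_uniqueness (T : ℝ) (hT : 0 < T) (X F : ℝ → ℝ → ℝ) (γ : ℝ) (k : ℕ)
    (hF : IsReflKernel F γ k) (Y W : ℝ → ℝ → ℝ) (hY : MemDTup T Y) (hW : MemDTup T W)
    (hYfp : ∀ u ∈ Icc (0:ℝ) 1, ∀ t ∈ Icc (0:ℝ) T, Y u t = piMap X F Y u t)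
    (hWfp : ∀ u ∈ Icc (0:ℝ) 1, ∀ t ∈ Icc (0:ℝ) T, W u t = piMap X F W u t) :
    ∀ u ∈ Icc (0:ℝ) 1, ∀ t ∈ Icc (0:ℝ) T, W u t = Y u t := by
  classical
  set μ := volume.restrict (Icc (0:ℝ) 1) with hμdef
  have hFmeas := hF.meas
  have hFnn := hF.nonneg
  -- countable skeleton of `[0,T]`
  set e : ℕ → ℝ := fun n => min (max (((Denumerable.eqv ℚ).symm n : ℚ) : ℝ) 0) T with hedef
  have heT : ∀ n, e n ∈ Icc (0:ℝ) T := fun n =>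
    ⟨le_min (le_max_right _ _) hT.le, min_le_right _ _⟩
  have he_rat : ∀ q : ℚ, 0 ≤ (q:ℝ) → (q:ℝ) ≤ T → ∃ n, e n = (q:ℝ) := by
    intro q h0 hq
    refine ⟨Denumerable.eqv ℚ q, ?_⟩
    simp only [hedef, Equiv.symm_apply_apply]
    rw [max_eq_left h0, min_eq_left hq]
  -- countable sup of differences
  set G' : ℝ → ℝ≥0∞ := fun u => ⨆ n, ENNReal.ofReal |Y u (e n) - W u (e n)| with hG'def
  have hG'meas : Measurable G' := by
    refine Measurable.iSup fun n => ?_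
    exact (((hY.memDT.meas (e n) (heT n)).sub (hW.memDT.meas (e n) (heT n))).abs).ennreal_ofReal
  -- dominate every time point by the countable sup (right-continuity)
  have hdom : ∀ u ∈ Icc (0:ℝ) 1, ∀ t ∈ Icc (0:ℝ) T,
      ENNReal.ofReal |Y u t - W u t| ≤ G' u := by
    intro u hu t ht
    rcases ht.2.lt_or_eq with htT | htT
    · -- t < T : approximate from the right by rationals
      obtain ⟨x, hx_anti, hx_gt, hx_tendsto⟩ := exists_seq_strictAnti_tendsto t
      have hsel : ∀ j : ℕ, ∃ q : ℚ, t < (q:ℝ) ∧ (q:ℝ) < min (x j) T :=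
        fun j => exists_rat_btwn (lt_min (hx_gt j) htT)
      choose q hq1 hq2 using hsel
      have hqT : ∀ j, (q j : ℝ) ≤ T := fun j => ((hq2 j).trans_le (min_le_right _ _)).le
      have hq0 : ∀ j, 0 ≤ (q j : ℝ) := fun j => ht.1.trans (hq1 j).le
      have hqtendsto : Tendsto (fun j => (q j : ℝ)) atTop (nhds t) := by
        refine tendsto_of_tendsto_of_tendsto_of_le_of_le tendsto_const_nhds hx_tendsto
          (fun j => (hq1 j).le) (fun j => ((hq2 j).trans_le (min_le_left _ _)).le)
      have hqwithin : Tendsto (fun j => (q j : ℝ)) atTop (nhdsWithin t (Ici t)) := by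
        rw [tendsto_nhdsWithin_iff]
        exact ⟨hqtendsto, Filter.Eventually.of_forall fun j => (hq1 j).le⟩
      have hYc : ContinuousWithinAt (Y u) (Ici t) t :=
        hY.memDT.rightCont u hu t ⟨ht.1, htT⟩
      have hWc : ContinuousWithinAt (W u) (Ici t) t :=
        hW.memDT.rightCont u hu t ⟨ht.1, htT⟩
      have hlim : Tendsto (fun j => ENNReal.ofReal |Y u ((q j : ℝ)) - W u ((q j : ℝ))|)
          atTop (nhds (ENNReal.ofReal |Y u t - W u t|)) := by
        have h1 : Tendsto (fun s => ENNReal.ofReal |Y u s - W u s|)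
            (nhdsWithin t (Ici t)) (nhds (ENNReal.ofReal |Y u t - W u t|)) :=
          (ENNReal.continuous_ofReal.tendsto _).comp ((hYc.sub hWc).abs)
        exact h1.comp hqwithin
      refine le_of_tendsto hlim ?_
      refine Filter.Eventually.of_forall fun j => ?_
      obtain ⟨n, hn⟩ := he_rat (q j) (hq0 j) (hqT j)
      calc ENNReal.ofReal |Y u ((q j : ℝ)) - W u ((q j : ℝ))|
          = ENNReal.ofReal |Y u (e n) - W u (e n)| := by rw [hn]
        _ ≤ G' u := le_iSup (fun n => ENNReal.ofReal |Y u (e n) - W u (e n)|) _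
    · -- t = T
      obtain ⟨q, hq⟩ := exists_rat_gt T
      have heq : e (Denumerable.eqv ℚ q) = T := by
        simp only [hedef, Equiv.symm_apply_apply]
        rw [max_eq_left (hT.le.trans hq.le), min_eq_right hq.le]
      calc ENNReal.ofReal |Y u t - W u t|
          = ENNReal.ofReal |Y u (e (Denumerable.eqv ℚ q)) - W u (e (Denumerable.eqv ℚ q))| := by
            rw [heq, htT]
        _ ≤ G' u := le_iSup (fun n => ENNReal.ofReal |Y u (e n) - W u (e n)|) _
  -- the key contraction bound
  have hkey : ∀ u ∈ Icc (0:ℝ) 1, ∀ t ∈ Icc (0:ℝ) T,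
      ENNReal.ofReal |Y u t - W u t| ≤ ∫⁻ v, ENNReal.ofReal (F u v) * G' v ∂μ := by
    intro u hu t ht
    haveI : Nonempty (Icc (0:ℝ) t) := ⟨⟨0, le_refl 0, ht.1⟩⟩
    rw [hYfp u hu t ht, hWfp u hu t ht]
    show ENNReal.ofReal |(⨆ s : Icc (0:ℝ) t, max (-(X u s.1) + kernelApply F Y u s.1) 0) -
      ⨆ s : Icc (0:ℝ) t, max (-(X u s.1) + kernelApply F W u s.1) 0| ≤ _
    refine le_trans (ofReal_abs_iSup_sub_iSup _ _) ?_
    refine iSup_le fun s => ?_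
    have hsT : s.1 ∈ Icc (0:ℝ) T := ⟨s.2.1, s.2.2.trans ht.2⟩
    have h1 : |max (-(X u s.1) + kernelApply F Y u s.1) 0 -
        max (-(X u s.1) + kernelApply F W u s.1) 0| ≤
        |kernelApply F Y u s.1 - kernelApply F W u s.1| := by
      refine (abs_max_sub_max_le_abs _ _ _).trans ?_
      have heq2 : (-(X u s.1) + kernelApply F Y u s.1) -
          (-(X u s.1) + kernelApply F W u s.1) =
          kernelApply F Y u s.1 - kernelApply F W u s.1 := by ring
      rw [heq2]
    refine le_trans (ENNReal.ofReal_le_ofReal h1) ?_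
    have hmY : AEStronglyMeasurable (fun v => F u v * Y v s.1) μ :=
      ((aux_F_slice_meas hFmeas u).mul (hY.memDT.meas s.1 hsT)).aestronglyMeasurable
    have hmW : AEStronglyMeasurable (fun v => F u v * W v s.1) μ :=
      ((aux_F_slice_meas hFmeas u).mul (hW.memDT.meas s.1 hsT)).aestronglyMeasurable
    refine le_trans (ofReal_abs_integral_sub_le μ _ _ hmY hmW) ?_
    refine lintegral_mono_ae ?_
    filter_upwards [ae_restrict_mem measurableSet_Icc] with v hv
    have heq3 : F u v * Y v s.1 - F u v * W v s.1 = F u v * (Y v s.1 - W v s.1) := by ring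
    rw [heq3, abs_mul, abs_of_nonneg (hFnn u hu v hv),
      ENNReal.ofReal_mul (hFnn u hu v hv)]
    exact mul_le_mul_right (hdom v hv s.1 hsT) _
  have hG'key : ∀ u ∈ Icc (0:ℝ) 1, G' u ≤ ∫⁻ v, ENNReal.ofReal (F u v) * G' v ∂μ :=
    fun u hu => iSup_le fun n => hkey u hu (e n) (heT n)
  -- column bounds for the ENNReal kernel iterates
  have hKcol : ∀ v ∈ Icc (0:ℝ) 1, ∫⁻ u1, ENNReal.ofReal (F u1 v) ∂μ ≤ 1 := by
    intro v hv
    have h1 : ∫⁻ u1, ENNReal.ofReal (F u1 v) ∂μ ≤ ∫⁻ u1, ENNReal.ofReal |F u1 v| ∂μ :=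
      lintegral_mono fun u1 => ENNReal.ofReal_le_ofReal (le_abs_self _)
    refine h1.trans (le_trans ?_ hF.opNorm_le_one)
    exact le_biSup (fun v => ∫⁻ u1 in Icc (0:ℝ) 1, ENNReal.ofReal |F u1 v|) hv
  have hswapable : ∀ n v, Measurable
      (fun p : ℝ × ℝ => ENNReal.ofReal (F p.1 p.2) * auxKit F n p.2 v) := by
    intro n v
    refine Measurable.mul hFmeas.ennreal_ofReal ?_
    exact (aux_Kit_meas hFmeas n).comp (measurable_snd.prodMk measurable_const)
  have hKitcol : ∀ n, ∀ v ∈ Icc (0:ℝ) 1, ∫⁻ u1, auxKit F n u1 v ∂μ ≤ 1 := by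
    intro n
    induction n with
    | zero => exact hKcol
    | succ n ih =>
      intro v hv
      have hswap : ∫⁻ u1, ∫⁻ w, ENNReal.ofReal (F u1 w) * auxKit F n w v ∂μ ∂μ =
          ∫⁻ w, ∫⁻ u1, ENNReal.ofReal (F u1 w) * auxKit F n w v ∂μ ∂μ :=
        lintegral_lintegral_swap (hswapable n v).aemeasurable
      show ∫⁻ u1, ∫⁻ w, ENNReal.ofReal (F u1 w) * auxKit F n w v ∂μ ∂μ ≤ 1
      rw [hswap]
      have hinner : ∀ w ∈ Icc (0:ℝ) 1,
          ∫⁻ u1, ENNReal.ofReal (F u1 w) * auxKit F n w v ∂μ ≤ auxKit F n w v := by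
        intro w hw
        have hm : Measurable fun u1 => ENNReal.ofReal (F u1 w) :=
          (hFmeas.comp (measurable_id.prodMk measurable_const)).ennreal_ofReal
        rw [lintegral_mul_const _ hm]
        calc (∫⁻ u1, ENNReal.ofReal (F u1 w) ∂μ) * auxKit F n w v
            ≤ 1 * auxKit F n w v := mul_le_mul_left (hKcol w hw) _
          _ = auxKit F n w v := one_mul _
      calc ∫⁻ w, ∫⁻ u1, ENNReal.ofReal (F u1 w) * auxKit F n w v ∂μ ∂μ
          ≤ ∫⁻ w, auxKit F n w v ∂μ := by
            refine lintegral_mono_ae ?_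
            filter_upwards [ae_restrict_mem measurableSet_Icc] with w hw
            exact hinner w hw
        _ ≤ 1 := ih v hv
  -- iterating the contraction bound
  have hKitslice : ∀ n v, Measurable fun w => auxKit F n w v := fun n v =>
    (aux_Kit_meas hFmeas n).comp (measurable_id.prodMk measurable_const)
  have hiter : ∀ n, ∀ u ∈ Icc (0:ℝ) 1, G' u ≤ ∫⁻ v, auxKit F n u v * G' v ∂μ := by
    intro n
    induction n with
    | zero => exact hG'key
    | succ n ih =>
      intro u hu
      have hKslice : Measurable fun v => ENNReal.ofReal (F u v) :=
        (aux_F_slice_meas hFmeas u).ennreal_ofReal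
      have step1 : G' u ≤ ∫⁻ v, ENNReal.ofReal (F u v) *
          (∫⁻ w, auxKit F n v w * G' w ∂μ) ∂μ := by
        refine (hG'key u hu).trans (lintegral_mono_ae ?_)
        filter_upwards [ae_restrict_mem measurableSet_Icc] with v hv
        exact mul_le_mul_right (ih v hv) _
      have step2 : ∫⁻ v, ENNReal.ofReal (F u v) * (∫⁻ w, auxKit F n v w * G' w ∂μ) ∂μ =
          ∫⁻ v, ∫⁻ w, ENNReal.ofReal (F u v) * auxKit F n v w * G' w ∂μ ∂μ := by
        refine lintegral_congr fun v => ?_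
        have hm3 : Measurable fun w => auxKit F n v w * G' w :=
          ((aux_Kit_meas hFmeas n).comp (measurable_const.prodMk measurable_id)).mul hG'meas
        rw [← lintegral_const_mul _ hm3]
        refine lintegral_congr fun w => ?_
        ring
      have hswapm : Measurable (fun p : ℝ × ℝ =>
          ENNReal.ofReal (F u p.1) * auxKit F n p.1 p.2 * G' p.2) := by
        refine Measurable.mul (Measurable.mul ?_ (aux_Kit_meas hFmeas n)) ?_
        · exact (hFmeas.comp (measurable_const.prodMk measurable_fst)).ennreal_ofReal
        · exact hG'meas.comp measurable_snd
      have step3 : ∫⁻ v, ∫⁻ w, ENNReal.ofReal (F u v) * auxKit F n v w * G' w ∂μ ∂μ =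
          ∫⁻ w, ∫⁻ v, ENNReal.ofReal (F u v) * auxKit F n v w * G' w ∂μ ∂μ :=
        lintegral_lintegral_swap hswapm.aemeasurable
      have step4 : ∫⁻ w, ∫⁻ v, ENNReal.ofReal (F u v) * auxKit F n v w * G' w ∂μ ∂μ =
          ∫⁻ w, auxKit F (n+1) u w * G' w ∂μ := by
        refine lintegral_congr fun w => ?_
        have hm2 : Measurable fun v => ENNReal.ofReal (F u v) * auxKit F n v w :=
          hKslice.mul ((aux_Kit_meas hFmeas n).comp (measurable_id.prodMk measurable_const))
        rw [lintegral_mul_const _ hm2]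
        rfl
      calc G' u ≤ _ := step1
        _ = _ := step2
        _ = _ := step3
        _ = _ := step4
  -- relating the ENNReal iterates with the real iterates
  have hIterNN := aux_kernelIter_nonneg hFnn
  have hIterMeas := aux_kernelIter_meas hFmeas
  have hrel : ∀ n, ∀ v ∈ Icc (0:ℝ) 1,
      ∀ᵐ u1 ∂μ, auxKit F n u1 v = ENNReal.ofReal (kernelIter F n u1 v) := by
    intro n
    induction n with
    | zero => exact fun v _ => Filter.Eventually.of_forall fun u1 => rfl
    | succ n ih =>
      intro v hv
      have hmeasn1 : Measurable fun u1 => auxKit F (n+1) u1 v := hKitslice (n+1) v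
      have hfin : ∀ᵐ u1 ∂μ, auxKit F (n+1) u1 v < ⊤ := by
        refine ae_lt_top hmeasn1 ?_
        exact ((hKitcol (n+1) v hv).trans_lt ENNReal.one_lt_top).ne
      filter_upwards [hfin, ae_restrict_mem measurableSet_Icc] with u1 hu1fin hu1mem
      have h1 : auxKit F (n+1) u1 v =
          ∫⁻ w, ENNReal.ofReal (F u1 w * kernelIter F n w v) ∂μ := by
        show ∫⁻ w, ENNReal.ofReal (F u1 w) * auxKit F n w v ∂μ = _
        refine lintegral_congr_ae ?_
        filter_upwards [ih v hv, ae_restrict_mem measurableSet_Icc] with w hw hwmem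
        rw [hw, ← ENNReal.ofReal_mul (hFnn u1 hu1mem w hwmem)]
      have hmeas_h : Measurable (fun w => F u1 w * kernelIter F n w v) :=
        (aux_F_slice_meas hFmeas u1).mul
          ((hIterMeas n).comp (measurable_id.prodMk measurable_const))
      have hnn_ae : 0 ≤ᵐ[μ] fun w => F u1 w * kernelIter F n w v := by
        filter_upwards [ae_restrict_mem measurableSet_Icc] with w hwmem
        exact mul_nonneg (hFnn u1 hu1mem w hwmem) (hIterNN n w hwmem v hv)
      have h2fin : (∫⁻ w, ENNReal.ofReal (F u1 w * kernelIter F n w v) ∂μ) ≠ ⊤ := by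
        rw [← h1]; exact hu1fin.ne
      have hint : Integrable (fun w => F u1 w * kernelIter F n w v) μ := by
        refine ⟨hmeas_h.aestronglyMeasurable, ?_⟩
        rw [hasFiniteIntegral_iff_norm]
        have heq4 : ∫⁻ w, ENNReal.ofReal ‖F u1 w * kernelIter F n w v‖ ∂μ =
            ∫⁻ w, ENNReal.ofReal (F u1 w * kernelIter F n w v) ∂μ := by
          refine lintegral_congr_ae ?_
          filter_upwards [hnn_ae] with w hw
          rw [Real.norm_eq_abs, abs_of_nonneg hw]
        rw [heq4]
        exact lt_top_iff_ne_top.2 h2fin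
      have h3 : ENNReal.ofReal (∫ w, F u1 w * kernelIter F n w v ∂μ) =
          ∫⁻ w, ENNReal.ofReal (F u1 w * kernelIter F n w v) ∂μ :=
        MeasureTheory.ofReal_integral_eq_lintegral_ofReal hint hnn_ae
      rw [h1, ← h3]
      rfl
  -- column bound `γ` for the `k`-th iterate
  have hKitγ : ∀ v ∈ Icc (0:ℝ) 1,
      ∫⁻ u1, auxKit F (k-1) u1 v ∂μ ≤ ENNReal.ofReal γ := by
    intro v hv
    rw [lintegral_congr_ae (hrel (k-1) v hv)]
    refine le_trans (lintegral_mono fun u1 =>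
      ENNReal.ofReal_le_ofReal (le_abs_self _)) (le_trans ?_ hF.iter_le)
    exact le_biSup (fun v => ∫⁻ u1 in Icc (0:ℝ) 1, ENNReal.ofReal |kernelIter F (k-1) u1 v|) hv
  -- the integral of G' is zero
  set I := ∫⁻ u1, G' u1 ∂μ with hIdef
  have hIfin : I ≠ ⊤ := by
    have hbY : ∀ u1, (⨆ n, ENNReal.ofReal |Y u1 (e n)|) ≤ pathSup T Y u1 := fun u1 =>
      iSup_le fun n => le_biSup (fun t => ENNReal.ofReal |Y u1 t|) (heT n)
    have hbW : ∀ u1, (⨆ n, ENNReal.ofReal |W u1 (e n)|) ≤ pathSup T W u1 := fun u1 =>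
      iSup_le fun n => le_biSup (fun t => ENNReal.ofReal |W u1 t|) (heT n)
    have hmY : Measurable fun u1 => ⨆ n, ENNReal.ofReal |Y u1 (e n)| :=
      Measurable.iSup fun n => ((hY.memDT.meas (e n) (heT n)).abs).ennreal_ofReal
    have hG'b : ∀ u1, G' u1 ≤ (⨆ n, ENNReal.ofReal |Y u1 (e n)|) +
        (⨆ n, ENNReal.ofReal |W u1 (e n)|) := by
      intro u1
      refine iSup_le fun n => ?_
      calc ENNReal.ofReal |Y u1 (e n) - W u1 (e n)|
          ≤ ENNReal.ofReal (|Y u1 (e n)| + |W u1 (e n)|) :=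
            ENNReal.ofReal_le_ofReal (abs_sub _ _)
        _ = ENNReal.ofReal |Y u1 (e n)| + ENNReal.ofReal |W u1 (e n)| :=
            ENNReal.ofReal_add (abs_nonneg _) (abs_nonneg _)
        _ ≤ _ := add_le_add (le_iSup (fun n => ENNReal.ofReal |Y u1 (e n)|) n)
            (le_iSup (fun n => ENNReal.ofReal |W u1 (e n)|) n)
    have hle2 : I ≤ TNorm T Y + TNorm T W := by
      calc I ≤ ∫⁻ u1, ((⨆ n, ENNReal.ofReal |Y u1 (e n)|) +
            (⨆ n, ENNReal.ofReal |W u1 (e n)|)) ∂μ := lintegral_mono hG'b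
        _ = (∫⁻ u1, (⨆ n, ENNReal.ofReal |Y u1 (e n)|) ∂μ) +
            ∫⁻ u1, (⨆ n, ENNReal.ofReal |W u1 (e n)|) ∂μ := lintegral_add_left hmY _
        _ ≤ TNorm T Y + TNorm T W := by
            refine add_le_add (lintegral_mono hbY) (lintegral_mono hbW)
    exact (hle2.trans_lt (by
      rw [lt_top_iff_ne_top]
      exact ENNReal.add_ne_top.2 ⟨hY.memDT.finite, hW.memDT.finite⟩)).ne
  have hcontr : I ≤ ENNReal.ofReal γ * I := by
    have hswapm2 : Measurable (fun p : ℝ × ℝ => auxKit F (k-1) p.1 p.2 * G' p.2) :=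
      (aux_Kit_meas hFmeas (k-1)).mul (hG'meas.comp measurable_snd)
    calc I ≤ ∫⁻ u1, ∫⁻ v, auxKit F (k-1) u1 v * G' v ∂μ ∂μ := by
          refine lintegral_mono_ae ?_
          filter_upwards [ae_restrict_mem measurableSet_Icc] with u1 hu1
          exact hiter (k-1) u1 hu1
      _ = ∫⁻ v, ∫⁻ u1, auxKit F (k-1) u1 v * G' v ∂μ ∂μ :=
          lintegral_lintegral_swap hswapm2.aemeasurable
      _ = ∫⁻ v, (∫⁻ u1, auxKit F (k-1) u1 v ∂μ) * G' v ∂μ := by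
          refine lintegral_congr fun v => ?_
          rw [lintegral_mul_const _ (hKitslice (k-1) v)]
      _ ≤ ∫⁻ v, ENNReal.ofReal γ * G' v ∂μ := by
          refine lintegral_mono_ae ?_
          filter_upwards [ae_restrict_mem measurableSet_Icc] with v hv
          exact mul_le_mul_left (hKitγ v hv) _
      _ = ENNReal.ofReal γ * I := lintegral_const_mul _ hG'meas
  have hI0 : I = 0 := by
    by_contra hne
    have hγ1 : ENNReal.ofReal γ < 1 := by
      rw [← ENNReal.ofReal_one]
      exact (ENNReal.ofReal_lt_ofReal_iff one_pos).2 hF.gamma_mem.2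
    have hlt : ENNReal.ofReal γ * I < 1 * I :=
      ENNReal.mul_lt_mul_left hne hIfin hγ1
    rw [one_mul] at hlt
    exact absurd (hcontr.trans_lt hlt) (lt_irrefl I)
  have hG'0 : ∀ᵐ u1 ∂μ, G' u1 = 0 := by
    have := (lintegral_eq_zero_iff hG'meas).1 hI0
    filter_upwards [this] with u1 h
    exact h
  -- conclusion
  intro u hu t ht
  have h1 := hkey u hu t ht
  have h2 : ∫⁻ v, ENNReal.ofReal (F u v) * G' v ∂μ = 0 := by
    have : (fun v => ENNReal.ofReal (F u v) * G' v) =ᵐ[μ] fun _ => 0 := by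
      filter_upwards [hG'0] with v hv
      rw [hv, mul_zero]
    rw [lintegral_congr_ae this, lintegral_zero]
  rw [h2] at h1
  have h3 : |Y u t - W u t| ≤ 0 :=
    ENNReal.ofReal_eq_zero.1 (le_antisymm h1 zero_le)
  have h4 : Y u t - W u t = 0 := abs_nonpos_iff.1 h3
  linarith
end SecG

noncomputable section SecH

/-- The Stieltjes function associated with a nonnegative, monotone, right-continuous path. -/
def auxStieltjes (T : ℝ) (y : ℝ → ℝ) (hT : 0 < T)
    (hmono : MonotoneOn y (Icc 0 T)) (h0 : 0 ≤ y 0)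
    (hrc : ∀ t ∈ Ico (0:ℝ) T, ContinuousWithinAt y (Ici t) t) : StieltjesFunction ℝ where
  toFun := lsExtend T y
  mono' := by
    intro s t hst
    simp only [lsExtend]
    split_ifs with h1 h2 h2
    · exact le_refl 0
    · push_neg at h2
      exact h0.trans (hmono ⟨le_refl 0, hT.le⟩ ⟨le_min h2 hT.le, min_le_right _ _⟩
        (le_min h2 hT.le))
    · push_neg at h1; linarith
    · push_neg at h1 h2
      exact hmono ⟨le_min h1 hT.le, min_le_right _ _⟩ ⟨le_min h2 hT.le, min_le_right _ _⟩
        (min_le_min hst le_rfl)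
  right_continuous' := by
    intro x
    rcases lt_or_ge x 0 with hx | hx
    · have hev : lsExtend T y =ᶠ[nhdsWithin x (Ici x)] fun _ => (0:ℝ) := by
        filter_upwards [nhdsWithin_le_nhds (Iio_mem_nhds hx)] with t ht
        exact if_pos (mem_Iio.1 ht)
      exact continuousWithinAt_const.congr_of_eventuallyEq hev (if_pos hx)
    rcases lt_or_ge x T with hxT | hxT
    · have h1 : ContinuousWithinAt y (Ici x) x := hrc x ⟨hx, hxT⟩
      have hev : lsExtend T y =ᶠ[nhdsWithin x (Ici x)] y := by
        filter_upwards [nhdsWithin_le_nhds (Iio_mem_nhds hxT), self_mem_nhdsWithin]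
          with t h1t h2t
        have ht0 : ¬ t < 0 := not_lt.2 (hx.trans h2t)
        simp only [lsExtend, if_neg ht0, min_eq_left (le_of_lt (mem_Iio.1 h1t))]
      exact h1.congr_of_eventuallyEq hev
        (by simp only [lsExtend, if_neg (not_lt.2 hx), min_eq_left hxT.le])
    · have hev : lsExtend T y =ᶠ[nhdsWithin x (Ici x)] fun _ => y T := by
        filter_upwards [self_mem_nhdsWithin] with t h2t
        have ht0 : ¬ t < 0 := not_lt.2 ((hT.le.trans hxT).trans h2t)
        simp only [lsExtend, if_neg ht0, min_eq_right (hxT.trans h2t)]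
      exact continuousWithinAt_const.congr_of_eventuallyEq hev
        (by simp only [lsExtend, if_neg (not_lt.2 (hT.le.trans hxT)), min_eq_right hxT])

lemma auxStieltjes_apply (T : ℝ) (y : ℝ → ℝ) (hT : 0 < T)
    (hmono : MonotoneOn y (Icc 0 T)) (h0 : 0 ≤ y 0)
    (hrc : ∀ t ∈ Ico (0:ℝ) T, ContinuousWithinAt y (Ici t) t) (t : ℝ) :
    auxStieltjes T y hT hmono h0 hrc t = lsExtend T y t := rfl

end SecH

/-- a feasible `Y` is the unique fixed point of `π_{X,F}` in `D_T^↑(L1)` iff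
the pair `(Y, Z)` satisfies the complementarity property (with the convention
`Y_u(0−) = 0`, so the Stieltjes measure has an atom of mass `Y_u(0)` at `0`). -/
theorem complementarity_characterization
    (T : ℝ) (hT : 0 < T) (X F Y Z : ℝ → ℝ → ℝ) (γ : ℝ) (k : ℕ)
    (hX : MemDT T X) (hF : IsReflKernel F γ k) (hY : MemDTup T Y)
    (hZdef : ∀ u ∈ Icc (0:ℝ) 1, ∀ t ∈ Icc (0:ℝ) T,
      Z u t = X u t + Y u t - kernelApply F Y u t)
    (hfeas : ∀ u ∈ Icc (0:ℝ) 1, ∀ t ∈ Icc (0:ℝ) T, 0 ≤ Z u t) :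
    ((∀ u ∈ Icc (0:ℝ) 1, ∀ t ∈ Icc (0:ℝ) T, Y u t = piMap X F Y u t) ∧
      (∀ W : ℝ → ℝ → ℝ, MemDTup T W →
        (∀ u ∈ Icc (0:ℝ) 1, ∀ t ∈ Icc (0:ℝ) T, W u t = piMap X F W u t) →
        ∀ u ∈ Icc (0:ℝ) 1, ∀ t ∈ Icc (0:ℝ) T, W u t = Y u t))
    ↔ Complementary T Y Z := by
  have hconv : ∀ u ∈ Icc (0:ℝ) 1, ∀ t ∈ Icc (0:ℝ) T,
      piMap X F Y u t = ⨆ s : Icc (0:ℝ) t, max (Y u s.1 - Z u s.1) 0 := by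
    intro u hu t ht
    show (⨆ s : Icc (0:ℝ) t, max (-(X u s.1) + kernelApply F Y u s.1) 0) = _
    refine iSup_congr fun s => ?_
    have hsT : s.1 ∈ Icc (0:ℝ) T := ⟨s.2.1, s.2.2.trans ht.2⟩
    have : -(X u s.1) + kernelApply F Y u s.1 = Y u s.1 - Z u s.1 := by
      rw [hZdef u hu s.1 hsT]; ring
    rw [this]
  constructor
  · rintro ⟨hfp, -⟩
    intro u hu S hS
    refine oneD_forward hT (hY.mono u hu) (fun t ht => hfeas u hu t ht) ?_ ?_ hS
    · intro t ht
      rw [hfp u hu t ht, hconv u hu t ht]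
    · intro t ht hzt
      exact aux_rightLiminf_Z T hT X F Y Z hX hF.meas hF.nonneg hY hZdef hu ht hzt
  · intro hcomp
    have hfp : ∀ u ∈ Icc (0:ℝ) 1, ∀ t ∈ Icc (0:ℝ) T, Y u t = piMap X F Y u t := by
      intro u hu t ht
      have hS := auxStieltjes_apply T (Y u) hT (hY.mono u hu) (hY.nonneg_zero u hu)
        (fun t' ht' => hY.memDT.rightCont u hu t' ht')
      have hnull := hcomp u hu _ hS
      have h1 := oneD_backward hT (hY.mono u hu) (hY.nonneg_zero u hu)
        (fun s hs => hfeas u hu s hs) hS hnull t ht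
      rw [h1, hconv u hu t ht]
    refine ⟨hfp, fun W hW hWfp u hu t ht => ?_⟩
    exact aux_uniqueness T hT X F γ k hF Y W hY hW hfp hWfp u hu t ht
end

section
/- Let T > 0 and let F be a reflection kernel with bounded parameters (γ, k). Then for all X¹, X² ∈ D_T(L1): ‖Ψ_F(X¹) − Ψ_F(X²)‖_{T,1} ≤ (k/(1−γ)) ‖X¹ − X²‖_{T,1}, and ‖Φ_F(X¹) − Φ_F(X²)‖_{T,1} ≤ (1 + 2k/(1−γ)) ‖X¹ − X²‖_{T,1}. -/
open MeasureTheory Set Filter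
open scoped ENNReal NNReal

noncomputable section

/-- `Y = Ψ_F(X)`: `Y` is the (unique) fixed point of `π_{X,F}` in `D_T^↑(L1)`. -/
def IsRegulator (T : ℝ) (X F Y : ℝ → ℝ → ℝ) : Prop :=
  MemDTup T Y ∧ ∀ u ∈ Icc (0:ℝ) 1, ∀ t ∈ Icc (0:ℝ) T, Y u t = piMap X F Y u t

end

noncomputable section

def csup (T : ℝ) (f : ℝ → ℝ → ℝ) (u : ℝ) : ℝ≥0∞ :=
  ENNReal.ofReal |f u T| ⊔ ⨆ q : ℚ, if (q:ℝ) ∈ Icc (0:ℝ) T then ENNReal.ofReal |f u (q:ℝ)| else 0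

lemma ofReal_abs_le_pathSup {T : ℝ} {f : ℝ → ℝ → ℝ} {u t : ℝ} (ht : t ∈ Icc (0:ℝ) T) :
    ENNReal.ofReal |f u t| ≤ pathSup T f u := by
  rw [pathSup]; exact le_biSup (fun t => ENNReal.ofReal |f u t|) ht

lemma csup_measurable {T : ℝ} {f : ℝ → ℝ → ℝ} (hT : 0 ≤ T)
    (hm : ∀ t ∈ Icc (0:ℝ) T, Measurable fun u => f u t) : Measurable (csup T f) := by
  show Measurable ((fun u => ENNReal.ofReal |f u T|) ⊔ fun u => ⨆ q : ℚ,
    if (q:ℝ) ∈ Icc (0:ℝ) T then ENNReal.ofReal |f u (q:ℝ)| else 0)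
  apply Measurable.sup
  · exact ((hm T ⟨hT, le_rfl⟩).abs).ennreal_ofReal
  · apply Measurable.iSup
    intro q
    split_ifs with h
    · exact ((hm q h).abs).ennreal_ofReal
    · exact measurable_const

lemma pathSup_eq_csup {T : ℝ} {f : ℝ → ℝ → ℝ} {u : ℝ} (hT : 0 ≤ T)
    (hrc : ∀ t ∈ Ico (0:ℝ) T, ContinuousWithinAt (f u) (Ici t) t) :
    pathSup T f u = csup T f u := by
  apply le_antisymm
  · apply iSup₂_le
    intro t ht
    rcases eq_or_lt_of_le ht.2 with rfl | htT
    · exact le_sup_left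
    · -- t < T, use right continuity
      apply ENNReal.le_of_forall_pos_le_add
      intro ε hε _
      have hc := hrc t ⟨ht.1, htT⟩
      rw [Metric.continuousWithinAt_iff] at hc
      obtain ⟨δ, hδ, hδ2⟩ := hc (ε:ℝ) (by exact_mod_cast hε)
      obtain ⟨q, hq1, hq2⟩ := exists_rat_btwn (lt_min htT (lt_add_of_pos_right t hδ))
      have hqT : (q:ℝ) < T := lt_of_lt_of_le hq2 (min_le_left _ _)
      have hq0 : (0:ℝ) ≤ q := le_of_lt (lt_of_le_of_lt ht.1 hq1)
      have hdist : dist (q:ℝ) t < δ := by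
        rw [Real.dist_eq, abs_of_pos (by linarith)]
        have := lt_of_lt_of_le hq2 (min_le_right _ _)
        linarith
      have h1 : dist (f u q) (f u t) < ε := hδ2 (le_of_lt hq1) hdist
      have h2 : |f u t| ≤ |f u (q:ℝ)| + ε := by
        have := abs_sub_abs_le_abs_sub (f u t) (f u q)
        rw [Real.dist_eq] at h1
        have : |f u t| - |f u q| ≤ |f u t - f u q| := this
        rw [abs_sub_comm] at h1
        linarith
      calc ENNReal.ofReal |f u t| ≤ ENNReal.ofReal (|f u (q:ℝ)| + ε) := ENNReal.ofReal_le_ofReal h2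
        _ = ENNReal.ofReal |f u (q:ℝ)| + ENNReal.ofReal ε := ENNReal.ofReal_add (abs_nonneg _) ε.coe_nonneg
        _ ≤ csup T f u + ε := by
            gcongr
            · refine le_trans ?_ le_sup_right
              refine le_trans ?_ (le_iSup _ q)
              have hmem : ((q:ℝ) ∈ Icc (0:ℝ) T) := ⟨hq0, le_of_lt hqT⟩
              simp only [hmem, if_true, le_refl]
            · rw [ENNReal.ofReal_coe_nnreal]
  · apply sup_le
    · rw [pathSup]; exact le_biSup (fun t => ENNReal.ofReal |f u t|) (⟨hT, le_rfl⟩ : T ∈ Icc (0:ℝ) T)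
    · apply iSup_le
      intro q
      split_ifs with h
      · rw [pathSup]; exact le_biSup (fun t => ENNReal.ofReal |f u t|) h
      · exact zero_le

lemma abs_iSup_sub_iSup_le {ι : Sort*} [Nonempty ι] {m1 m2 : ι → ℝ} {C : ℝ}
    (h : ∀ i, |m1 i - m2 i| ≤ C) : |(⨆ i, m1 i) - ⨆ i, m2 i| ≤ C := by
  have hC : 0 ≤ C := le_trans (abs_nonneg _) (h (Classical.arbitrary ι))
  by_cases hb : BddAbove (Set.range m1)
  · have hb2 : BddAbove (Set.range m2) := by
      obtain ⟨M, hM⟩ := hb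
      refine ⟨M + C, ?_⟩
      rintro x ⟨i, rfl⟩
      have := h i
      have hm : m1 i ≤ M := hM ⟨i, rfl⟩
      rw [abs_sub_le_iff] at this
      linarith [this.2]
    rw [abs_sub_le_iff]
    constructor
    · rw [sub_le_iff_le_add]
      apply ciSup_le
      intro i
      have h1 := (abs_sub_le_iff.1 (h i)).1
      have h2 := le_ciSup hb2 i
      linarith
    · rw [sub_le_iff_le_add]
      apply ciSup_le
      intro i
      have h1 := (abs_sub_le_iff.1 (h i)).2
      have h2 := le_ciSup hb i
      linarith
  · have hb2 : ¬ BddAbove (Set.range m2) := by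
      intro hb2
      apply hb
      obtain ⟨M, hM⟩ := hb2
      refine ⟨M + C, ?_⟩
      rintro x ⟨i, rfl⟩
      have := (abs_sub_le_iff.1 (h i)).1
      have hm : m2 i ≤ M := hM ⟨i, rfl⟩
      linarith
    rw [Real.iSup_of_not_bddAbove hb, Real.iSup_of_not_bddAbove hb2]
    simpa using hC

def Gop (F : ℝ → ℝ → ℝ) (h : ℝ → ℝ≥0∞) : ℝ → ℝ≥0∞ :=
  fun u => ∫⁻ v in Icc (0:ℝ) 1, ENNReal.ofReal |F u v| * h v

def Gpow (F : ℝ → ℝ → ℝ) : ℕ → (ℝ → ℝ≥0∞) → (ℝ → ℝ≥0∞)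
  | 0 => id
  | n + 1 => fun h => Gop F (Gpow F n h)

variable {F : ℝ → ℝ → ℝ} {h h1 h2 : ℝ → ℝ≥0∞}

lemma meas_absF (hF : Measurable (Function.uncurry F)) :
    Measurable fun p : ℝ × ℝ => ENNReal.ofReal |F p.1 p.2| :=
  hF.abs.ennreal_ofReal

lemma meas_absF_section (hF : Measurable (Function.uncurry F)) (u : ℝ) :
    Measurable fun v => ENNReal.ofReal |F u v| :=
  (meas_absF hF).comp (measurable_prodMk_left)

lemma meas_absF_section' (hF : Measurable (Function.uncurry F)) (v : ℝ) :
    Measurable fun u => ENNReal.ofReal |F u v| :=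
  (meas_absF hF).comp (measurable_prodMk_right)

lemma Gop_measurable (hF : Measurable (Function.uncurry F)) (hh : Measurable h) :
    Measurable (Gop F h) := by
  apply Measurable.lintegral_prod_right' (f := fun p : ℝ × ℝ => ENNReal.ofReal |F p.1 p.2| * h p.2)
  exact (meas_absF hF).mul (hh.comp measurable_snd)

lemma Gpow_measurable (hF : Measurable (Function.uncurry F)) (hh : Measurable h) (n : ℕ) :
    Measurable (Gpow F n h) := by
  induction n with
  | zero => exact hh
  | succ n ih => exact Gop_measurable hF ih

lemma Gop_mono (hle : ∀ v, h1 v ≤ h2 v) (u : ℝ) : Gop F h1 u ≤ Gop F h2 u :=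
  lintegral_mono fun v => mul_le_mul_right (hle v) _

lemma Gop_add (hF : Measurable (Function.uncurry F)) (hh1 : Measurable h1) (u : ℝ) :
    Gop F (fun v => h1 v + h2 v) u = Gop F h1 u + Gop F h2 u := by
  simp only [Gop]
  simp only [mul_add]
  rw [lintegral_add_left (f := fun v => ENNReal.ofReal |F u v| * h1 v) ((meas_absF_section hF u).mul hh1)]

lemma lintegral_Gop_le (hF : Measurable (Function.uncurry F)) (hop : kernelOpNorm F ≤ 1)
    (hh : Measurable h) :
    ∫⁻ u in Icc (0:ℝ) 1, Gop F h u ≤ ∫⁻ v in Icc (0:ℝ) 1, h v := by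
  simp only [Gop]
  rw [lintegral_lintegral_swap (((meas_absF hF).mul (hh.comp measurable_snd)).aemeasurable)]
  have : ∀ᵐ v ∂(volume.restrict (Icc (0:ℝ) 1)),
      (∫⁻ u in Icc (0:ℝ) 1, ENNReal.ofReal |F u v| * h v) ≤ h v := by
    filter_upwards [ae_restrict_mem measurableSet_Icc] with v hv
    rw [lintegral_mul_const _ (meas_absF_section' hF v)]
    calc (∫⁻ u in Icc (0:ℝ) 1, ENNReal.ofReal |F u v|) * h v
        ≤ 1 * h v := by
          gcongr
          refine le_trans ?_ hop
          rw [kernelOpNorm]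
          exact le_biSup (fun v => ∫⁻ u in Icc (0:ℝ) 1, ENNReal.ofReal |F u v|) hv
      _ = h v := one_mul _
  exact le_trans (lintegral_mono_ae this) le_rfl

lemma lintegral_Gpow_le (hF : Measurable (Function.uncurry F)) (hop : kernelOpNorm F ≤ 1)
    (hh : Measurable h) (n : ℕ) :
    ∫⁻ u in Icc (0:ℝ) 1, Gpow F n h u ≤ ∫⁻ v in Icc (0:ℝ) 1, h v := by
  induction n with
  | zero => exact le_rfl
  | succ n ih => exact le_trans (lintegral_Gop_le hF hop (Gpow_measurable hF hh n)) ih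

def Lker (F : ℝ → ℝ → ℝ) : ℕ → ℝ → ℝ → ℝ≥0∞
  | 0 => fun u v => ENNReal.ofReal |F u v|
  | n + 1 => fun u v => ∫⁻ w in Icc (0:ℝ) 1, ENNReal.ofReal |F u w| * Lker F n w v

lemma Lker_measurable (hF : Measurable (Function.uncurry F)) (n : ℕ) :
    Measurable (fun p : ℝ × ℝ => Lker F n p.1 p.2) := by
  induction n with
  | zero => exact meas_absF hF
  | succ n ih =>
    apply Measurable.lintegral_prod_right'
      (f := fun (q : (ℝ × ℝ) × ℝ) => ENNReal.ofReal |F q.1.1 q.2| * Lker F n q.2 q.1.2)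
    apply Measurable.mul
    · exact (meas_absF hF).comp ((measurable_fst.comp measurable_fst).prodMk measurable_snd)
    · exact ih.comp (measurable_snd.prodMk (measurable_snd.comp measurable_fst))

lemma Lker_meas_left (hF : Measurable (Function.uncurry F)) (n : ℕ) (v : ℝ) :
    Measurable fun u => Lker F n u v :=
  (Lker_measurable hF n).comp measurable_prodMk_right

lemma Lker_meas_right (hF : Measurable (Function.uncurry F)) (n : ℕ) (u : ℝ) :
    Measurable fun v => Lker F n u v :=
  (Lker_measurable hF n).comp measurable_prodMk_left

lemma lintegral_Lker_le_one (hF : Measurable (Function.uncurry F)) (hop : kernelOpNorm F ≤ 1)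
    (n : ℕ) : ∀ v ∈ Icc (0:ℝ) 1, ∫⁻ u in Icc (0:ℝ) 1, Lker F n u v ≤ 1 := by
  induction n with
  | zero =>
    intro v hv
    refine le_trans ?_ hop
    rw [kernelOpNorm]
    exact le_biSup (fun v => ∫⁻ u in Icc (0:ℝ) 1, ENNReal.ofReal |F u v|) hv
  | succ n ih =>
    intro v hv
    have hmw : Measurable fun w => Lker F n w v := Lker_meas_left hF n v
    calc ∫⁻ u in Icc (0:ℝ) 1, Lker F (n+1) u v
        = ∫⁻ w in Icc (0:ℝ) 1, ∫⁻ u in Icc (0:ℝ) 1, ENNReal.ofReal |F u w| * Lker F n w v := by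
          exact lintegral_lintegral_swap
            (((meas_absF hF).mul (hmw.comp measurable_snd)).aemeasurable)
      _ ≤ ∫⁻ w in Icc (0:ℝ) 1, Lker F n w v := by
          apply lintegral_mono_ae
          filter_upwards [ae_restrict_mem measurableSet_Icc] with w hw
          rw [lintegral_mul_const _ (meas_absF_section' hF w)]
          calc (∫⁻ u in Icc (0:ℝ) 1, ENNReal.ofReal |F u w|) * Lker F n w v
              ≤ 1 * Lker F n w v := by
                gcongr
                refine le_trans ?_ hop
                rw [kernelOpNorm]
                exact le_biSup (fun v => ∫⁻ u in Icc (0:ℝ) 1, ENNReal.ofReal |F u v|) hw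
            _ = Lker F n w v := one_mul _
      _ ≤ 1 := ih v hv

lemma Gpow_eq_Lker (hF : Measurable (Function.uncurry F)) (hh : Measurable h) (n : ℕ) (u : ℝ) :
    Gpow F (n+1) h u = ∫⁻ v in Icc (0:ℝ) 1, Lker F n u v * h v := by
  induction n generalizing u with
  | zero => rfl
  | succ n ih =>
    have hmL : Measurable fun p : ℝ × ℝ => Lker F n p.1 p.2 := Lker_measurable hF n
    calc Gpow F (n+2) h u = Gop F (Gpow F (n+1) h) u := rfl
      _ = ∫⁻ w in Icc (0:ℝ) 1, ENNReal.ofReal |F u w| * ∫⁻ v in Icc (0:ℝ) 1, Lker F n w v * h v := by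
          simp only [Gop]
          apply lintegral_congr
          intro w
          rw [ih w]
      _ = ∫⁻ w in Icc (0:ℝ) 1, ∫⁻ v in Icc (0:ℝ) 1, ENNReal.ofReal |F u w| * (Lker F n w v * h v) := by
          apply lintegral_congr
          intro w
          have hmm : Measurable fun v => Lker F n w v * h v := (Lker_meas_right hF n w).mul hh
          rw [lintegral_const_mul _ hmm]
      _ = ∫⁻ v in Icc (0:ℝ) 1, ∫⁻ w in Icc (0:ℝ) 1, ENNReal.ofReal |F u w| * (Lker F n w v * h v) := by
          apply lintegral_lintegral_swap
          apply AEMeasurable.mul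
          · exact ((meas_absF_section hF u).comp measurable_fst).aemeasurable
          · exact ((hmL.mul (hh.comp measurable_snd))).aemeasurable
      _ = ∫⁻ v in Icc (0:ℝ) 1, Lker F (n+1) u v * h v := by
          apply lintegral_congr
          intro v
          calc ∫⁻ w in Icc (0:ℝ) 1, ENNReal.ofReal |F u w| * (Lker F n w v * h v)
              = ∫⁻ w in Icc (0:ℝ) 1, (ENNReal.ofReal |F u w| * Lker F n w v) * h v := by
                apply lintegral_congr; intro w; ring
            _ = (∫⁻ w in Icc (0:ℝ) 1, ENNReal.ofReal |F u w| * Lker F n w v) * h v := by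
                have hmm : Measurable fun w => ENNReal.ofReal |F u w| * Lker F n w v :=
                  (meas_absF_section hF u).mul (Lker_meas_left hF n v)
                rw [lintegral_mul_const _ hmm]
            _ = Lker F (n+1) u v * h v := rfl

lemma kernelIter_measurable (hF : Measurable (Function.uncurry F)) (n : ℕ) :
    Measurable (Function.uncurry (kernelIter F n)) := by
  induction n with
  | zero => exact hF
  | succ n ih =>
    have : Measurable (fun q : (ℝ × ℝ) × ℝ => F q.1.1 q.2 * kernelIter F n q.2 q.1.2) := by
      apply Measurable.mul
      · exact hF.comp ((measurable_fst.comp measurable_fst).prodMk measurable_snd)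
      · exact ih.comp (measurable_snd.prodMk (measurable_snd.comp measurable_fst))
    have hsm := (this.stronglyMeasurable).integral_prod_right'
      (ν := volume.restrict (Icc (0:ℝ) 1))
    exact hsm.measurable

lemma kernelIter_ae (hF : Measurable (Function.uncurry F))
    (hnn : ∀ u ∈ Icc (0:ℝ) 1, ∀ v ∈ Icc (0:ℝ) 1, 0 ≤ F u v)
    (hop : kernelOpNorm F ≤ 1) (n : ℕ) :
    ∀ v ∈ Icc (0:ℝ) 1, ∀ᵐ u ∂(volume.restrict (Icc (0:ℝ) 1)),
      0 ≤ kernelIter F n u v ∧ ENNReal.ofReal (kernelIter F n u v) = Lker F n u v := by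
  induction n with
  | zero =>
    intro v hv
    filter_upwards [ae_restrict_mem measurableSet_Icc] with u hu
    have h0 : 0 ≤ F u v := hnn u hu v hv
    refine ⟨h0, ?_⟩
    show ENNReal.ofReal (kernelIter F 0 u v) = ENNReal.ofReal |F u v|
    rw [abs_of_nonneg h0]
    rfl
  | succ n ih =>
    intro v hv
    have IH := ih v hv
    -- key : for every u, lintegral of |F u w * Iter n w v| equals Lker (n+1) u v
    have key : ∀ u : ℝ, ∫⁻ w in Icc (0:ℝ) 1, ENNReal.ofReal |F u w * kernelIter F n w v|
        = Lker F (n+1) u v := by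
      intro u
      have : ∀ᵐ w ∂(volume.restrict (Icc (0:ℝ) 1)),
          ENNReal.ofReal |F u w * kernelIter F n w v|
            = ENNReal.ofReal |F u w| * Lker F n w v := by
        filter_upwards [IH] with w hw
        rw [abs_mul, ENNReal.ofReal_mul (abs_nonneg _), abs_of_nonneg hw.1, hw.2]
      rw [lintegral_congr_ae this]
      rfl
    have hfin : ∀ᵐ u ∂(volume.restrict (Icc (0:ℝ) 1)), Lker F (n+1) u v < ⊤ := by
      apply ae_lt_top (Lker_meas_left hF (n+1) v)
      exact ne_top_of_le_ne_top ENNReal.one_ne_top (lintegral_Lker_le_one hF hop (n+1) v hv)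
    filter_upwards [hfin, ae_restrict_mem measurableSet_Icc] with u hu1 hu2
    -- integrability
    have hmeas : Measurable fun w => F u w * kernelIter F n w v := by
      apply Measurable.mul
      · exact hF.comp measurable_prodMk_left
      · exact (kernelIter_measurable hF n).comp measurable_prodMk_right
    have hint : Integrable (fun w => F u w * kernelIter F n w v)
        (volume.restrict (Icc (0:ℝ) 1)) := by
      refine ⟨hmeas.aestronglyMeasurable, ?_⟩
      rw [HasFiniteIntegral]
      have : ∀ w : ℝ, ‖F u w * kernelIter F n w v‖ₑ
          = ENNReal.ofReal |F u w * kernelIter F n w v| := fun w => Real.enorm_eq_ofReal_abs _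
      rw [lintegral_congr this, key u]
      exact hu1
    have hnnae : 0 ≤ᵐ[volume.restrict (Icc (0:ℝ) 1)] fun w => F u w * kernelIter F n w v := by
      filter_upwards [IH, ae_restrict_mem measurableSet_Icc] with w hw hw2
      exact mul_nonneg (hnn u hu2 w hw2) hw.1
    have heq : kernelIter F (n+1) u v = ∫ w in Icc (0:ℝ) 1, F u w * kernelIter F n w v := rfl
    constructor
    · rw [heq]
      exact integral_nonneg_of_ae hnnae
    · rw [heq, ofReal_integral_eq_lintegral_ofReal hint hnnae, ← key u]
      apply lintegral_congr_ae
      filter_upwards [hnnae] with w hw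
      rw [abs_of_nonneg hw]

lemma lintegral_Lker_gamma (hF : Measurable (Function.uncurry F))
    (hnn : ∀ u ∈ Icc (0:ℝ) 1, ∀ v ∈ Icc (0:ℝ) 1, 0 ≤ F u v)
    (hop : kernelOpNorm F ≤ 1) {γ : ℝ} {m : ℕ}
    (hiter : kernelOpNorm (kernelIter F m) ≤ ENNReal.ofReal γ) :
    ∀ v ∈ Icc (0:ℝ) 1, ∫⁻ u in Icc (0:ℝ) 1, Lker F m u v ≤ ENNReal.ofReal γ := by
  intro v hv
  have hae := kernelIter_ae hF hnn hop m v hv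
  have : ∫⁻ u in Icc (0:ℝ) 1, Lker F m u v
      = ∫⁻ u in Icc (0:ℝ) 1, ENNReal.ofReal |kernelIter F m u v| := by
    apply lintegral_congr_ae
    filter_upwards [hae] with u hu
    rw [← hu.2, abs_of_nonneg hu.1]
  rw [this]
  refine le_trans ?_ hiter
  rw [kernelOpNorm]
  exact le_biSup (fun v => ∫⁻ u in Icc (0:ℝ) 1, ENNReal.ofReal |kernelIter F m u v|) hv

lemma ofReal_kernelApply_diff_le (hF : Measurable (Function.uncurry F))
    {Y1 Y2 : ℝ → ℝ → ℝ} {s : ℝ}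
    (h1 : Measurable fun v => Y1 v s) (h2 : Measurable fun v => Y2 v s) (u : ℝ) :
    ENNReal.ofReal |kernelApply F Y1 u s - kernelApply F Y2 u s|
      ≤ ∫⁻ v in Icc (0:ℝ) 1, ENNReal.ofReal |F u v| * ENNReal.ofReal |Y1 v s - Y2 v s| := by
  set μ := volume.restrict (Icc (0:ℝ) 1) with hμ
  set f1 : ℝ → ℝ := fun v => F u v * Y1 v s with hf1
  set f2 : ℝ → ℝ := fun v => F u v * Y2 v s with hf2
  set fd : ℝ → ℝ := fun v => F u v * (Y1 v s - Y2 v s) with hfd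
  have hFsec : Measurable fun v => F u v := hF.comp measurable_prodMk_left
  have hmd : Measurable fd := hFsec.mul (h1.sub h2)
  have hRHS : (∫⁻ v in Icc (0:ℝ) 1, ENNReal.ofReal |F u v| * ENNReal.ofReal |Y1 v s - Y2 v s|)
      = ∫⁻ v, ENNReal.ofReal |fd v| ∂μ := by
    apply lintegral_congr
    intro v
    rw [hfd, abs_mul, ENNReal.ofReal_mul (abs_nonneg _)]
  rw [hRHS]
  have hsub : ∀ v, fd v = f1 v - f2 v := by intro v; simp [hf1, hf2, hfd]; ring
  by_cases hI1 : Integrable f1 μ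
  · by_cases hI2 : Integrable f2 μ
    · -- both integrable
      have hId : Integrable fd μ := by
        have := hI1.sub hI2
        apply this.congr
        filter_upwards with v
        rw [hsub v]
        simp
      have heq : kernelApply F Y1 u s - kernelApply F Y2 u s = ∫ v, fd v ∂μ := by
        show (∫ v, f1 v ∂μ) - (∫ v, f2 v ∂μ) = ∫ v, fd v ∂μ
        rw [← integral_sub hI1 hI2]
        apply integral_congr_ae
        filter_upwards with v
        rw [hsub v]
      rw [heq]
      calc ENNReal.ofReal |∫ v, fd v ∂μ| ≤ ENNReal.ofReal (∫ v, |fd v| ∂μ) := by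
            apply ENNReal.ofReal_le_ofReal
            simpa [Real.norm_eq_abs] using MeasureTheory.norm_integral_le_integral_norm (μ := μ) fd
        _ = ∫⁻ v, ENNReal.ofReal |fd v| ∂μ := by
            exact ofReal_integral_eq_lintegral_ofReal hId.abs
              (Filter.Eventually.of_forall fun v => abs_nonneg _)
    · -- f1 integrable, f2 not: fd not integrable, RHS = ⊤
      have hnd : ¬ Integrable fd μ := by
        intro hId
        apply hI2
        have : Integrable (fun v => f1 v - fd v) μ := hI1.sub hId
        apply this.congr
        filter_upwards with v
        rw [hsub v]; ring
      have : ∫⁻ v, ENNReal.ofReal |fd v| ∂μ = ⊤ := by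
        by_contra hne
        apply hnd
        refine ⟨hmd.aestronglyMeasurable, ?_⟩
        rw [HasFiniteIntegral]
        have heq : ∀ v : ℝ, ‖fd v‖ₑ = ENNReal.ofReal |fd v| :=
          fun v => Real.enorm_eq_ofReal_abs _
        rw [lintegral_congr heq]
        exact lt_top_iff_ne_top.2 hne
      rw [this]
      exact le_top
  · by_cases hI2 : Integrable f2 μ
    · -- symmetric
      have hnd : ¬ Integrable fd μ := by
        intro hId
        apply hI1
        have : Integrable (fun v => f2 v + fd v) μ := hI2.add hId
        apply this.congr
        filter_upwards with v
        rw [hsub v]; ring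
      have : ∫⁻ v, ENNReal.ofReal |fd v| ∂μ = ⊤ := by
        by_contra hne
        apply hnd
        refine ⟨hmd.aestronglyMeasurable, ?_⟩
        rw [HasFiniteIntegral]
        have heq : ∀ v : ℝ, ‖fd v‖ₑ = ENNReal.ofReal |fd v| :=
          fun v => Real.enorm_eq_ofReal_abs _
        rw [lintegral_congr heq]
        exact lt_top_iff_ne_top.2 hne
      rw [this]
      exact le_top
    · -- neither integrable: both integrals are 0
      have e1 : kernelApply F Y1 u s = 0 := integral_undef hI1
      have e2 : kernelApply F Y2 u s = 0 := integral_undef hI2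
      rw [e1, e2]
      simp

lemma Gpow_mono (hle : ∀ v, h1 v ≤ h2 v) (n : ℕ) (u : ℝ) : Gpow F n h1 u ≤ Gpow F n h2 u := by
  induction n generalizing u with
  | zero => exact hle u
  | succ n ih => exact Gop_mono (fun v => ih v) u

lemma Gpow_add (hF : Measurable (Function.uncurry F)) (hh1 : Measurable h1)
    (hh2 : Measurable h2) (n : ℕ) (u : ℝ) :
    Gpow F n (fun v => h1 v + h2 v) u = Gpow F n h1 u + Gpow F n h2 u := by
  induction n generalizing u with
  | zero => rfl
  | succ n ih =>
    show Gop F (Gpow F n fun v => h1 v + h2 v) u = Gop F (Gpow F n h1) u + Gop F (Gpow F n h2) u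
    rw [← Gop_add hF (Gpow_measurable hF hh1 n)]
    apply lintegral_congr
    intro v
    rw [ih v]

lemma Gpow_comm (n : ℕ) (u : ℝ) : Gpow F n (Gop F h) u = Gpow F (n+1) h u := by
  induction n generalizing u with
  | zero => rfl
  | succ n ih =>
    show Gop F (Gpow F n (Gop F h)) u = Gop F (Gpow F (n+1) h) u
    apply lintegral_congr
    intro v
    rw [ih v]

end

/-- Lipschitz continuity of the regulator `Ψ_F` and the reflected process
`Φ_F` in the free process. -/
theorem reflection_map_lipschitz
    (T : ℝ) (hT : 0 < T) (F : ℝ → ℝ → ℝ) (γ : ℝ) (k : ℕ) (hF : IsReflKernel F γ k)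
    (X1 X2 Y1 Y2 : ℝ → ℝ → ℝ) (hX1 : MemDT T X1) (hX2 : MemDT T X2)
    (hY1 : IsRegulator T X1 F Y1) (hY2 : IsRegulator T X2 F Y2) :
    TNorm T (fun u t => Y1 u t - Y2 u t)
      ≤ ENNReal.ofReal ((k : ℝ) / (1 - γ)) * TNorm T (fun u t => X1 u t - X2 u t) ∧
    TNorm T (fun u t => (X1 u t + Y1 u t - kernelApply F Y1 u t)
        - (X2 u t + Y2 u t - kernelApply F Y2 u t))
      ≤ ENNReal.ofReal (1 + 2 * (k : ℝ) / (1 - γ))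
          * TNorm T (fun u t => X1 u t - X2 u t) := by
  simp only [TNorm]
  obtain ⟨hY1up, hY1fix⟩ := hY1
  obtain ⟨hY2up, hY2fix⟩ := hY2
  have hFm := hF.meas
  set DY : ℝ → ℝ → ℝ := fun u t => Y1 u t - Y2 u t with hDYdef
  set DX : ℝ → ℝ → ℝ := fun u t => X1 u t - X2 u t with hDXdef
  -- slice measurability
  have hmDY : ∀ t ∈ Icc (0:ℝ) T, Measurable fun u => DY u t := fun t ht =>
    (hY1up.memDT.meas t ht).sub (hY2up.memDT.meas t ht)
  have hmDX : ∀ t ∈ Icc (0:ℝ) T, Measurable fun u => DX u t := fun t ht =>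
    (hX1.meas t ht).sub (hX2.meas t ht)
  -- right continuity
  have hrcDY : ∀ u ∈ Icc (0:ℝ) 1, ∀ t ∈ Ico (0:ℝ) T, ContinuousWithinAt (DY u) (Ici t) t :=
    fun u hu t ht => (hY1up.memDT.rightCont u hu t ht).sub (hY2up.memDT.rightCont u hu t ht)
  have hrcDX : ∀ u ∈ Icc (0:ℝ) 1, ∀ t ∈ Ico (0:ℝ) T, ContinuousWithinAt (DX u) (Ici t) t :=
    fun u hu t ht => (hX1.rightCont u hu t ht).sub (hX2.rightCont u hu t ht)
  set A : ℝ → ℝ≥0∞ := (Icc (0:ℝ) 1).indicator (csup T DY) with hAdef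
  set B : ℝ → ℝ≥0∞ := (Icc (0:ℝ) 1).indicator (csup T DX) with hBdef
  have hmA : Measurable A := (csup_measurable hT.le hmDY).indicator measurableSet_Icc
  have hmB : Measurable B := (csup_measurable hT.le hmDX).indicator measurableSet_Icc
  have hAeq : ∀ u ∈ Icc (0:ℝ) 1, A u = pathSup T DY u := by
    intro u hu
    rw [hAdef, indicator_of_mem hu, pathSup_eq_csup hT.le (hrcDY u hu)]
  have hBeq : ∀ u ∈ Icc (0:ℝ) 1, B u = pathSup T DX u := by
    intro u hu
    rw [hBdef, indicator_of_mem hu, pathSup_eq_csup hT.le (hrcDX u hu)]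
  have ha_eq : (∫⁻ u in Icc (0:ℝ) 1, pathSup T DY u) = ∫⁻ u in Icc (0:ℝ) 1, A u :=
    (setLIntegral_congr_fun measurableSet_Icc
      (fun u hu => (hAeq u hu).symm))
  have hb_eq : (∫⁻ u in Icc (0:ℝ) 1, pathSup T DX u) = ∫⁻ u in Icc (0:ℝ) 1, B u :=
    (setLIntegral_congr_fun measurableSet_Icc
      (fun u hu => (hBeq u hu).symm))
  set a : ℝ≥0∞ := ∫⁻ u in Icc (0:ℝ) 1, A u with hadef
  set b : ℝ≥0∞ := ∫⁻ u in Icc (0:ℝ) 1, B u with hbdef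
  -- kernelApply difference bound
  have hkd : ∀ u : ℝ, ∀ s ∈ Icc (0:ℝ) T,
      ENNReal.ofReal |kernelApply F Y1 u s - kernelApply F Y2 u s| ≤ Gop F A u := by
    intro u s hs
    refine le_trans (ofReal_kernelApply_diff_le hFm
      (hY1up.memDT.meas s hs) (hY2up.memDT.meas s hs) u) ?_
    rw [Gop]
    apply lintegral_mono_ae
    filter_upwards [ae_restrict_mem measurableSet_Icc] with v hv
    apply mul_le_mul_right
    rw [hAeq v hv]
    exact ofReal_abs_le_pathSup hs
  have hDXb : ∀ u ∈ Icc (0:ℝ) 1, ∀ s ∈ Icc (0:ℝ) T, ENNReal.ofReal |DX u s| ≤ B u := by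
    intro u hu s hs
    rw [hBeq u hu]
    exact ofReal_abs_le_pathSup hs
  have hDYb : ∀ u ∈ Icc (0:ℝ) 1, ∀ s ∈ Icc (0:ℝ) T, ENNReal.ofReal |DY u s| ≤ A u := by
    intro u hu s hs
    rw [hAeq u hu]
    exact ofReal_abs_le_pathSup hs
  -- key pointwise bound
  have keyA : ∀ u ∈ Icc (0:ℝ) 1, ∀ t ∈ Icc (0:ℝ) T,
      ENNReal.ofReal |DY u t| ≤ B u + Gop F A u := by
    intro u hu t ht
    set C : ℝ≥0∞ := B u + Gop F A u with hCdef
    by_cases hC : C = ⊤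
    · rw [hC]; exact le_top
    haveI : Nonempty (Icc (0:ℝ) t) := ⟨⟨0, ⟨le_rfl, ht.1⟩⟩⟩
    set m1 : Icc (0:ℝ) t → ℝ := fun s => max (-(X1 u s.1) + kernelApply F Y1 u s.1) 0 with hm1
    set m2 : Icc (0:ℝ) t → ℝ := fun s => max (-(X2 u s.1) + kernelApply F Y2 u s.1) 0 with hm2
    have hbound : ∀ s : Icc (0:ℝ) t, ENNReal.ofReal |m1 s - m2 s| ≤ C := by
      intro s
      have hsT : s.1 ∈ Icc (0:ℝ) T := ⟨s.2.1, le_trans s.2.2 ht.2⟩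
      have h1 : |m1 s - m2 s| ≤ |(-(X1 u s.1) + kernelApply F Y1 u s.1)
          - (-(X2 u s.1) + kernelApply F Y2 u s.1)| :=
        abs_max_sub_max_le_abs _ _ _
      have h2 : |(-(X1 u s.1) + kernelApply F Y1 u s.1)
          - (-(X2 u s.1) + kernelApply F Y2 u s.1)|
          ≤ |DX u s.1| + |kernelApply F Y1 u s.1 - kernelApply F Y2 u s.1| := by
        have : (-(X1 u s.1) + kernelApply F Y1 u s.1) - (-(X2 u s.1) + kernelApply F Y2 u s.1)
            = -(DX u s.1) + (kernelApply F Y1 u s.1 - kernelApply F Y2 u s.1) := by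
          simp only [hDXdef]; ring
        rw [this]
        refine le_trans (abs_add_le _ _) ?_
        rw [abs_neg]
      calc ENNReal.ofReal |m1 s - m2 s| ≤ ENNReal.ofReal (|DX u s.1|
            + |kernelApply F Y1 u s.1 - kernelApply F Y2 u s.1|) :=
            ENNReal.ofReal_le_ofReal (le_trans h1 h2)
        _ ≤ ENNReal.ofReal |DX u s.1|
            + ENNReal.ofReal |kernelApply F Y1 u s.1 - kernelApply F Y2 u s.1| :=
            ENNReal.ofReal_add_le
        _ ≤ B u + Gop F A u := add_le_add (hDXb u hu s.1 hsT) (hkd u s.1 hsT)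
    have hreal : ∀ s : Icc (0:ℝ) t, |m1 s - m2 s| ≤ C.toReal := by
      intro s
      have := ENNReal.toReal_mono hC (hbound s)
      rwa [ENNReal.toReal_ofReal (abs_nonneg _)] at this
    have hDYeq : DY u t = (⨆ s, m1 s) - ⨆ s, m2 s := by
      rw [hDYdef]
      simp only
      rw [hY1fix u hu t ht, hY2fix u hu t ht]
      rfl
    rw [hDYeq]
    exact ENNReal.ofReal_le_of_le_toReal (abs_iSup_sub_iSup_le hreal)
  -- the fixed point inequality for A
  have gA : ∀ u : ℝ, A u ≤ B u + Gop F A u := by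
    intro u
    by_cases hu : u ∈ Icc (0:ℝ) 1
    · rw [hAeq u hu, pathSup]
      exact iSup₂_le fun t ht => keyA u hu t ht
    · rw [hAdef, indicator_of_notMem hu]
      exact zero_le
  -- iterate
  have iter : ∀ n : ℕ, ∀ u : ℝ,
      A u ≤ (∑ j ∈ Finset.range n, Gpow F j B u) + Gpow F n A u := by
    intro n
    induction n with
    | zero => intro u; simp [Gpow]
    | succ n ih =>
      intro u
      have step1 : Gpow F n A u ≤ Gpow F n (fun w => B w + Gop F A w) u :=
        Gpow_mono gA n u
      have step2 : Gpow F n (fun w => B w + Gop F A w) u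
          = Gpow F n B u + Gpow F (n+1) A u := by
        rw [Gpow_add hFm hmB (Gop_measurable hFm hmA) n u, Gpow_comm]
      calc A u ≤ (∑ j ∈ Finset.range n, Gpow F j B u) + Gpow F n A u := ih u
        _ ≤ (∑ j ∈ Finset.range n, Gpow F j B u) + (Gpow F n B u + Gpow F (n+1) A u) := by
            gcongr
            rw [← step2]; exact step1
        _ = (∑ j ∈ Finset.range (n+1), Gpow F j B u) + Gpow F (n+1) A u := by
            rw [Finset.sum_range_succ]; ring
  -- integrate
  have hGjB : ∀ j : ℕ, (∫⁻ u in Icc (0:ℝ) 1, Gpow F j B u) ≤ b :=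
    fun j => lintegral_Gpow_le hFm hF.opNorm_le_one hmB j
  have hGkA : (∫⁻ u in Icc (0:ℝ) 1, Gpow F k A u) ≤ ENNReal.ofReal γ * a := by
    have hk : k - 1 + 1 = k := Nat.succ_pred_eq_of_pos hF.k_pos
    have heq : ∀ u, Gpow F k A u = ∫⁻ v in Icc (0:ℝ) 1, Lker F (k-1) u v * A v := by
      intro u
      rw [← hk]
      exact Gpow_eq_Lker hFm hmA (k-1) u
    calc (∫⁻ u in Icc (0:ℝ) 1, Gpow F k A u)
        = ∫⁻ u in Icc (0:ℝ) 1, ∫⁻ v in Icc (0:ℝ) 1, Lker F (k-1) u v * A v := by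
          apply lintegral_congr heq
      _ = ∫⁻ v in Icc (0:ℝ) 1, ∫⁻ u in Icc (0:ℝ) 1, Lker F (k-1) u v * A v := by
          apply lintegral_lintegral_swap
          exact ((Lker_measurable hFm (k-1)).mul (hmA.comp measurable_snd)).aemeasurable
      _ ≤ ∫⁻ v in Icc (0:ℝ) 1, ENNReal.ofReal γ * A v := by
          apply lintegral_mono_ae
          filter_upwards [ae_restrict_mem measurableSet_Icc] with v hv
          rw [lintegral_mul_const _ (Lker_meas_left hFm (k-1) v)]
          exact mul_le_mul_left
            (lintegral_Lker_gamma hFm hF.nonneg hF.opNorm_le_one hF.iter_le v hv) _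
      _ = ENNReal.ofReal γ * a := lintegral_const_mul _ hmA
  have hstep : a ≤ (k : ℝ≥0∞) * b + ENNReal.ofReal γ * a := by
    calc a ≤ ∫⁻ u in Icc (0:ℝ) 1,
          ((∑ j ∈ Finset.range k, Gpow F j B u) + Gpow F k A u) :=
          lintegral_mono (iter k)
      _ = (∫⁻ u in Icc (0:ℝ) 1, ∑ j ∈ Finset.range k, Gpow F j B u)
          + ∫⁻ u in Icc (0:ℝ) 1, Gpow F k A u := by
          rw [lintegral_add_left (Finset.measurable_sum _ fun j _ => Gpow_measurable hFm hmB j)]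
      _ = (∑ j ∈ Finset.range k, ∫⁻ u in Icc (0:ℝ) 1, Gpow F j B u)
          + ∫⁻ u in Icc (0:ℝ) 1, Gpow F k A u := by
          rw [lintegral_finset_sum _ fun j _ => Gpow_measurable hFm hmB j]
      _ ≤ (∑ _j ∈ Finset.range k, b) + ENNReal.ofReal γ * a :=
          add_le_add (Finset.sum_le_sum fun j _ => hGjB j) hGkA
      _ = (k : ℝ≥0∞) * b + ENNReal.ofReal γ * a := by
          rw [Finset.sum_const, Finset.card_range, nsmul_eq_mul]
  -- finiteness of a
  have ha_fin : a ≠ ⊤ := by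
    have hbd : ∀ u ∈ Icc (0:ℝ) 1, A u ≤ csup T Y1 u + csup T Y2 u := by
      intro u hu
      rw [hAeq u hu, pathSup]
      apply iSup₂_le
      intro t ht
      calc ENNReal.ofReal |DY u t| ≤ ENNReal.ofReal (|Y1 u t| + |Y2 u t|) :=
            ENNReal.ofReal_le_ofReal (abs_sub _ _)
        _ ≤ ENNReal.ofReal |Y1 u t| + ENNReal.ofReal |Y2 u t| := ENNReal.ofReal_add_le
        _ ≤ csup T Y1 u + csup T Y2 u := by
            gcongr
            · rw [← pathSup_eq_csup hT.le (hY1up.memDT.rightCont u hu)]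
              exact ofReal_abs_le_pathSup ht
            · rw [← pathSup_eq_csup hT.le (hY2up.memDT.rightCont u hu)]
              exact ofReal_abs_le_pathSup ht
    have h1 : a ≤ (∫⁻ u in Icc (0:ℝ) 1, csup T Y1 u) + ∫⁻ u in Icc (0:ℝ) 1, csup T Y2 u := by
      rw [← lintegral_add_left (csup_measurable hT.le hY1up.memDT.meas)]
      refine le_trans (lintegral_mono_ae ?_) le_rfl
      filter_upwards [ae_restrict_mem measurableSet_Icc] with u hu
      exact hbd u hu
    have h2 : (∫⁻ u in Icc (0:ℝ) 1, csup T Y1 u) = ∫⁻ u in Icc (0:ℝ) 1, pathSup T Y1 u :=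
      (setLIntegral_congr_fun measurableSet_Icc (fun u hu =>
        (pathSup_eq_csup hT.le (hY1up.memDT.rightCont u hu)).symm))
    have h3 : (∫⁻ u in Icc (0:ℝ) 1, csup T Y2 u) = ∫⁻ u in Icc (0:ℝ) 1, pathSup T Y2 u :=
      (setLIntegral_congr_fun measurableSet_Icc (fun u hu =>
        (pathSup_eq_csup hT.le (hY2up.memDT.rightCont u hu)).symm))
    rw [h2, h3] at h1
    exact ne_top_of_le_ne_top (ENNReal.add_ne_top.2 ⟨hY1up.memDT.finite, hY2up.memDT.finite⟩) h1
  -- arithmetic conclusion for part 1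
  have hγ0 : 0 < γ := hF.gamma_mem.1
  have hγ1 : γ < 1 := hF.gamma_mem.2
  have h1γ : 0 < 1 - γ := by linarith
  have hk1 : (1:ℝ) ≤ (k:ℝ) := by exact_mod_cast hF.k_pos
  have hcoef_pos : 0 < (k:ℝ) / (1 - γ) := div_pos (by linarith) h1γ
  have part1 : a ≤ ENNReal.ofReal ((k : ℝ) / (1 - γ)) * b := by
    by_cases hb : b = ⊤
    · rw [hb, ENNReal.mul_top]
      · exact le_top
      · simpa using hcoef_pos
    · have hka : (k : ℝ≥0∞) * b ≠ ⊤ := ENNReal.mul_ne_top (by simp) hb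
      have hga : ENNReal.ofReal γ * a ≠ ⊤ := ENNReal.mul_ne_top ENNReal.ofReal_ne_top ha_fin
      have htr := ENNReal.toReal_mono (ENNReal.add_ne_top.2 ⟨hka, hga⟩) hstep
      rw [ENNReal.toReal_add hka hga, ENNReal.toReal_mul, ENNReal.toReal_mul,
        ENNReal.toReal_ofReal hγ0.le, ENNReal.toReal_natCast] at htr
      have hreal : a.toReal ≤ ((k:ℝ) / (1 - γ)) * b.toReal := by
        rw [div_mul_eq_mul_div, le_div_iff₀ h1γ]
        nlinarith [ENNReal.toReal_nonneg (a := a)]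
      calc a = ENNReal.ofReal a.toReal := (ENNReal.ofReal_toReal ha_fin).symm
        _ ≤ ENNReal.ofReal (((k:ℝ) / (1 - γ)) * b.toReal) := ENNReal.ofReal_le_ofReal hreal
        _ = ENNReal.ofReal ((k:ℝ) / (1 - γ)) * ENNReal.ofReal b.toReal := by
            rw [ENNReal.ofReal_mul hcoef_pos.le]
        _ = ENNReal.ofReal ((k:ℝ) / (1 - γ)) * b := by rw [ENNReal.ofReal_toReal hb]
  constructor
  · rw [ha_eq, hb_eq]
    exact part1
  · -- part 2
    set Φ : ℝ → ℝ → ℝ := fun u t => (X1 u t + Y1 u t - kernelApply F Y1 u t)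
        - (X2 u t + Y2 u t - kernelApply F Y2 u t) with hΦdef
    have hptw : ∀ u ∈ Icc (0:ℝ) 1, pathSup T Φ u ≤ B u + A u + Gop F A u := by
      intro u hu
      rw [pathSup]
      apply iSup₂_le
      intro t ht
      have habs : |Φ u t| ≤ |DX u t| + |DY u t|
          + |kernelApply F Y1 u t - kernelApply F Y2 u t| := by
        have : Φ u t = DX u t + DY u t
            - (kernelApply F Y1 u t - kernelApply F Y2 u t) := by
          simp only [hΦdef, hDXdef, hDYdef]; ring
        rw [this]
        refine le_trans (abs_sub _ _) ?_
        gcongr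
        exact abs_add_le _ _
      calc ENNReal.ofReal |Φ u t|
          ≤ ENNReal.ofReal (|DX u t| + |DY u t|
            + |kernelApply F Y1 u t - kernelApply F Y2 u t|) :=
            ENNReal.ofReal_le_ofReal habs
        _ ≤ ENNReal.ofReal (|DX u t| + |DY u t|)
            + ENNReal.ofReal |kernelApply F Y1 u t - kernelApply F Y2 u t| :=
            ENNReal.ofReal_add_le
        _ ≤ ENNReal.ofReal |DX u t| + ENNReal.ofReal |DY u t|
            + ENNReal.ofReal |kernelApply F Y1 u t - kernelApply F Y2 u t| := by
            gcongr
            exact ENNReal.ofReal_add_le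
        _ ≤ B u + A u + Gop F A u := by
            gcongr
            exacts [hDXb u hu t ht, hDYb u hu t ht, hkd u t ht]
    have hint : (∫⁻ u in Icc (0:ℝ) 1, pathSup T Φ u)
        ≤ ∫⁻ u in Icc (0:ℝ) 1, (B u + A u + Gop F A u) := by
      apply lintegral_mono_ae
      filter_upwards [ae_restrict_mem measurableSet_Icc] with u hu
      exact hptw u hu
    have hsplit : (∫⁻ u in Icc (0:ℝ) 1, (B u + A u + Gop F A u))
        = b + a + ∫⁻ u in Icc (0:ℝ) 1, Gop F A u := by
      rw [lintegral_add_left (f := fun u => B u + A u) (hmB.add hmA), lintegral_add_left hmB]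
    have hGA : (∫⁻ u in Icc (0:ℝ) 1, Gop F A u) ≤ a :=
      lintegral_Gop_le hFm hF.opNorm_le_one hmA
    have final : (∫⁻ u in Icc (0:ℝ) 1, pathSup T Φ u)
        ≤ ENNReal.ofReal (1 + 2 * (k : ℝ) / (1 - γ)) * b := by
      calc (∫⁻ u in Icc (0:ℝ) 1, pathSup T Φ u) ≤ b + a + ∫⁻ u in Icc (0:ℝ) 1, Gop F A u := by
            rw [← hsplit]; exact hint
        _ ≤ b + a + a := by gcongr
        _ ≤ b + ENNReal.ofReal ((k : ℝ) / (1 - γ)) * b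
            + ENNReal.ofReal ((k : ℝ) / (1 - γ)) * b := by gcongr
        _ = (1 + (ENNReal.ofReal ((k : ℝ) / (1 - γ))
            + ENNReal.ofReal ((k : ℝ) / (1 - γ)))) * b := by ring
        _ = ENNReal.ofReal (1 + 2 * (k : ℝ) / (1 - γ)) * b := by
            rw [← ENNReal.ofReal_add hcoef_pos.le hcoef_pos.le, ← ENNReal.ofReal_one,
              ← ENNReal.ofReal_add zero_le_one (by positivity)]
            congr 2
            ring
    rw [hb_eq]
    exact final
end

section
/- Let T > 0, let F₁ be a reflection kernel with bounded parameters (γ₁, k₁) and F₂ a reflection kernel with bounded parameters (γ₂, k₂), and let X¹, X² ∈ D_T(L1). Then: (i) ‖Ψ_{F₂}(X²) − Ψ_{F₁}(X¹)‖_{T,1} ≤ (k₂/(1−γ₂)) ‖X² − X¹‖_{T,1} + (k₁ k₂ / ((1−γ₁)(1−γ₂))) ‖X¹‖_{T,1} ‖F₂ − F₁‖_op; and (ii) ‖Φ_{F₂}(X²) − Φ_{F₁}(X¹)‖_{T,1} ≤ (1 + 2k₂/(1−γ₂)) ‖X² − X¹‖_{T,1} + (2k₁k₂/((1−γ₁)(1−γ₂))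 + k₁/(1−γ₁)) ‖X¹‖_{T,1} ‖F₂ − F₁‖_op, where F₂ − F₁ denotes the kernel (u,v) ↦ F₂(u,v) − F₁(u,v). -/
open MeasureTheory Set Filter
open scoped ENNReal NNReal

noncomputable section
open scoped Topology
namespace RMJL

lemma le_pathSup {T : ℝ} {f : ℝ → ℝ → ℝ} {u t : ℝ} (ht : t ∈ Icc (0:ℝ) T) :
    ENNReal.ofReal |f u t| ≤ pathSup T f u := by
  unfold pathSup
  exact le_biSup (fun t => ENNReal.ofReal |f u t|) ht

lemma opNorm_section {F : ℝ → ℝ → ℝ} {v : ℝ} (hv : v ∈ Icc (0:ℝ) 1) :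
    ∫⁻ u in Icc (0:ℝ) 1, ENNReal.ofReal |F u v| ≤ kernelOpNorm F := by
  unfold kernelOpNorm
  exact le_biSup (fun v => ∫⁻ u in Icc (0:ℝ) 1, ENNReal.ofReal |F u v|) hv


def KE (F : ℝ → ℝ → ℝ) (g : ℝ → ℝ≥0∞) (u : ℝ) : ℝ≥0∞ :=
  ∫⁻ v in Icc (0:ℝ) 1, ENNReal.ofReal |F u v| * g v

lemma KE_congr (F : ℝ → ℝ → ℝ) {g g' : ℝ → ℝ≥0∞}
    (h : g =ᵐ[volume.restrict (Icc (0:ℝ) 1)] g') : KE F g = KE F g' := by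
  funext u
  exact lintegral_congr_ae (h.mono fun v hv => by simp only [hv])

lemma KE_mono (F : ℝ → ℝ → ℝ) {g g' : ℝ → ℝ≥0∞}
    (h : ∀ᵐ v ∂(volume.restrict (Icc (0:ℝ) 1)), g v ≤ g' v) : ∀ u, KE F g u ≤ KE F g' u := by
  intro u
  exact lintegral_mono_ae (h.mono fun v hv => mul_le_mul_right hv _)

lemma measurable_KE {F : ℝ → ℝ → ℝ} (hF : Measurable (Function.uncurry F))
    {g : ℝ → ℝ≥0∞} (hg : Measurable g) : Measurable (KE F g) := by
  have : Measurable fun p : ℝ × ℝ => ENNReal.ofReal |F p.1 p.2| * g p.2 :=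
    (hF.abs.ennreal_ofReal).mul (hg.comp measurable_snd)
  exact this.lintegral_prod_right'


lemma lintegral_KE_le {F : ℝ → ℝ → ℝ} (hF : Measurable (Function.uncurry F))
    {g : ℝ → ℝ≥0∞} (hg : Measurable g) :
    ∫⁻ u in Icc (0:ℝ) 1, KE F g u ≤ kernelOpNorm F * ∫⁻ v in Icc (0:ℝ) 1, g v := by
  have hmeas : Measurable fun p : ℝ × ℝ => ENNReal.ofReal |F p.1 p.2| * g p.2 :=
    (hF.abs.ennreal_ofReal).mul (hg.comp measurable_snd)
  have hswap : ∫⁻ u in Icc (0:ℝ) 1, KE F g u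
      = ∫⁻ v in Icc (0:ℝ) 1, ∫⁻ u in Icc (0:ℝ) 1, ENNReal.ofReal |F u v| * g v := by
    exact lintegral_lintegral_swap hmeas.aemeasurable
  rw [hswap]
  have h1 : ∀ v ∈ Icc (0:ℝ) 1, (∫⁻ u in Icc (0:ℝ) 1, ENNReal.ofReal |F u v| * g v)
      ≤ kernelOpNorm F * g v := by
    intro v hv
    have hm : Measurable fun u => ENNReal.ofReal |F u v| :=
      ((hF.comp (measurable_id.prodMk measurable_const)).abs).ennreal_ofReal
    rw [lintegral_mul_const _ hm]
    exact mul_le_mul_left (opNorm_section hv) _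
  calc ∫⁻ v in Icc (0:ℝ) 1, ∫⁻ u in Icc (0:ℝ) 1, ENNReal.ofReal |F u v| * g v
      ≤ ∫⁻ v in Icc (0:ℝ) 1, kernelOpNorm F * g v := by
        refine lintegral_mono_ae ?_
        exact (ae_restrict_iff' measurableSet_Icc).2 (ae_of_all _ h1)
    _ = kernelOpNorm F * ∫⁻ v in Icc (0:ℝ) 1, g v := lintegral_const_mul _ hg



def EIter (F : ℝ → ℝ → ℝ) : ℕ → ℝ → ℝ → ℝ≥0∞
  | 0 => fun u v => ENNReal.ofReal |F u v|
  | n + 1 => fun u v => ∫⁻ w in Icc (0:ℝ) 1, ENNReal.ofReal |F u w| * EIter F n w v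

lemma measurable_EIter {F : ℝ → ℝ → ℝ} (hF : Measurable (Function.uncurry F)) :
    ∀ n, Measurable (fun p : ℝ × ℝ => EIter F n p.1 p.2) := by
  intro n
  induction n with
  | zero => exact hF.abs.ennreal_ofReal
  | succ n ih =>
      have : Measurable fun q : (ℝ × ℝ) × ℝ =>
          ENNReal.ofReal |F q.1.1 q.2| * EIter F n q.2 q.1.2 := by
        refine Measurable.mul ?_ ?_
        · exact (hF.comp ((measurable_fst.comp measurable_fst).prodMk measurable_snd)).abs.ennreal_ofReal
        · exact ih.comp (measurable_snd.prodMk (measurable_snd.comp measurable_fst))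
      exact this.lintegral_prod_right'

lemma measurable_kernelIter {F : ℝ → ℝ → ℝ} (hF : Measurable (Function.uncurry F)) :
    ∀ n, Measurable (Function.uncurry (kernelIter F n)) := by
  intro n
  induction n with
  | zero => exact hF
  | succ n ih =>
      have h : StronglyMeasurable fun q : (ℝ × ℝ) × ℝ =>
          F q.1.1 q.2 * kernelIter F n q.2 q.1.2 := by
        refine Measurable.stronglyMeasurable (Measurable.mul ?_ ?_)
        · exact hF.comp ((measurable_fst.comp measurable_fst).prodMk measurable_snd)
        · exact ih.comp (measurable_snd.prodMk (measurable_snd.comp measurable_fst))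
      exact h.integral_prod_right'.measurable

lemma kernelIter_nonneg {F : ℝ → ℝ → ℝ}
    (hnn : ∀ u ∈ Icc (0:ℝ) 1, ∀ v ∈ Icc (0:ℝ) 1, 0 ≤ F u v) :
    ∀ n, ∀ u ∈ Icc (0:ℝ) 1, ∀ v ∈ Icc (0:ℝ) 1, 0 ≤ kernelIter F n u v := by
  intro n
  induction n with
  | zero => exact hnn
  | succ n ih =>
      intro u hu v hv
      exact setIntegral_nonneg measurableSet_Icc fun w hw =>
        mul_nonneg (hnn u hu w hw) (ih w hw v hv)

lemma lint_EIter_succ {F : ℝ → ℝ → ℝ} (hF : Measurable (Function.uncurry F)) (n : ℕ) (v : ℝ) :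
    ∫⁻ u in Icc (0:ℝ) 1, EIter F (n+1) u v
      = ∫⁻ w in Icc (0:ℝ) 1, (∫⁻ u in Icc (0:ℝ) 1, ENNReal.ofReal |F u w|) * EIter F n w v := by
  have hmeas : Measurable fun p : ℝ × ℝ => ENNReal.ofReal |F p.1 p.2| * EIter F n p.2 v := by
    refine Measurable.mul (hF.abs.ennreal_ofReal) ?_
    exact (measurable_EIter hF n).comp (measurable_snd.prodMk measurable_const)
  have := lintegral_lintegral_swap (μ := volume.restrict (Icc (0:ℝ) 1))
    (ν := volume.restrict (Icc (0:ℝ) 1))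
    (f := fun u w => ENNReal.ofReal |F u w| * EIter F n w v) hmeas.aemeasurable
  simp only [EIter]
  rw [this]
  refine lintegral_congr fun w => ?_
  exact lintegral_mul_const _ ((hF.comp (measurable_id.prodMk measurable_const)).abs.ennreal_ofReal)



lemma main_ind {F : ℝ → ℝ → ℝ} (hF : Measurable (Function.uncurry F))
    (hnn : ∀ u ∈ Icc (0:ℝ) 1, ∀ v ∈ Icc (0:ℝ) 1, 0 ≤ F u v)
    (hop : kernelOpNorm F ≤ 1) :
    ∀ n, (∀ v ∈ Icc (0:ℝ) 1, ∀ᵐ u ∂(volume.restrict (Icc (0:ℝ) 1)),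
        EIter F n u v = ENNReal.ofReal (kernelIter F n u v))
      ∧ kernelOpNorm (kernelIter F n) ≤ 1 := by
  intro n
  induction n with
  | zero =>
    refine ⟨fun v hv => ?_, hop⟩
    filter_upwards [ae_restrict_mem measurableSet_Icc] with u hu
    show ENNReal.ofReal |F u v| = ENNReal.ofReal (kernelIter F 0 u v)
    rw [abs_of_nonneg (hnn u hu v hv)]; rfl
  | succ n ih =>
    obtain ⟨Pn, Rn⟩ := ih
    have Ln : ∀ v ∈ Icc (0:ℝ) 1, ∫⁻ u in Icc (0:ℝ) 1, EIter F n u v ≤ 1 := by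
      intro v hv
      rw [lintegral_congr_ae (Pn v hv)]
      calc ∫⁻ u in Icc (0:ℝ) 1, ENNReal.ofReal (kernelIter F n u v)
          ≤ ∫⁻ u in Icc (0:ℝ) 1, ENNReal.ofReal |kernelIter F n u v| :=
            lintegral_mono fun u => ENNReal.ofReal_le_ofReal (le_abs_self _)
        _ ≤ kernelOpNorm (kernelIter F n) := opNorm_section hv
        _ ≤ 1 := Rn
    have Lsucc : ∀ v ∈ Icc (0:ℝ) 1, ∫⁻ u in Icc (0:ℝ) 1, EIter F (n+1) u v ≤ 1 := by
      intro v hv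
      rw [lint_EIter_succ hF n v]
      calc ∫⁻ w in Icc (0:ℝ) 1, (∫⁻ u in Icc (0:ℝ) 1, ENNReal.ofReal |F u w|) * EIter F n w v
          ≤ ∫⁻ w in Icc (0:ℝ) 1, 1 * EIter F n w v := by
            refine lintegral_mono_ae ?_
            refine (ae_restrict_iff' measurableSet_Icc).2 (ae_of_all _ fun w hw => ?_)
            exact mul_le_mul_left ((opNorm_section hw).trans hop) _
        _ = ∫⁻ w in Icc (0:ℝ) 1, EIter F n w v := by simp
        _ ≤ 1 := Ln v hv
    have Psucc : ∀ v ∈ Icc (0:ℝ) 1, ∀ᵐ u ∂(volume.restrict (Icc (0:ℝ) 1)),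
        EIter F (n+1) u v = ENNReal.ofReal (kernelIter F (n+1) u v) := by
      intro v hv
      have hA : ∀ᵐ u ∂(volume.restrict (Icc (0:ℝ) 1)),
          EIter F (n+1) u v
            = ∫⁻ w in Icc (0:ℝ) 1, ENNReal.ofReal (F u w * kernelIter F n w v) := by
        filter_upwards [ae_restrict_mem measurableSet_Icc] with u hu
        show (∫⁻ w in Icc (0:ℝ) 1, ENNReal.ofReal |F u w| * EIter F n w v) = _
        refine lintegral_congr_ae ?_
        filter_upwards [Pn v hv, ae_restrict_mem measurableSet_Icc] with w hw hwI
        rw [hw, abs_of_nonneg (hnn u hu w hwI), ← ENNReal.ofReal_mul (hnn u hu w hwI)]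
      have hC : ∀ᵐ u ∂(volume.restrict (Icc (0:ℝ) 1)), EIter F (n+1) u v ≠ ⊤ := by
        have hfin : ∫⁻ u in Icc (0:ℝ) 1, EIter F (n+1) u v ≠ ⊤ :=
          ((Lsucc v hv).trans_lt ENNReal.one_lt_top).ne
        exact (ae_lt_top ((measurable_EIter hF (n+1)).comp
          (measurable_id.prodMk measurable_const)) hfin).mono fun u hu => hu.ne
      filter_upwards [hA, hC, ae_restrict_mem measurableSet_Icc] with u hAu hCu hu
      have hmw : Measurable fun w => F u w * kernelIter F n w v :=
        (hF.comp (measurable_const.prodMk measurable_id)).mul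
          ((measurable_kernelIter hF n).comp (measurable_id.prodMk measurable_const))
      have h0 : 0 ≤ᵐ[volume.restrict (Icc (0:ℝ) 1)] fun w => F u w * kernelIter F n w v := by
        filter_upwards [ae_restrict_mem measurableSet_Icc] with w hw
        exact mul_nonneg (hnn u hu w hw) (kernelIter_nonneg hnn n w hw v hv)
      have hint : Integrable (fun w => F u w * kernelIter F n w v)
          (volume.restrict (Icc (0:ℝ) 1)) := by
        refine ⟨hmw.aestronglyMeasurable, ?_⟩
        rw [hasFiniteIntegral_iff_norm]
        have : ∫⁻ w in Icc (0:ℝ) 1, ENNReal.ofReal ‖F u w * kernelIter F n w v‖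
            = EIter F (n+1) u v := by
          rw [hAu]
          refine lintegral_congr_ae (h0.mono fun w hw => ?_)
          simp only [Real.norm_eq_abs, abs_of_nonneg (show (0:ℝ) ≤ F u w * kernelIter F n w v from hw)]
        rw [this]
        exact lt_top_iff_ne_top.2 hCu
      have := ofReal_integral_eq_lintegral_ofReal hint h0
      show EIter F (n+1) u v = ENNReal.ofReal (kernelComp F (kernelIter F n) u v)
      rw [hAu]
      rw [show kernelComp F (kernelIter F n) u v
        = ∫ w in Icc (0:ℝ) 1, F u w * kernelIter F n w v from rfl, this]
    refine ⟨Psucc, ?_⟩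
    refine iSup₂_le fun v hv => ?_
    have : ∫⁻ u in Icc (0:ℝ) 1, ENNReal.ofReal |kernelIter F (n+1) u v|
        = ∫⁻ u in Icc (0:ℝ) 1, EIter F (n+1) u v := by
      refine lintegral_congr_ae ?_
      filter_upwards [Psucc v hv, ae_restrict_mem measurableSet_Icc] with u hPu hu
      rw [abs_of_nonneg (kernelIter_nonneg hnn (n+1) u hu v hv), hPu]
    rw [this]
    exact Lsucc v hv
lemma measurable_KE_iter {F : ℝ → ℝ → ℝ} (hF : Measurable (Function.uncurry F))
    {g : ℝ → ℝ≥0∞} (hg : Measurable g) : ∀ n, Measurable ((KE F)^[n] g) := by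
  intro n
  induction n with
  | zero => exact hg
  | succ n ih => rw [Function.iterate_succ_apply']; exact measurable_KE hF ih

lemma KE_iterate {F : ℝ → ℝ → ℝ} (hF : Measurable (Function.uncurry F))
    {g : ℝ → ℝ≥0∞} (hg : Measurable g) :
    ∀ n u, (KE F)^[n+1] g u = ∫⁻ v in Icc (0:ℝ) 1, EIter F n u v * g v := by
  intro n
  induction n with
  | zero => intro u; rfl
  | succ n ih =>
    intro u
    rw [Function.iterate_succ_apply']
    show (∫⁻ w in Icc (0:ℝ) 1, ENNReal.ofReal |F u w| * (KE F)^[n+1] g w) = _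
    have h1 : (∫⁻ w in Icc (0:ℝ) 1, ENNReal.ofReal |F u w| * (KE F)^[n+1] g w)
        = ∫⁻ w in Icc (0:ℝ) 1, ∫⁻ v in Icc (0:ℝ) 1,
            ENNReal.ofReal |F u w| * (EIter F n w v * g v) := by
      refine lintegral_congr fun w => ?_
      rw [ih w]
      exact (lintegral_const_mul _ (((measurable_EIter hF n).comp
        (measurable_const.prodMk measurable_id)).mul hg)).symm
    rw [h1]
    have hmeas : Measurable fun p : ℝ × ℝ =>
        ENNReal.ofReal |F u p.1| * (EIter F n p.1 p.2 * g p.2) := by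
      refine Measurable.mul ?_ (Measurable.mul ?_ ?_)
      · exact ((hF.comp (measurable_const.prodMk measurable_id)).comp measurable_fst).abs.ennreal_ofReal
      · exact measurable_EIter hF n
      · exact hg.comp measurable_snd
    rw [lintegral_lintegral_swap (μ := volume.restrict (Icc (0:ℝ) 1))
      (ν := volume.restrict (Icc (0:ℝ) 1))
      (f := fun w v => ENNReal.ofReal |F u w| * (EIter F n w v * g v)) hmeas.aemeasurable]
    refine lintegral_congr fun v => ?_
    simp_rw [← mul_assoc]
    have hm : Measurable fun w => ENNReal.ofReal |F u w| * EIter F n w v :=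
      ((hF.comp (measurable_const.prodMk measurable_id)).abs.ennreal_ofReal).mul
        ((measurable_EIter hF n).comp (measurable_id.prodMk measurable_const))
    rw [lintegral_mul_const _ hm]
    rfl

lemma lint_KE_iterate_le {F : ℝ → ℝ → ℝ} (hF : Measurable (Function.uncurry F))
    (hnn : ∀ u ∈ Icc (0:ℝ) 1, ∀ v ∈ Icc (0:ℝ) 1, 0 ≤ F u v)
    (hop : kernelOpNorm F ≤ 1)
    {g : ℝ → ℝ≥0∞} (hg : Measurable g) (n : ℕ) :
    ∫⁻ u in Icc (0:ℝ) 1, (KE F)^[n+1] g u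
      ≤ kernelOpNorm (kernelIter F n) * ∫⁻ v in Icc (0:ℝ) 1, g v := by
  have hrep : ∀ u, (KE F)^[n+1] g u = ∫⁻ v in Icc (0:ℝ) 1, EIter F n u v * g v :=
    KE_iterate hF hg n
  calc ∫⁻ u in Icc (0:ℝ) 1, (KE F)^[n+1] g u
      = ∫⁻ u in Icc (0:ℝ) 1, ∫⁻ v in Icc (0:ℝ) 1, EIter F n u v * g v :=
        lintegral_congr hrep
    _ = ∫⁻ v in Icc (0:ℝ) 1, ∫⁻ u in Icc (0:ℝ) 1, EIter F n u v * g v := by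
        refine lintegral_lintegral_swap (f := fun u v => EIter F n u v * g v) ?_
        exact ((measurable_EIter hF n).mul (hg.comp measurable_snd)).aemeasurable
    _ ≤ ∫⁻ v in Icc (0:ℝ) 1, kernelOpNorm (kernelIter F n) * g v := by
        refine lintegral_mono_ae ((ae_restrict_iff' measurableSet_Icc).2 (ae_of_all _ ?_))
        intro v hv
        have hm2 : Measurable fun u => EIter F n u v :=
          (measurable_EIter hF n).comp (measurable_id.prodMk measurable_const)
        rw [lintegral_mul_const _ hm2]
        refine mul_le_mul_left ?_ _
        rw [lintegral_congr_ae ((main_ind hF hnn hop n).1 v hv)]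
        calc ∫⁻ u in Icc (0:ℝ) 1, ENNReal.ofReal (kernelIter F n u v)
            ≤ ∫⁻ u in Icc (0:ℝ) 1, ENNReal.ofReal |kernelIter F n u v| :=
              lintegral_mono fun u => ENNReal.ofReal_le_ofReal (le_abs_self _)
          _ ≤ kernelOpNorm (kernelIter F n) := opNorm_section hv
    _ = kernelOpNorm (kernelIter F n) * ∫⁻ v in Icc (0:ℝ) 1, g v :=
        lintegral_const_mul _ hg

lemma lint_KE_iter_le_self {F : ℝ → ℝ → ℝ} (hF : Measurable (Function.uncurry F))
    (hop : kernelOpNorm F ≤ 1) {g : ℝ → ℝ≥0∞} (hg : Measurable g) (n : ℕ) :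
    ∫⁻ u in Icc (0:ℝ) 1, (KE F)^[n] g u ≤ ∫⁻ u in Icc (0:ℝ) 1, g u := by
  induction n with
  | zero => simp
  | succ n ih =>
    calc ∫⁻ u in Icc (0:ℝ) 1, (KE F)^[n+1] g u
        = ∫⁻ u in Icc (0:ℝ) 1, KE F ((KE F)^[n] g) u := by
          refine lintegral_congr fun u => ?_
          rw [Function.iterate_succ_apply']
      _ ≤ kernelOpNorm F * ∫⁻ u in Icc (0:ℝ) 1, (KE F)^[n] g u :=
          lintegral_KE_le hF (measurable_KE_iter hF hg n)
      _ ≤ 1 * ∫⁻ u in Icc (0:ℝ) 1, (KE F)^[n] g u := mul_le_mul_left hop _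
      _ = ∫⁻ u in Icc (0:ℝ) 1, (KE F)^[n] g u := one_mul _
      _ ≤ _ := ih


lemma KE_sum (F : ℝ → ℝ → ℝ) (hF : Measurable (Function.uncurry F))
    {s : Finset ℕ} {f : ℕ → ℝ → ℝ≥0∞} (hf : ∀ j ∈ s, Measurable (f j)) (u : ℝ) :
    KE F (fun w => ∑ j ∈ s, f j w) u = ∑ j ∈ s, KE F (f j) u := by
  unfold KE
  simp_rw [Finset.mul_sum]
  have hm : ∀ j ∈ s, Measurable fun v => ENNReal.ofReal |F u v| * f j v := fun j hj =>
    ((hF.comp (measurable_const.prodMk measurable_id)).abs.ennreal_ofReal).mul (hf j hj)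
  exact lintegral_finset_sum' _ fun j hj => (hm j hj).aemeasurable

lemma KE_add (F : ℝ → ℝ → ℝ) (hF : Measurable (Function.uncurry F))
    {g h : ℝ → ℝ≥0∞} (hg : Measurable g) (u : ℝ) :
    KE F (fun v => g v + h v) u = KE F g u + KE F h u := by
  unfold KE
  simp_rw [mul_add]
  have hm : Measurable fun v => ENNReal.ofReal |F u v| * g v :=
    ((hF.comp (measurable_const.prodMk measurable_id)).abs.ennreal_ofReal).mul hg
  rw [lintegral_add_left hm]

lemma ennreal_contr {D A : ℝ≥0∞} {γ : ℝ} {k : ℕ} (hγ0 : 0 < γ) (hγ1 : γ < 1) (hk : 1 ≤ k)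
    (hD : D ≠ ⊤) (h : D ≤ (k : ℝ≥0∞) * A + ENNReal.ofReal γ * D) :
    D ≤ ENNReal.ofReal ((k:ℝ)/(1-γ)) * A := by
  have hkR : (0:ℝ) < k := by exact_mod_cast hk
  have hcoef : (0:ℝ) < (k:ℝ)/(1-γ) := div_pos hkR (by linarith)
  by_cases hA : A = ⊤
  · rw [hA, ENNReal.mul_top (ENNReal.ofReal_pos.2 hcoef).ne']
    exact le_top
  · have h2 : (1 - ENNReal.ofReal γ) * D ≤ (k:ℝ≥0∞) * A := by
      rw [ENNReal.sub_mul (fun _ _ => hD), one_mul]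
      exact tsub_le_iff_right.2 h
    set c := 1 - ENNReal.ofReal γ with hc
    have hc0 : c ≠ 0 := by
      intro h0
      exact absurd (tsub_eq_zero_iff_le.1 h0) (not_le.2 (ENNReal.ofReal_lt_one.2 hγ1))
    have hcT : c ≠ ⊤ := (tsub_le_self.trans_lt ENNReal.one_lt_top).ne
    calc D = c⁻¹ * (c * D) := by rw [← mul_assoc, ENNReal.inv_mul_cancel hc0 hcT, one_mul]
      _ ≤ c⁻¹ * ((k:ℝ≥0∞) * A) := mul_le_mul_right h2 _
      _ = ENNReal.ofReal ((k:ℝ)/(1-γ)) * A := by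
          rw [← mul_assoc]
          congr 1
          have hceq : c = ENNReal.ofReal (1-γ) := by
            rw [hc, ENNReal.ofReal_sub _ hγ0.le, ENNReal.ofReal_one]
          rw [hceq, ← ENNReal.ofReal_inv_of_pos (by linarith), ← ENNReal.ofReal_natCast k,
            ← ENNReal.ofReal_mul (inv_nonneg.2 (by linarith : (0:ℝ) ≤ 1 - γ))]
          congr 1
          rw [div_eq_mul_inv, mul_comm]

lemma contraction {F : ℝ → ℝ → ℝ} {γ : ℝ} {k : ℕ}
    (hF : Measurable (Function.uncurry F))
    (hnn : ∀ u ∈ Icc (0:ℝ) 1, ∀ v ∈ Icc (0:ℝ) 1, 0 ≤ F u v)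
    (hop : kernelOpNorm F ≤ 1)
    (hγ : γ ∈ Set.Ioo (0:ℝ) 1) (hk : 1 ≤ k)
    (hiter : kernelOpNorm (kernelIter F (k-1)) ≤ ENNReal.ofReal γ)
    {d a : ℝ → ℝ≥0∞} (hd : Measurable d) (ha : Measurable a)
    (hineq : ∀ᵐ u ∂(volume.restrict (Icc (0:ℝ) 1)), d u ≤ a u + KE F d u)
    (hfin : ∫⁻ u in Icc (0:ℝ) 1, d u ≠ ⊤) :
    ∫⁻ u in Icc (0:ℝ) 1, d u
      ≤ ENNReal.ofReal ((k:ℝ) / (1 - γ)) * ∫⁻ u in Icc (0:ℝ) 1, a u := by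
  have key : ∀ n, ∀ᵐ u ∂(volume.restrict (Icc (0:ℝ) 1)),
      d u ≤ (∑ j ∈ Finset.range n, (KE F)^[j] a u) + (KE F)^[n] d u := by
    intro n
    induction n with
    | zero => simp
    | succ n ih =>
      have hKE : ∀ u, KE F d u
          ≤ KE F (fun w => (∑ j ∈ Finset.range n, (KE F)^[j] a w) + (KE F)^[n] d w) u :=
        KE_mono F ih
      filter_upwards [hineq] with u hu
      refine hu.trans ?_
      refine add_le_add_right (hKE u) _ |>.trans (le_of_eq ?_)
      rw [KE_add F hF (by exact Finset.measurable_sum _ fun j _ => measurable_KE_iter hF ha j) u,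
        KE_sum F hF (fun j _ => measurable_KE_iter hF ha j) u]
      have h1 : ∀ j, KE F ((KE F)^[j] a) u = (KE F)^[j+1] a u := fun j => by
        rw [Function.iterate_succ_apply']
      have h2 : KE F ((KE F)^[n] d) u = (KE F)^[n+1] d u := by
        rw [Function.iterate_succ_apply']
      simp_rw [h1, h2]
      rw [← add_assoc, Finset.sum_range_succ' (fun j => (KE F)^[j] a u) n]
      simp [add_comm]
  have hmain : ∫⁻ u in Icc (0:ℝ) 1, d u
      ≤ (k : ℝ≥0∞) * (∫⁻ u in Icc (0:ℝ) 1, a u)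
        + ENNReal.ofReal γ * ∫⁻ u in Icc (0:ℝ) 1, d u := by
    calc ∫⁻ u in Icc (0:ℝ) 1, d u
        ≤ ∫⁻ u in Icc (0:ℝ) 1,
            ((∑ j ∈ Finset.range k, (KE F)^[j] a u) + (KE F)^[k] d u) :=
          lintegral_mono_ae (key k)
      _ = (∑ j ∈ Finset.range k, ∫⁻ u in Icc (0:ℝ) 1, (KE F)^[j] a u)
            + ∫⁻ u in Icc (0:ℝ) 1, (KE F)^[k] d u := by
          rw [lintegral_add_left (Finset.measurable_sum _ fun j _ => measurable_KE_iter hF ha j),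
            lintegral_finset_sum' _ fun j _ => (measurable_KE_iter hF ha j).aemeasurable]
      _ ≤ (k : ℝ≥0∞) * (∫⁻ u in Icc (0:ℝ) 1, a u)
            + ENNReal.ofReal γ * ∫⁻ u in Icc (0:ℝ) 1, d u := by
          refine add_le_add ?_ ?_
          · calc (∑ j ∈ Finset.range k, ∫⁻ u in Icc (0:ℝ) 1, (KE F)^[j] a u)
                ≤ ∑ _j ∈ Finset.range k, ∫⁻ u in Icc (0:ℝ) 1, a u :=
                  Finset.sum_le_sum fun j _ => lint_KE_iter_le_self hF hop ha j
              _ = (k : ℝ≥0∞) * ∫⁻ u in Icc (0:ℝ) 1, a u := by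
                  rw [Finset.sum_const, Finset.card_range, nsmul_eq_mul]
          · have hk' : k - 1 + 1 = k := Nat.succ_pred_eq_of_pos hk
            calc ∫⁻ u in Icc (0:ℝ) 1, (KE F)^[k] d u
                = ∫⁻ u in Icc (0:ℝ) 1, (KE F)^[(k-1)+1] d u := by rw [hk']
              _ ≤ kernelOpNorm (kernelIter F (k-1)) * ∫⁻ u in Icc (0:ℝ) 1, d u :=
                  lint_KE_iterate_le hF hnn hop hd (k-1)
              _ ≤ ENNReal.ofReal γ * ∫⁻ u in Icc (0:ℝ) 1, d u :=
                  mul_le_mul_left hiter _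
  exact ennreal_contr hγ.1 hγ.2 hk hfin hmain

lemma exists_pathSup_rep {T : ℝ} (hT : 0 < T) {f : ℝ → ℝ → ℝ}
    (hrc : ∀ u ∈ Icc (0:ℝ) 1, ∀ t ∈ Ico (0:ℝ) T, ContinuousWithinAt (f u) (Ici t) t)
    (hm : ∀ t ∈ Icc (0:ℝ) T, Measurable fun u => f u t) :
    ∃ g : ℝ → ℝ≥0∞, Measurable g ∧
      (∀ᵐ u ∂(volume.restrict (Icc (0:ℝ) 1)), pathSup T f u = g u) := by
  classical
  refine ⟨fun u => ENNReal.ofReal |f u T| ⊔ ⨆ (q : ℚ),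
      (if (q:ℝ) ∈ Ico (0:ℝ) T then ENNReal.ofReal |f u (q:ℝ)| else 0), ?_, ?_⟩
  · refine Measurable.sup ((hm T (right_mem_Icc.2 hT.le)).abs.ennreal_ofReal) ?_
    refine Measurable.iSup fun q => ?_
    by_cases hq : (q:ℝ) ∈ Ico (0:ℝ) T
    · simp only [hq, if_true]
      exact (hm q ⟨hq.1, hq.2.le⟩).abs.ennreal_ofReal
    · simp only [hq, if_false]
      exact measurable_const
  · filter_upwards [ae_restrict_mem measurableSet_Icc] with u hu
    apply le_antisymm
    · refine iSup₂_le fun t ht => ?_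
      rcases ht.2.eq_or_lt with heq | htT
      · subst heq; exact le_sup_left
      · have hseq : ∀ n : ℕ, ∃ q : ℚ, t < (q:ℝ) ∧ (q:ℝ) < min T (t + 1/((n:ℝ)+1)) := by
          intro n
          refine exists_rat_btwn (lt_min htT ?_)
          have : (0:ℝ) < 1/((n:ℝ)+1) := by positivity
          linarith
        choose q hq1 hq2 using hseq
        have hq0 : ∀ n, (q n : ℝ) ∈ Ico (0:ℝ) T := fun n =>
          ⟨ht.1.trans (hq1 n).le, (hq2 n).trans_le (min_le_left _ _)⟩
        have htend : Tendsto (fun n => (q n : ℝ)) atTop (𝓝 t) := by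
          have h1 : Tendsto (fun n : ℕ => t + 1/((n:ℝ)+1)) atTop (𝓝 t) := by
            have := tendsto_one_div_add_atTop_nhds_zero_nat (𝕜 := ℝ)
            have h2 := tendsto_const_nhds (x := t) (f := atTop (α := ℕ)) |>.add this
            simpa using h2
          exact tendsto_of_tendsto_of_tendsto_of_le_of_le tendsto_const_nhds h1
            (fun n => (hq1 n).le) (fun n => ((hq2 n).trans_le (min_le_right _ _)).le)
        have htendIci : Tendsto (fun n => (q n : ℝ)) atTop (𝓝[Ici t] t) :=
          tendsto_nhdsWithin_iff.2 ⟨htend, Eventually.of_forall fun n => (hq1 n).le⟩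
        have hcont := hrc u hu t ⟨ht.1, htT⟩
        have hlim : Tendsto (fun n => ENNReal.ofReal |f u ((q n):ℝ)|) atTop
            (𝓝 (ENNReal.ofReal |f u t|)) :=
          (ENNReal.continuous_ofReal.tendsto _).comp
            ((continuous_abs.tendsto _).comp (hcont.tendsto.comp htendIci))
        refine le_trans (le_of_tendsto' hlim fun n => ?_) le_sup_right
        have : ENNReal.ofReal |f u ((q n):ℝ)|
            = (if ((q n):ℝ) ∈ Ico (0:ℝ) T then ENNReal.ofReal |f u ((q n):ℝ)| else 0) := by
          rw [if_pos (hq0 n)]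
        rw [this]
        exact le_iSup (fun qq : ℚ =>
          (if (qq:ℝ) ∈ Ico (0:ℝ) T then ENNReal.ofReal |f u (qq:ℝ)| else 0)) (q n)
    · refine sup_le ?_ (iSup_le fun qq => ?_)
      · exact le_pathSup (right_mem_Icc.2 hT.le)
      · by_cases hq : (qq:ℝ) ∈ Ico (0:ℝ) T
        · rw [if_pos hq]
          exact le_pathSup ⟨hq.1, hq.2.le⟩
        · rw [if_neg hq]
          exact bot_le
lemma lint_section_le {F Y : ℝ → ℝ → ℝ} {T u s : ℝ} (hs : s ∈ Icc (0:ℝ) T) :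
    ∫⁻ v in Icc (0:ℝ) 1, ENNReal.ofReal |F u v * Y v s| ≤ KE F (pathSup T Y) u := by
  unfold KE
  refine lintegral_mono fun v => ?_
  rw [abs_mul, ENNReal.ofReal_mul (abs_nonneg _)]
  exact mul_le_mul_right (le_pathSup hs) _

lemma kernelApply_bound {F Y : ℝ → ℝ → ℝ} {T u s : ℝ} (hs : s ∈ Icc (0:ℝ) T) :
    ENNReal.ofReal |kernelApply F Y u s| ≤ KE F (pathSup T Y) u := by
  rw [← Real.enorm_eq_ofReal_abs]
  refine le_trans (enorm_integral_le_lintegral_enorm _) ?_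
  refine le_trans (le_of_eq (lintegral_congr fun v => Real.enorm_eq_ofReal_abs _)) ?_
  exact lint_section_le hs

lemma integrable_section {F Y : ℝ → ℝ → ℝ} {T u s : ℝ} (hs : s ∈ Icc (0:ℝ) T)
    (hFm : Measurable fun v => F u v) (hYm : Measurable fun v => Y v s)
    (hfin : KE F (pathSup T Y) u ≠ ⊤) :
    Integrable (fun v => F u v * Y v s) (volume.restrict (Icc (0:ℝ) 1)) := by
  refine ⟨(hFm.mul hYm).aestronglyMeasurable, ?_⟩
  rw [hasFiniteIntegral_iff_norm]
  have heq : ∀ v, ENNReal.ofReal ‖F u v * Y v s‖ = ENNReal.ofReal |F u v * Y v s| :=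
    fun v => by rw [Real.norm_eq_abs]
  rw [lintegral_congr heq]
  exact (lint_section_le hs).trans_lt (lt_top_iff_ne_top.2 hfin)

lemma sup_nonneg' {t : ℝ} (g : ℝ → ℝ) : 0 ≤ ⨆ s : Icc (0:ℝ) t, max (g s.1) 0 :=
  Real.iSup_nonneg fun s => le_max_right _ _

lemma sup_le_bound {t : ℝ} {g : ℝ → ℝ} {B : ℝ} (hB0 : 0 ≤ B)
    (hB : ∀ s ∈ Icc (0:ℝ) t, g s ≤ B) :
    (⨆ s : Icc (0:ℝ) t, max (g s.1) 0) ≤ B :=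
  Real.iSup_le (fun s => max_le (hB s.1 s.2) hB0) hB0

lemma sup_comp {t : ℝ} (ht : 0 ≤ t) {g1 g2 : ℝ → ℝ} {c B : ℝ} (hc : 0 ≤ c)
    (hB : ∀ s ∈ Icc (0:ℝ) t, |g1 s| ≤ B)
    (hd : ∀ s ∈ Icc (0:ℝ) t, |g2 s - g1 s| ≤ c) :
    (⨆ s : Icc (0:ℝ) t, max (g2 s.1) 0) ≤ (⨆ s : Icc (0:ℝ) t, max (g1 s.1) 0) + c := by
  have hne : Nonempty (Icc (0:ℝ) t) := ⟨⟨0, le_rfl, ht⟩⟩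
  have hbdd : BddAbove (Set.range fun s : Icc (0:ℝ) t => max (g1 s.1) 0) := by
    refine ⟨max B 0, ?_⟩
    rintro x ⟨s, rfl⟩
    exact max_le_max ((le_abs_self _).trans (hB s.1 s.2)) le_rfl
  have h0 : 0 ≤ (⨆ s : Icc (0:ℝ) t, max (g1 s.1) 0) := sup_nonneg' g1
  refine Real.iSup_le (fun s => ?_) (by linarith)
  have h2 : g2 s.1 ≤ g1 s.1 + c := by
    have := (abs_le.1 (hd s.1 s.2)).2
    linarith [(abs_le.1 (hd s.1 s.2)).1]
  have h1 : max (g2 s.1) 0 ≤ max (g1 s.1) 0 + c := by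
    refine max_le (h2.trans (add_le_add_left (le_max_left _ _) c)) ?_
    have : (0:ℝ) ≤ max (g1 s.1) 0 := le_max_right _ _
    linarith
  exact h1.trans (add_le_add_left (le_ciSup hbdd s) c)

lemma regulator_pathSup_bound {T : ℝ} {X F Y : ℝ → ℝ → ℝ} {u : ℝ}
    (hfix : ∀ t ∈ Icc (0:ℝ) T, Y u t = piMap X F Y u t)
    (finX : pathSup T X u ≠ ⊤) (finK : KE F (pathSup T Y) u ≠ ⊤) :
    pathSup T Y u ≤ pathSup T X u + KE F (pathSup T Y) u := by
  set B : ℝ := (pathSup T X u).toReal + (KE F (pathSup T Y) u).toReal with hB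
  have hB0 : 0 ≤ B := add_nonneg ENNReal.toReal_nonneg ENNReal.toReal_nonneg
  have habs : ∀ s ∈ Icc (0:ℝ) T, |(-(X u s) + kernelApply F Y u s)| ≤ B := by
    intro s hs
    refine (abs_add_le _ _).trans (add_le_add ?_ ?_)
    · rw [abs_neg]
      exact (ENNReal.ofReal_le_iff_le_toReal finX).1 (le_pathSup hs)
    · exact (ENNReal.ofReal_le_iff_le_toReal finK).1 (kernelApply_bound hs)
  refine iSup₂_le fun t ht => ?_
  rw [hfix t ht]
  have hY : piMap X F Y u t ≤ B := by
    unfold piMap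
    exact sup_le_bound hB0 fun s hs =>
      (le_abs_self _).trans (habs s ⟨hs.1, hs.2.trans ht.2⟩)
  have hY0 : 0 ≤ piMap X F Y u t := by
    unfold piMap
    exact sup_nonneg' (fun s => -X u s + kernelApply F Y u s)
  rw [abs_of_nonneg hY0]
  calc ENNReal.ofReal (piMap X F Y u t) ≤ ENNReal.ofReal B := ENNReal.ofReal_le_ofReal hY
    _ ≤ _ := by
        rw [hB, ENNReal.ofReal_add ENNReal.toReal_nonneg ENNReal.toReal_nonneg]
        exact add_le_add ENNReal.ofReal_toReal_le ENNReal.ofReal_toReal_le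

lemma kernel_split {T : ℝ} {F1 F2 Y1 Y2 : ℝ → ℝ → ℝ} {u s : ℝ}
    (hs : s ∈ Icc (0:ℝ) T)
    (hmF1 : Measurable fun v => F1 u v) (hmF2 : Measurable fun v => F2 u v)
    (hmY1 : Measurable fun v => Y1 v s) (hmY2 : Measurable fun v => Y2 v s)
    (finK1 : KE F1 (pathSup T Y1) u ≠ ⊤)
    (finK2 : KE F2 (pathSup T Y2) u ≠ ⊤)
    (finK2d : KE F2 (pathSup T (fun w r => Y2 w r - Y1 w r)) u ≠ ⊤)
    (finKd1 : KE (fun a b => F2 a b - F1 a b) (pathSup T Y1) u ≠ ⊤) :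
    kernelApply F2 Y2 u s - kernelApply F1 Y1 u s
      = kernelApply F2 (fun w r => Y2 w r - Y1 w r) u s
        + kernelApply (fun a b => F2 a b - F1 a b) Y1 u s := by
  have hi2 : Integrable (fun v => F2 u v * Y2 v s) (volume.restrict (Icc (0:ℝ) 1)) :=
    integrable_section hs hmF2 hmY2 finK2
  have hi1 : Integrable (fun v => F1 u v * Y1 v s) (volume.restrict (Icc (0:ℝ) 1)) :=
    integrable_section hs hmF1 hmY1 finK1
  have hip : Integrable (fun v => F2 u v * (Y2 v s - Y1 v s)) (volume.restrict (Icc (0:ℝ) 1)) :=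
    integrable_section (Y := fun w r => Y2 w r - Y1 w r) hs hmF2 (hmY2.sub hmY1) finK2d
  have hiq : Integrable (fun v => (F2 u v - F1 u v) * Y1 v s) (volume.restrict (Icc (0:ℝ) 1)) :=
    integrable_section (F := fun a b => F2 a b - F1 a b) hs (hmF2.sub hmF1) hmY1 finKd1
  show (∫ v in Icc (0:ℝ) 1, F2 u v * Y2 v s) - (∫ v in Icc (0:ℝ) 1, F1 u v * Y1 v s)
      = (∫ v in Icc (0:ℝ) 1, F2 u v * (Y2 v s - Y1 v s))
        + ∫ v in Icc (0:ℝ) 1, (F2 u v - F1 u v) * Y1 v s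
  rw [← integral_sub hi2 hi1, ← integral_add hip hiq]
  exact integral_congr_ae (Eventually.of_forall fun v => by ring)

lemma diff_pathSup_bound {T : ℝ}
    {X1 X2 F1 F2 Y1 Y2 : ℝ → ℝ → ℝ} {u : ℝ}
    (hfix1 : ∀ t ∈ Icc (0:ℝ) T, Y1 u t = piMap X1 F1 Y1 u t)
    (hfix2 : ∀ t ∈ Icc (0:ℝ) T, Y2 u t = piMap X2 F2 Y2 u t)
    (hmF1 : Measurable fun v => F1 u v) (hmF2 : Measurable fun v => F2 u v)
    (hmY1 : ∀ s ∈ Icc (0:ℝ) T, Measurable fun v => Y1 v s)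
    (hmY2 : ∀ s ∈ Icc (0:ℝ) T, Measurable fun v => Y2 v s)
    (finX1 : pathSup T X1 u ≠ ⊤)
    (finDX : pathSup T (fun w r => X2 w r - X1 w r) u ≠ ⊤)
    (finK1 : KE F1 (pathSup T Y1) u ≠ ⊤)
    (finK2 : KE F2 (pathSup T Y2) u ≠ ⊤)
    (finK2d : KE F2 (pathSup T (fun w r => Y2 w r - Y1 w r)) u ≠ ⊤)
    (finKd1 : KE (fun a b => F2 a b - F1 a b) (pathSup T Y1) u ≠ ⊤) :
    pathSup T (fun w r => Y2 w r - Y1 w r) u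
      ≤ pathSup T (fun w r => X2 w r - X1 w r) u
        + KE F2 (pathSup T (fun w r => Y2 w r - Y1 w r)) u
        + KE (fun a b => F2 a b - F1 a b) (pathSup T Y1) u := by
  set D : ℝ≥0∞ := pathSup T (fun w r => X2 w r - X1 w r) u
      + KE F2 (pathSup T (fun w r => Y2 w r - Y1 w r)) u
      + KE (fun a b => F2 a b - F1 a b) (pathSup T Y1) u with hD
  have hDne : D ≠ ⊤ := by
    rw [hD]
    exact ENNReal.add_ne_top.2 ⟨ENNReal.add_ne_top.2 ⟨finDX, finK2d⟩, finKd1⟩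
  set c : ℝ := D.toReal with hc
  have hc0 : (0:ℝ) ≤ c := ENNReal.toReal_nonneg
  have hg : ∀ s ∈ Icc (0:ℝ) T,
      |(-(X2 u s) + kernelApply F2 Y2 u s) - (-(X1 u s) + kernelApply F1 Y1 u s)| ≤ c := by
    intro s hs
    refine (ENNReal.ofReal_le_iff_le_toReal hDne).1 ?_
    have habs : (-(X2 u s) + kernelApply F2 Y2 u s) - (-(X1 u s) + kernelApply F1 Y1 u s)
        = (-(X2 u s - X1 u s)) + (kernelApply F2 Y2 u s - kernelApply F1 Y1 u s) := by ring
    rw [habs, kernel_split hs hmF1 hmF2 (hmY1 s hs) (hmY2 s hs) finK1 finK2 finK2d finKd1, hD]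
    calc ENNReal.ofReal |(-(X2 u s - X1 u s))
          + (kernelApply F2 (fun w r => Y2 w r - Y1 w r) u s
            + kernelApply (fun a b => F2 a b - F1 a b) Y1 u s)|
        ≤ ENNReal.ofReal (|X2 u s - X1 u s|
            + (|kernelApply F2 (fun w r => Y2 w r - Y1 w r) u s|
              + |kernelApply (fun a b => F2 a b - F1 a b) Y1 u s|)) := by
          refine ENNReal.ofReal_le_ofReal ((abs_add_le _ _).trans ?_)
          rw [abs_neg]
          exact add_le_add_right (abs_add_le _ _) _
      _ ≤ ENNReal.ofReal |X2 u s - X1 u s|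
            + (ENNReal.ofReal |kernelApply F2 (fun w r => Y2 w r - Y1 w r) u s|
              + ENNReal.ofReal |kernelApply (fun a b => F2 a b - F1 a b) Y1 u s|) :=
          le_trans ENNReal.ofReal_add_le (add_le_add_right ENNReal.ofReal_add_le _)
      _ ≤ pathSup T (fun w r => X2 w r - X1 w r) u
            + (KE F2 (pathSup T (fun w r => Y2 w r - Y1 w r)) u
              + KE (fun a b => F2 a b - F1 a b) (pathSup T Y1) u) := by
          refine add_le_add (le_pathSup hs) (add_le_add ?_ ?_)
          · exact kernelApply_bound hs
          · exact kernelApply_bound hs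
      _ = _ := by rw [add_assoc]
  set B : ℝ := (pathSup T X1 u).toReal + (KE F1 (pathSup T Y1) u).toReal with hB
  have hB1 : ∀ s ∈ Icc (0:ℝ) T, |(-(X1 u s) + kernelApply F1 Y1 u s)| ≤ B := by
    intro s hs
    refine (abs_add_le _ _).trans (add_le_add ?_ ?_)
    · rw [abs_neg]
      exact (ENNReal.ofReal_le_iff_le_toReal finX1).1 (le_pathSup hs)
    · exact (ENNReal.ofReal_le_iff_le_toReal finK1).1 (kernelApply_bound hs)
  refine iSup₂_le fun t ht => ?_
  have key : |Y2 u t - Y1 u t| ≤ c := by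
    rw [hfix1 t ht, hfix2 t ht]
    have hss : ∀ s, s ∈ Icc (0:ℝ) t → s ∈ Icc (0:ℝ) T :=
      fun s hs => ⟨hs.1, hs.2.trans ht.2⟩
    have hle1 : piMap X2 F2 Y2 u t ≤ piMap X1 F1 Y1 u t + c := by
      unfold piMap
      exact sup_comp ht.1 hc0 (fun s hs => hB1 s (hss s hs)) (fun s hs => hg s (hss s hs))
    have hle2 : piMap X1 F1 Y1 u t ≤ piMap X2 F2 Y2 u t + c := by
      unfold piMap
      refine sup_comp (g1 := fun s => -(X2 u s) + kernelApply F2 Y2 u s)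
        (g2 := fun s => -(X1 u s) + kernelApply F1 Y1 u s)
        (B := B + c) ht.1 hc0 (fun s hs => ?_) (fun s hs => ?_)
      · have h1 := hB1 s (hss s hs)
        have h2 := hg s (hss s hs)
        have h3 := abs_sub_abs_le_abs_sub (-(X2 u s) + kernelApply F2 Y2 u s)
          (-(X1 u s) + kernelApply F1 Y1 u s)
        show |(-(X2 u s) + kernelApply F2 Y2 u s)| ≤ B + c
        linarith
      · rw [abs_sub_comm]
        exact hg s (hss s hs)
    exact abs_sub_le_iff.2 ⟨by linarith, by linarith⟩
  calc ENNReal.ofReal |Y2 u t - Y1 u t| ≤ ENNReal.ofReal c := ENNReal.ofReal_le_ofReal key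
    _ = D := ENNReal.ofReal_toReal hDne

lemma phi_diff_pathSup_bound {T : ℝ}
    {X1 X2 F1 F2 Y1 Y2 : ℝ → ℝ → ℝ} {u : ℝ}
    (hmF1 : Measurable fun v => F1 u v) (hmF2 : Measurable fun v => F2 u v)
    (hmY1 : ∀ s ∈ Icc (0:ℝ) T, Measurable fun v => Y1 v s)
    (hmY2 : ∀ s ∈ Icc (0:ℝ) T, Measurable fun v => Y2 v s)
    (finK1 : KE F1 (pathSup T Y1) u ≠ ⊤)
    (finK2 : KE F2 (pathSup T Y2) u ≠ ⊤)
    (finK2d : KE F2 (pathSup T (fun w r => Y2 w r - Y1 w r)) u ≠ ⊤)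
    (finKd1 : KE (fun a b => F2 a b - F1 a b) (pathSup T Y1) u ≠ ⊤) :
    pathSup T (fun w r => (X2 w r + Y2 w r - kernelApply F2 Y2 w r)
        - (X1 w r + Y1 w r - kernelApply F1 Y1 w r)) u
      ≤ pathSup T (fun w r => X2 w r - X1 w r) u
        + pathSup T (fun w r => Y2 w r - Y1 w r) u
        + KE F2 (pathSup T (fun w r => Y2 w r - Y1 w r)) u
        + KE (fun a b => F2 a b - F1 a b) (pathSup T Y1) u := by
  refine iSup₂_le fun s hs => ?_
  have habs : (X2 u s + Y2 u s - kernelApply F2 Y2 u s)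
      - (X1 u s + Y1 u s - kernelApply F1 Y1 u s)
      = (X2 u s - X1 u s) + ((Y2 u s - Y1 u s)
        + (-(kernelApply F2 Y2 u s - kernelApply F1 Y1 u s))) := by ring
  show ENNReal.ofReal |X2 u s + Y2 u s - kernelApply F2 Y2 u s
      - (X1 u s + Y1 u s - kernelApply F1 Y1 u s)| ≤ _
  rw [habs, kernel_split hs hmF1 hmF2 (hmY1 s hs) (hmY2 s hs) finK1 finK2 finK2d finKd1]
  calc ENNReal.ofReal |(X2 u s - X1 u s) + ((Y2 u s - Y1 u s)
        + (-(kernelApply F2 (fun w r => Y2 w r - Y1 w r) u s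
          + kernelApply (fun a b => F2 a b - F1 a b) Y1 u s)))|
      ≤ ENNReal.ofReal (|X2 u s - X1 u s| + (|Y2 u s - Y1 u s|
          + (|kernelApply F2 (fun w r => Y2 w r - Y1 w r) u s|
            + |kernelApply (fun a b => F2 a b - F1 a b) Y1 u s|))) := by
        refine ENNReal.ofReal_le_ofReal ((abs_add_le _ _).trans (add_le_add_right ?_ _))
        refine (abs_add_le _ _).trans (add_le_add_right ?_ _)
        rw [abs_neg]
        exact abs_add_le _ _
    _ ≤ ENNReal.ofReal |X2 u s - X1 u s| + (ENNReal.ofReal |Y2 u s - Y1 u s|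
          + (ENNReal.ofReal |kernelApply F2 (fun w r => Y2 w r - Y1 w r) u s|
            + ENNReal.ofReal |kernelApply (fun a b => F2 a b - F1 a b) Y1 u s|)) := by
        refine le_trans ENNReal.ofReal_add_le (add_le_add_right ?_ _)
        exact le_trans ENNReal.ofReal_add_le (add_le_add_right ENNReal.ofReal_add_le _)
    _ ≤ pathSup T (fun w r => X2 w r - X1 w r) u
          + (pathSup T (fun w r => Y2 w r - Y1 w r) u
            + (KE F2 (pathSup T (fun w r => Y2 w r - Y1 w r)) u
              + KE (fun a b => F2 a b - F1 a b) (pathSup T Y1) u)) := by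
        refine add_le_add (le_pathSup hs) (add_le_add (le_pathSup hs)
          (add_le_add ?_ ?_))
        · exact kernelApply_bound hs
        · exact kernelApply_bound hs
    _ = _ := by rw [← add_assoc, ← add_assoc]

lemma pathSup_sub_le {T : ℝ} (f g : ℝ → ℝ → ℝ) (u : ℝ) :
    pathSup T (fun w r => f w r - g w r) u ≤ pathSup T f u + pathSup T g u := by
  refine iSup₂_le fun t ht => ?_
  calc ENNReal.ofReal |f u t - g u t| ≤ ENNReal.ofReal (|f u t| + |g u t|) :=
      ENNReal.ofReal_le_ofReal (abs_sub _ _)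
    _ ≤ ENNReal.ofReal |f u t| + ENNReal.ofReal |g u t| := ENNReal.ofReal_add_le
    _ ≤ _ := add_le_add (le_pathSup ht) (le_pathSup ht)

lemma final_alg {A B N D ND TY1 TP c1 c2 c12 : ℝ≥0∞}
    (h12 : c12 = c2 * c1)
    (hD : D ≤ c2 * (A + ND)) (hND : ND ≤ N * TY1) (hY1b : TY1 ≤ c1 * B)
    (hTP : TP ≤ A + D + D + ND) :
    D ≤ c2 * A + c12 * B * N ∧ TP ≤ (1 + 2*c2) * A + (2*c12 + c1) * B * N := by
  have hND' : ND ≤ c1 * B * N := by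
    refine hND.trans ?_
    calc N * TY1 ≤ N * (c1 * B) := mul_le_mul_right hY1b _
      _ = c1 * B * N := by ring
  have hD' : D ≤ c2 * A + c12 * B * N := by
    refine hD.trans ?_
    rw [mul_add]
    refine add_le_add_right ?_ _
    calc c2 * ND ≤ c2 * (c1 * B * N) := mul_le_mul_right hND' _
      _ = c12 * B * N := by rw [h12]; ring
  refine ⟨hD', ?_⟩
  refine hTP.trans ?_
  calc A + D + D + ND
      ≤ A + (c2 * A + c12 * B * N) + (c2 * A + c12 * B * N) + c1 * B * N := by
        exact add_le_add (add_le_add (add_le_add_right hD' _) hD') hND'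
    _ = (1 + 2*c2) * A + (2*c12 + c1) * B * N := by ring

end RMJL
end

open RMJL in
/-- joint Lipschitz continuity of the regulator and the reflected process in
both the free process and the reflection kernel. -/
theorem reflection_map_joint_lipschitz
    (T : ℝ) (hT : 0 < T) (F1 F2 : ℝ → ℝ → ℝ) (γ1 γ2 : ℝ) (k1 k2 : ℕ)
    (hF1 : IsReflKernel F1 γ1 k1) (hF2 : IsReflKernel F2 γ2 k2)
    (X1 X2 Y1 Y2 : ℝ → ℝ → ℝ) (hX1 : MemDT T X1) (hX2 : MemDT T X2)
    (hY1 : IsRegulator T X1 F1 Y1) (hY2 : IsRegulator T X2 F2 Y2) :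
    TNorm T (fun u t => Y2 u t - Y1 u t)
      ≤ ENNReal.ofReal ((k2 : ℝ) / (1 - γ2)) * TNorm T (fun u t => X2 u t - X1 u t)
        + ENNReal.ofReal ((k1 : ℝ) * k2 / ((1 - γ1) * (1 - γ2))) * TNorm T X1
            * kernelOpNorm (fun u v => F2 u v - F1 u v) ∧
    TNorm T (fun u t => (X2 u t + Y2 u t - kernelApply F2 Y2 u t)
        - (X1 u t + Y1 u t - kernelApply F1 Y1 u t))
      ≤ ENNReal.ofReal (1 + 2 * (k2 : ℝ) / (1 - γ2)) * TNorm T (fun u t => X2 u t - X1 u t)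
        + ENNReal.ofReal (2 * (k1 : ℝ) * k2 / ((1 - γ1) * (1 - γ2)) + (k1 : ℝ) / (1 - γ1))
            * TNorm T X1 * kernelOpNorm (fun u v => F2 u v - F1 u v) := by
  classical
  obtain ⟨hMD1, hfix1⟩ := hY1
  obtain ⟨hMD2, hfix2⟩ := hY2
  have hDY1 := hMD1.memDT
  have hDY2 := hMD2.memDT
  obtain ⟨hγ11, hγ12⟩ := hF1.gamma_mem
  obtain ⟨hγ21, hγ22⟩ := hF2.gamma_mem
  have hk1R : (1:ℝ) ≤ (k1:ℝ) := by exact_mod_cast hF1.k_pos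
  have hk2R : (1:ℝ) ≤ (k2:ℝ) := by exact_mod_cast hF2.k_pos
  set ΔF : ℝ → ℝ → ℝ := fun u v => F2 u v - F1 u v with hΔF
  set c1 : ℝ≥0∞ := ENNReal.ofReal ((k1:ℝ)/(1-γ1)) with hc1
  set c2 : ℝ≥0∞ := ENNReal.ofReal ((k2:ℝ)/(1-γ2)) with hc2
  set c12 : ℝ≥0∞ := ENNReal.ofReal ((k1:ℝ)*k2/((1-γ1)*(1-γ2))) with hc12
  have e1 : c12 = c2 * c1 := by
    rw [hc12, hc2, hc1, ← ENNReal.ofReal_mul (div_nonneg (Nat.cast_nonneg k2) (by linarith))]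
    congr 1
    field_simp
  have e2 : ENNReal.ofReal (1 + 2 * (k2:ℝ) / (1 - γ2)) = 1 + 2 * c2 := by
    rw [ENNReal.ofReal_add zero_le_one (div_nonneg (by positivity) (by linarith)),
      ENNReal.ofReal_one, hc2]
    congr 1
    rw [mul_div_assoc, ENNReal.ofReal_mul (by norm_num : (0:ℝ) ≤ 2)]
    norm_num
  have e3 : ENNReal.ofReal (2 * (k1:ℝ) * k2 / ((1 - γ1) * (1 - γ2)) + (k1:ℝ) / (1 - γ1))
      = 2 * c12 + c1 := by
    have hd1 : (0:ℝ) ≤ (1-γ1) * (1-γ2) := by nlinarith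
    rw [ENNReal.ofReal_add (div_nonneg (by positivity) hd1)
      (div_nonneg (Nat.cast_nonneg k1) (by linarith)), hc12, hc1]
    congr 1
    rw [show (2:ℝ) * k1 * k2 / ((1-γ1)*(1-γ2)) = 2 * ((k1:ℝ)*k2/((1-γ1)*(1-γ2))) by ring,
      ENNReal.ofReal_mul (by norm_num : (0:ℝ) ≤ 2)]
    norm_num
  -- section measurabilities
  have hmF1sec : ∀ u : ℝ, Measurable fun v => F1 u v :=
    fun u => hF1.meas.comp (measurable_const.prodMk measurable_id)
  have hmF2sec : ∀ u : ℝ, Measurable fun v => F2 u v :=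
    fun u => hF2.meas.comp (measurable_const.prodMk measurable_id)
  have hΔm : Measurable (Function.uncurry ΔF) := hF2.meas.sub hF1.meas
  -- measurable representatives of the path suprema
  obtain ⟨pX1, mpX1, epX1⟩ := exists_pathSup_rep hT hX1.rightCont hX1.meas
  obtain ⟨pX2, mpX2, epX2⟩ := exists_pathSup_rep hT hX2.rightCont hX2.meas
  obtain ⟨pDX, mpDX, epDX⟩ := exists_pathSup_rep hT
    (fun u hu t ht => (hX2.rightCont u hu t ht).sub (hX1.rightCont u hu t ht))
    (fun t ht => (hX2.meas t ht).sub (hX1.meas t ht))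
  obtain ⟨pY1, mpY1, epY1⟩ := exists_pathSup_rep hT hDY1.rightCont hDY1.meas
  obtain ⟨pY2, mpY2, epY2⟩ := exists_pathSup_rep hT hDY2.rightCont hDY2.meas
  obtain ⟨pD, mpD, epD⟩ := exists_pathSup_rep hT
    (fun u hu t ht => (hDY2.rightCont u hu t ht).sub (hDY1.rightCont u hu t ht))
    (fun t ht => (hDY2.meas t ht).sub (hDY1.meas t ht))
  have nX1 : TNorm T X1 = ∫⁻ u in Icc (0:ℝ) 1, pX1 u := lintegral_congr_ae epX1
  have nX2 : TNorm T X2 = ∫⁻ u in Icc (0:ℝ) 1, pX2 u := lintegral_congr_ae epX2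
  have nDX : TNorm T (fun u t => X2 u t - X1 u t) = ∫⁻ u in Icc (0:ℝ) 1, pDX u :=
    lintegral_congr_ae epDX
  have nY1 : TNorm T Y1 = ∫⁻ u in Icc (0:ℝ) 1, pY1 u := lintegral_congr_ae epY1
  have nY2 : TNorm T Y2 = ∫⁻ u in Icc (0:ℝ) 1, pY2 u := lintegral_congr_ae epY2
  have nD : TNorm T (fun u t => Y2 u t - Y1 u t) = ∫⁻ u in Icc (0:ℝ) 1, pD u :=
    lintegral_congr_ae epD
  -- finiteness of the difference norms
  have finDX : TNorm T (fun u t => X2 u t - X1 u t) ≠ ⊤ := by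
    have hb : ∀ᵐ u ∂(volume.restrict (Icc (0:ℝ) 1)),
        pathSup T (fun u t => X2 u t - X1 u t) u ≤ pX2 u + pX1 u := by
      filter_upwards [epX1, epX2] with u h1 h2
      rw [← h1, ← h2]
      exact pathSup_sub_le X2 X1 u
    have hle : TNorm T (fun u t => X2 u t - X1 u t) ≤ TNorm T X2 + TNorm T X1 := by
      rw [nX2, nX1, ← lintegral_add_left mpX2]
      exact lintegral_mono_ae hb
    exact (hle.trans_lt (ENNReal.add_lt_top.2
      ⟨lt_top_iff_ne_top.2 hX2.finite, lt_top_iff_ne_top.2 hX1.finite⟩)).ne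
  have finD : TNorm T (fun u t => Y2 u t - Y1 u t) ≠ ⊤ := by
    have hb : ∀ᵐ u ∂(volume.restrict (Icc (0:ℝ) 1)),
        pathSup T (fun u t => Y2 u t - Y1 u t) u ≤ pY2 u + pY1 u := by
      filter_upwards [epY1, epY2] with u h1 h2
      rw [← h1, ← h2]
      exact pathSup_sub_le Y2 Y1 u
    have hle : TNorm T (fun u t => Y2 u t - Y1 u t) ≤ TNorm T Y2 + TNorm T Y1 := by
      rw [nY2, nY1, ← lintegral_add_left mpY2]
      exact lintegral_mono_ae hb
    exact (hle.trans_lt (ENNReal.add_lt_top.2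
      ⟨lt_top_iff_ne_top.2 hDY2.finite, lt_top_iff_ne_top.2 hDY1.finite⟩)).ne
  -- KE congruences
  have eK1 : KE F1 (pathSup T Y1) = KE F1 pY1 := KE_congr F1 epY1
  have eK2 : KE F2 (pathSup T Y2) = KE F2 pY2 := KE_congr F2 epY2
  have eK2d : KE F2 (pathSup T (fun w r => Y2 w r - Y1 w r)) = KE F2 pD := KE_congr F2 epD
  have eKd1 : KE ΔF (pathSup T Y1) = KE ΔF pY1 := KE_congr ΔF epY1
  -- a.e. finiteness facts
  have aeX1 : ∀ᵐ u ∂(volume.restrict (Icc (0:ℝ) 1)), pathSup T X1 u ≠ ⊤ := by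
    have h := ae_lt_top mpX1 (by rw [← nX1]; exact hX1.finite)
    filter_upwards [h, epX1] with u h1 h2
    rw [h2]; exact h1.ne
  have aeDX : ∀ᵐ u ∂(volume.restrict (Icc (0:ℝ) 1)),
      pathSup T (fun w r => X2 w r - X1 w r) u ≠ ⊤ := by
    have h := ae_lt_top mpDX (by rw [← nDX]; exact finDX)
    filter_upwards [h, epDX] with u h1 h2
    rw [show pathSup T (fun w r => X2 w r - X1 w r) u = pDX u from h2]; exact h1.ne
  have hop1T : kernelOpNorm F1 ≠ ⊤ := (hF1.opNorm_le_one.trans_lt ENNReal.one_lt_top).ne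
  have hop2T : kernelOpNorm F2 ≠ ⊤ := (hF2.opNorm_le_one.trans_lt ENNReal.one_lt_top).ne
  have aeK1 : ∀ᵐ u ∂(volume.restrict (Icc (0:ℝ) 1)), KE F1 (pathSup T Y1) u ≠ ⊤ := by
    rw [eK1]
    have hW : ∫⁻ u in Icc (0:ℝ) 1, KE F1 pY1 u ≠ ⊤ := by
      refine ((lintegral_KE_le hF1.meas mpY1).trans_lt ?_).ne
      exact ENNReal.mul_lt_top (lt_top_iff_ne_top.2 hop1T)
        (lt_top_iff_ne_top.2 (by rw [← nY1]; exact hDY1.finite))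
    exact (ae_lt_top (measurable_KE hF1.meas mpY1) hW).mono fun u h => h.ne
  have aeK2 : ∀ᵐ u ∂(volume.restrict (Icc (0:ℝ) 1)), KE F2 (pathSup T Y2) u ≠ ⊤ := by
    rw [eK2]
    have hW : ∫⁻ u in Icc (0:ℝ) 1, KE F2 pY2 u ≠ ⊤ := by
      refine ((lintegral_KE_le hF2.meas mpY2).trans_lt ?_).ne
      exact ENNReal.mul_lt_top (lt_top_iff_ne_top.2 hop2T)
        (lt_top_iff_ne_top.2 (by rw [← nY2]; exact hDY2.finite))
    exact (ae_lt_top (measurable_KE hF2.meas mpY2) hW).mono fun u h => h.ne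
  have aeK2d : ∀ᵐ u ∂(volume.restrict (Icc (0:ℝ) 1)),
      KE F2 (pathSup T (fun w r => Y2 w r - Y1 w r)) u ≠ ⊤ := by
    rw [eK2d]
    have hW : ∫⁻ u in Icc (0:ℝ) 1, KE F2 pD u ≠ ⊤ := by
      refine ((lintegral_KE_le hF2.meas mpD).trans_lt ?_).ne
      exact ENNReal.mul_lt_top (lt_top_iff_ne_top.2 hop2T)
        (lt_top_iff_ne_top.2 (by rw [← nD]; exact finD))
    exact (ae_lt_top (measurable_KE hF2.meas mpD) hW).mono fun u h => h.ne
  -- regulator absolute bound (system 1)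
  have hA1 : ∀ᵐ u ∂(volume.restrict (Icc (0:ℝ) 1)), pY1 u ≤ pX1 u + KE F1 pY1 u := by
    filter_upwards [ae_restrict_mem measurableSet_Icc, aeX1, aeK1, epY1, epX1]
      with u hu h1 h2 g1 g2
    have h := regulator_pathSup_bound (hfix1 u hu) h1 h2
    rw [g1, g2, congrFun eK1 u] at h
    exact h
  have bound1 : TNorm T Y1 ≤ c1 * TNorm T X1 := by
    rw [nY1, nX1, hc1]
    exact contraction hF1.meas hF1.nonneg hF1.opNorm_le_one hF1.gamma_mem hF1.k_pos
      hF1.iter_le mpY1 mpX1 hA1 (by rw [← nY1]; exact hDY1.finite)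
  -- trivial case: infinite kernel distance with nonzero ‖X1‖
  by_cases hbad : kernelOpNorm ΔF = ⊤ ∧ TNorm T X1 ≠ 0
  · have hz12 : c12 * TNorm T X1 * kernelOpNorm ΔF = ⊤ := by
      rw [hbad.1, ENNReal.mul_top]
      refine mul_ne_zero ?_ hbad.2
      rw [hc12]
      refine (ENNReal.ofReal_pos.2 ?_).ne'
      have hh : (0:ℝ) < (1-γ1)*(1-γ2) := by nlinarith
      exact div_pos (by nlinarith) hh
    have hz3 : ENNReal.ofReal (2 * (k1:ℝ) * k2 / ((1 - γ1) * (1 - γ2)) + (k1:ℝ) / (1 - γ1))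
        * TNorm T X1 * kernelOpNorm ΔF = ⊤ := by
      rw [hbad.1, ENNReal.mul_top]
      refine mul_ne_zero ?_ hbad.2
      refine (ENNReal.ofReal_pos.2 ?_).ne'
      have h1 : (0:ℝ) < (1-γ1)*(1-γ2) := by nlinarith
      have h2 : (0:ℝ) < (k1:ℝ)/(1-γ1) := div_pos (by linarith) (by linarith)
      have h3 : (0:ℝ) ≤ 2*(k1:ℝ)*k2/((1-γ1)*(1-γ2)) := by positivity
      linarith
    constructor
    · refine le_top.trans (le_of_eq ?_)
      rw [hz12, add_top]
    · refine le_top.trans (le_of_eq ?_)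
      rw [hz3, add_top]
  · -- main case
    have hok : kernelOpNorm ΔF = ⊤ → TNorm T X1 = 0 := by
      intro h
      by_contra hne
      exact hbad ⟨h, hne⟩
    have aeKd1 : ∀ᵐ u ∂(volume.restrict (Icc (0:ℝ) 1)), KE ΔF (pathSup T Y1) u ≠ ⊤ := by
      rw [eKd1]
      by_cases hN : kernelOpNorm ΔF = ⊤
      · have hX10 := hok hN
        have hY10 : TNorm T Y1 = 0 := by
          refine le_antisymm ?_ (bot_le)
          calc TNorm T Y1 ≤ c1 * TNorm T X1 := bound1
            _ = 0 := by rw [hX10, mul_zero]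
        have hpY10 : pY1 =ᵐ[volume.restrict (Icc (0:ℝ) 1)] 0 :=
          (lintegral_eq_zero_iff mpY1).1 (by rw [← nY1]; exact hY10)
        have hzero : KE ΔF pY1 = KE ΔF (fun _ => 0) := KE_congr ΔF hpY10
        refine ae_of_all _ fun u => ?_
        rw [hzero]
        unfold KE
        simp
      · have hW : ∫⁻ u in Icc (0:ℝ) 1, KE ΔF pY1 u ≠ ⊤ := by
          refine ((lintegral_KE_le hΔm mpY1).trans_lt ?_).ne
          exact ENNReal.mul_lt_top (lt_top_iff_ne_top.2 hN)
            (lt_top_iff_ne_top.2 (by rw [← nY1]; exact hDY1.finite))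
        exact (ae_lt_top (measurable_KE hΔm mpY1) hW).mono fun u h => h.ne
    -- part (i) main inequality
    have hA2 : ∀ᵐ u ∂(volume.restrict (Icc (0:ℝ) 1)),
        pD u ≤ (pDX u + KE ΔF pY1 u) + KE F2 pD u := by
      filter_upwards [ae_restrict_mem measurableSet_Icc, aeX1, aeDX, aeK1, aeK2, aeK2d,
        aeKd1, epD, epDX] with u hu f1 f2 f3 f4 f5 f6 g1 g2
      have h := diff_pathSup_bound (hfix1 u hu) (hfix2 u hu) (hmF1sec u) (hmF2sec u)
        (fun s hs => hDY1.meas s hs) (fun s hs => hDY2.meas s hs) f1 f2 f3 f4 f5 f6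
      rw [show pathSup T (fun w r => Y2 w r - Y1 w r) u = pD u from g1,
        show pathSup T (fun w r => X2 w r - X1 w r) u = pDX u from g2, congrFun eK2d u, congrFun eKd1 u] at h
      calc pD u ≤ pDX u + KE F2 pD u + KE ΔF pY1 u := h
        _ = (pDX u + KE ΔF pY1 u) + KE F2 pD u := by ring
    have hcontr2 : ∫⁻ u in Icc (0:ℝ) 1, pD u
        ≤ c2 * ∫⁻ u in Icc (0:ℝ) 1, (pDX u + KE ΔF pY1 u) := by
      rw [hc2]
      exact contraction hF2.meas hF2.nonneg hF2.opNorm_le_one hF2.gamma_mem hF2.k_pos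
        hF2.iter_le mpD (mpDX.add (measurable_KE hΔm mpY1)) hA2 (by rw [← nD]; exact finD)
    have hsplita : ∫⁻ u in Icc (0:ℝ) 1, (pDX u + KE ΔF pY1 u)
        = TNorm T (fun u t => X2 u t - X1 u t) + ∫⁻ u in Icc (0:ℝ) 1, KE ΔF pY1 u := by
      rw [lintegral_add_left mpDX, ← nDX]
    have hND : ∫⁻ u in Icc (0:ℝ) 1, KE ΔF pY1 u ≤ kernelOpNorm ΔF * TNorm T Y1 := by
      rw [nY1]
      exact lintegral_KE_le hΔm mpY1
    -- part (ii) main inequality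
    have hPhiae : ∀ᵐ u ∂(volume.restrict (Icc (0:ℝ) 1)),
        pathSup T (fun u t => (X2 u t + Y2 u t - kernelApply F2 Y2 u t)
          - (X1 u t + Y1 u t - kernelApply F1 Y1 u t)) u
        ≤ pDX u + pD u + KE F2 pD u + KE ΔF pY1 u := by
      filter_upwards [aeK1, aeK2, aeK2d, aeKd1, epD, epDX] with u f3 f4 f5 f6 g1 g2
      have h := phi_diff_pathSup_bound (X1 := X1) (X2 := X2) (hmF1sec u) (hmF2sec u)
        (fun s hs => hDY1.meas s hs) (fun s hs => hDY2.meas s hs) f3 f4 f5 f6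
      rw [show pathSup T (fun w r => Y2 w r - Y1 w r) u = pD u from g1,
        show pathSup T (fun w r => X2 w r - X1 w r) u = pDX u from g2, congrFun eK2d u, congrFun eKd1 u] at h
      exact h
    have hTP : TNorm T (fun u t => (X2 u t + Y2 u t - kernelApply F2 Y2 u t)
          - (X1 u t + Y1 u t - kernelApply F1 Y1 u t))
        ≤ TNorm T (fun u t => X2 u t - X1 u t) + (∫⁻ u in Icc (0:ℝ) 1, pD u)
          + (∫⁻ u in Icc (0:ℝ) 1, pD u) + ∫⁻ u in Icc (0:ℝ) 1, KE ΔF pY1 u := by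
      refine (lintegral_mono_ae hPhiae).trans ?_
      have hsplit : ∫⁻ u in Icc (0:ℝ) 1, (pDX u + pD u + KE F2 pD u + KE ΔF pY1 u)
          = (∫⁻ u in Icc (0:ℝ) 1, pDX u) + (∫⁻ u in Icc (0:ℝ) 1, pD u)
            + (∫⁻ u in Icc (0:ℝ) 1, KE F2 pD u) + ∫⁻ u in Icc (0:ℝ) 1, KE ΔF pY1 u := by
        rw [lintegral_add_left (f := fun u => pDX u + pD u + KE F2 pD u)
            ((mpDX.add mpD).add (measurable_KE hF2.meas mpD)),
          lintegral_add_left (f := fun u => pDX u + pD u) (mpDX.add mpD), lintegral_add_left mpDX]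
      rw [hsplit, ← nDX]
      refine add_le_add_left (add_le_add_right ?_ _) _
      calc ∫⁻ u in Icc (0:ℝ) 1, KE F2 pD u
          ≤ kernelOpNorm F2 * ∫⁻ u in Icc (0:ℝ) 1, pD u := lintegral_KE_le hF2.meas mpD
        _ ≤ 1 * ∫⁻ u in Icc (0:ℝ) 1, pD u := mul_le_mul_left hF2.opNorm_le_one _
        _ = ∫⁻ u in Icc (0:ℝ) 1, pD u := one_mul _
    -- assemble
    have hDfin := final_alg e1 (by rw [← hsplita]; exact hcontr2) hND bound1 hTP
    constructor
    · rw [nD]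
      exact hDfin.1
    · rw [e2, e3]
      exact hDfin.2
end
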